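/- arXiv:2111.07761 — 5 statements merged into one kernel-verified Lean document; each statement's English description precedes it below -/
import Mathlib

section
/- Let A and B be finite sets with |A| = |B| = n, and let c: (A ∪ B) × (A ∪ B) → ℝ be a cost function induced by a tree T with non-negative edge weights w and a map ρ: A ∪ B → V(T), i.e. c(a,b) equals the weighted length of the unique path between ρ(a) and ρ(b) in T. Then the minimal cost over all bijections f: A → B of Σ_{a∈A} c(a, f(a)) equals Σ_{uv ∈ E(T)} |A_{uv} − B_{uv}| · w(uv), where for each edge uv of T (with a fixed orientation), S_{uv} denotes the number of elements of S mapped by ρ into the connected component of T − uv containing u. -/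
open scoped Classical

/-- The weighted path distance between two nodes of a tree: the sum of the weights of the
edges on the unique path connecting them. -/
noncomputable def treeDist {V : Type*} (T : SimpleGraph V) (hT : T.IsTree) (w : Sym2 V → ℝ)
    (u v : V) : ℝ :=
  (((hT.existsUnique_path u v).exists.choose).edges.map w).sum

/-- `sideOf T hT u v x` holds iff `x` lies in the connected component of `T − uv`
containing `u`, i.e. the unique path from `x` to `v` passes through `u`. -/
noncomputable def sideOf {V : Type*} (T : SimpleGraph V) (hT : T.IsTree) (u v x : V) : Prop :=
  u ∈ ((hT.existsUnique_path x v).exists.choose).support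

namespace TreeOT
open SimpleGraph

variable {V : Type*} {T : SimpleGraph V}

/-- The unique path between two vertices of a tree. -/
noncomputable def pth (T : SimpleGraph V) (hT : T.IsTree) (u v : V) : T.Walk u v :=
  (hT.existsUnique_path u v).exists.choose

lemma pth_isPath (hT : T.IsTree) (u v : V) : (pth T hT u v).IsPath :=
  (hT.existsUnique_path u v).exists.choose_spec

lemma pth_unique (hT : T.IsTree) {u v : V} (q : T.Walk u v) (hq : q.IsPath) :
    q = pth T hT u v :=
  (hT.existsUnique_path u v).unique hq (pth_isPath hT u v)

lemma treeDist_eq (hT : T.IsTree) (w : Sym2 V → ℝ) {u v : V} (q : T.Walk u v)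
    (hq : q.IsPath) : treeDist T hT w u v = (q.edges.map w).sum := by
  unfold treeDist
  rw [pth_unique hT q hq]
  rfl

/-- The side of an edge a vertex is on, phrased via reachability with the edge deleted. -/
def sgside (T : SimpleGraph V) (x y z : V) : Prop := (T.deleteEdges {s(x,y)}).Reachable z x

section side
variable {x y : V}

lemma not_reach (hT : T.IsTree) (hxy : T.Adj x y) :
    ¬ (T.deleteEdges {s(x,y)}).Reachable x y := by
  have h := (isAcyclic_iff_forall_adj_isBridge.mp hT.IsAcyclic) hxy
  rw [isBridge_iff] at h
  exact h

lemma reach_or_aux {z v : V} (p : T.Walk z v) :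
    (T.deleteEdges {s(x,y)}).Reachable z v ∨ (T.deleteEdges {s(x,y)}).Reachable z x ∨
      (T.deleteEdges {s(x,y)}).Reachable z y := by
  induction p with
  | nil => exact Or.inl (Reachable.refl _)
  | @cons a b c hab q ih =>
    by_cases he : s(a, b) = s(x, y)
    · rw [Sym2.eq_iff] at he
      rcases he with ⟨rfl, rfl⟩ | ⟨rfl, rfl⟩
      · exact Or.inr (Or.inl (Reachable.refl _))
      · exact Or.inr (Or.inr (Reachable.refl _))
    · have hadj : (T.deleteEdges {s(x,y)}).Adj a b := by
        rw [deleteEdges_adj]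
        exact ⟨hab, by simpa using he⟩
      rcases ih with h | h | h
      · exact Or.inl (hadj.reachable.trans h)
      · exact Or.inr (Or.inl (hadj.reachable.trans h))
      · exact Or.inr (Or.inr (hadj.reachable.trans h))

lemma reach_or (hT : T.IsTree) (z : V) :
    (T.deleteEdges {s(x,y)}).Reachable z x ∨ (T.deleteEdges {s(x,y)}).Reachable z y := by
  obtain ⟨p⟩ := hT.isConnected.preconnected z x
  rcases reach_or_aux p with h | h | h
  · exact Or.inl h
  · exact Or.inl h
  · exact Or.inr h

lemma reach_of_not_mem_edges {u v : V} (p : T.Walk u v) (hp : s(x,y) ∉ p.edges) :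
    (T.deleteEdges {s(x,y)}).Reachable u v :=
  ⟨p.toDeleteEdges {s(x,y)} (by intro e he h; exact hp (by rw [Set.mem_singleton_iff] at h; exact h ▸ he))⟩

lemma reach_support_of_not_mem_edges {u v z : V} (p : T.Walk u v) (hp : s(x,y) ∉ p.edges)
    (hz : z ∈ p.support) : (T.deleteEdges {s(x,y)}).Reachable z v := by
  set q := p.toDeleteEdges {s(x,y)}
    (by intro e he h; exact hp (by rw [Set.mem_singleton_iff] at h; exact h ▸ he)) with hq
  have hzq : z ∈ q.support := by
    rw [hq, Walk.support_transfer]; exact hz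
  exact ⟨q.dropUntil z hzq⟩

lemma side_iff_of_not_mem_edges {u v : V} (p : T.Walk u v) (hp : s(x,y) ∉ p.edges) :
    (sgside T x y u ↔ sgside T x y v) := by
  have h := reach_of_not_mem_edges p hp
  exact ⟨fun h' => h.symm.trans h', fun h' => h.trans h'⟩

lemma not_side_iff_of_mem_edges (hT : T.IsTree) (hxy : T.Adj x y) {u v : V} {p : T.Walk u v}
    (hp : p.IsPath) (he : s(x,y) ∈ p.edges) : ¬ (sgside T x y u ↔ sgside T x y v) := by
  induction p with
  | nil => simp at he
  | @cons a b c hab q ih =>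
    rw [Walk.edges_cons, List.mem_cons] at he
    have hq : q.IsPath := hp.of_cons
    have hnodup := hp.isTrail.edges_nodup
    rw [Walk.edges_cons] at hnodup
    have hxx : sgside T x y x := Reachable.refl x
    have hyy : ¬ sgside T x y y := fun h => not_reach hT hxy h.symm
    rcases he with he | he
    · have hq' : s(x,y) ∉ q.edges := by
        intro h; exact (List.nodup_cons.mp hnodup).1 (he ▸ h)
      have hbc : sgside T x y b ↔ sgside T x y c := side_iff_of_not_mem_edges q hq'
      rw [Sym2.eq_iff] at he
      rcases he with ⟨h1, h2⟩ | ⟨h1, h2⟩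
      · subst h1; subst h2
        intro h; exact hyy (hbc.mpr (h.mp hxx))
      · subst h1; subst h2
        intro h; exact hyy (h.mpr (hbc.mp hxx))
    · have hne : s(a,b) ≠ s(x,y) := by
        intro h; exact (List.nodup_cons.mp hnodup).1 (h ▸ he)
      have hadj : (T.deleteEdges {s(x,y)}).Adj a b := by
        rw [deleteEdges_adj]; exact ⟨hab, by simpa using hne⟩
      have hab' : sgside T x y a ↔ sgside T x y b :=
        ⟨fun h => hadj.symm.reachable.trans h, fun h => hadj.reachable.trans h⟩
      intro h
      exact ih hq he (hab'.symm.trans h)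

lemma mem_edges_iff (hT : T.IsTree) (hxy : T.Adj x y) {u v : V} {p : T.Walk u v}
    (hp : p.IsPath) : s(x,y) ∈ p.edges ↔ ¬ (sgside T x y u ↔ sgside T x y v) := by
  constructor
  · exact not_side_iff_of_mem_edges hT hxy hp
  · intro h
    by_contra hmem
    exact h (side_iff_of_not_mem_edges p hmem)

lemma sideOf_iff (hT : T.IsTree) (hxy : T.Adj x y) (z : V) :
    sideOf T hT x y z ↔ sgside T x y z := by
  have hne : ¬ (sgside T x y z ↔ sgside T x y y) ↔ sgside T x y z := by
    have hyy : ¬ sgside T x y y := fun h => not_reach hT hxy h.symm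
    constructor
    · intro h
      by_contra hz
      exact h ⟨fun hz' => absurd hz' hz, fun hy => absurd hy hyy⟩
    · intro hz h
      exact hyy (h.mp hz)
  constructor
  · intro h
    -- h : x ∈ (pth T hT z y).support
    by_cases hmem : s(x,y) ∈ (pth T hT z y).edges
    · exact hne.mp ((mem_edges_iff hT hxy (pth_isPath hT z y)).mp hmem)
    · exfalso
      exact not_reach hT hxy
        ((reach_support_of_not_mem_edges (pth T hT z y) hmem h))
  · intro h
    have := (mem_edges_iff hT hxy (pth_isPath hT z y)).mpr (hne.mpr h)
    exact Walk.fst_mem_support_of_mem_edges _ this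

end side
end TreeOT

namespace TreeOT
open SimpleGraph

variable {V : Type*} {T : SimpleGraph V}

lemma treeDist_comm (hT : T.IsTree) (w : Sym2 V → ℝ) (u v : V) :
    treeDist T hT w u v = treeDist T hT w v u := by
  rw [treeDist_eq hT w ((pth T hT v u).reverse) ((pth_isPath hT v u).reverse),
    treeDist_eq hT w (pth T hT v u) (pth_isPath hT v u),
    Walk.edges_reverse, List.map_reverse, List.sum_reverse]

lemma main_decomp (hT : T.IsTree) (w : Sym2 V → ℝ) {x y : V} (hxy : T.Adj x y) {u v : V}
    (hu : sgside T x y u) (hv : ¬ sgside T x y v) :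
    treeDist T hT w u v = treeDist T hT w u x + w s(x,y) + treeDist T hT w y v := by
  have hxx : sgside T x y x := Reachable.refl x
  have hyy : ¬ sgside T x y y := fun h => not_reach hT hxy h.symm
  set p1 := pth T hT u x with hp1
  set p2 := pth T hT y v with hp2
  have hp1p := pth_isPath hT u x
  have hp2p := pth_isPath hT y v
  have he1 : s(x,y) ∉ p1.edges := by
    intro h
    exact (not_side_iff_of_mem_edges hT hxy hp1p h) (iff_of_true hu hxx)
  have he2 : s(x,y) ∉ p2.edges := by
    intro h
    exact (not_side_iff_of_mem_edges hT hxy hp2p h) (iff_of_false hyy hv)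
  have hs1 : ∀ z ∈ p1.support, sgside T x y z := fun z hz =>
    reach_support_of_not_mem_edges p1 he1 hz
  have hs2 : ∀ z ∈ p2.support, ¬ sgside T x y z := by
    intro z hz hsz
    exact hv ((reach_support_of_not_mem_edges p2 he2 hz).symm.trans hsz)
  set W : T.Walk u v := p1.append (Walk.cons hxy p2) with hW
  have hWp : W.IsPath := by
    rw [Walk.isPath_def, hW, Walk.support_append, Walk.support_cons]
    simp only [List.tail_cons]
    refine List.Nodup.append hp1p.support_nodup hp2p.support_nodup ?_
    intro z hz1 hz2
    exact (hs2 z hz2) (hs1 z hz1)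
  rw [treeDist_eq hT w W hWp, treeDist_eq hT w p1 hp1p, treeDist_eq hT w p2 hp2p]
  rw [hW, Walk.edges_append, Walk.edges_cons, List.map_append, List.sum_append,
    List.map_cons, List.sum_cons]
  ring

lemma sym2_inj_on_D {D : Finset (V × V)} (hD : ∀ p ∈ D, T.Adj p.1 p.2)
    (hDorient : ∀ u v : V, T.Adj u v →
      ((u, v) ∈ D ∧ (v, u) ∉ D) ∨ ((v, u) ∈ D ∧ (u, v) ∉ D))
    {p q : V × V} (hp : p ∈ D) (hq : q ∈ D)
    (h : s(p.1, p.2) = s(q.1, q.2)) : p = q := by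
  rw [Sym2.eq_iff] at h
  rcases h with ⟨h1, h2⟩ | ⟨h1, h2⟩
  · exact Prod.ext h1 h2
  · exfalso
    have hadj := hD p hp
    rcases hDorient p.1 p.2 hadj with ⟨_, hn⟩ | ⟨_, hn⟩
    · exact hn (by rw [show ((p.2, p.1) : V × V) = q from Prod.ext h2 h1]; exact hq)
    · exact hn (by rw [Prod.mk.eta]; exact hp)

lemma L1 (hT : T.IsTree) (w : Sym2 V → ℝ) (D : Finset (V × V))
    (hD : ∀ p ∈ D, T.Adj p.1 p.2)
    (hDorient : ∀ u v : V, T.Adj u v →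
      ((u, v) ∈ D ∧ (v, u) ∉ D) ∨ ((v, u) ∈ D ∧ (u, v) ∉ D))
    (u v : V) :
    treeDist T hT w u v = ∑ p ∈ D,
      (if sideOf T hT p.1 p.2 u ↔ sideOf T hT p.1 p.2 v then 0 else w s(p.1, p.2)) := by
  set P := pth T hT u v with hPdef
  have hPp := pth_isPath hT u v
  rw [treeDist_eq hT w P hPp]
  have hnd : P.edges.Nodup := hPp.isTrail.edges_nodup
  rw [← List.sum_toFinset _ hnd]
  have himg : P.edges.toFinset
      = (D.filter fun p => s(p.1, p.2) ∈ P.edges).image (fun p => s(p.1, p.2)) := by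
    ext e
    simp only [List.mem_toFinset, Finset.mem_image, Finset.mem_filter]
    constructor
    · intro he
      have hee : e ∈ T.edgeSet := P.edges_subset_edgeSet he
      induction e with
      | _ a b =>
        have hadj : T.Adj a b := hee
        rcases hDorient a b hadj with ⟨hmem, _⟩ | ⟨hmem, _⟩
        · exact ⟨(a, b), ⟨hmem, he⟩, rfl⟩
        · refine ⟨(b, a), ⟨hmem, ?_⟩, ?_⟩ <;> rw [Sym2.eq_swap] <;> exact he
    · rintro ⟨p, ⟨_, hmem⟩, rfl⟩
      exact hmem
  rw [himg, Finset.sum_image (fun p hp q hq h =>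
    sym2_inj_on_D hD hDorient (Finset.mem_filter.mp hp).1 (Finset.mem_filter.mp hq).1 h)]
  rw [Finset.sum_filter]
  refine Finset.sum_congr rfl fun p hp => ?_
  have hadj := hD p hp
  have hchar : s(p.1, p.2) ∈ P.edges ↔ ¬ (sideOf T hT p.1 p.2 u ↔ sideOf T hT p.1 p.2 v) := by
    rw [mem_edges_iff hT hadj hPp, sideOf_iff hT hadj, sideOf_iff hT hadj]
  by_cases h : sideOf T hT p.1 p.2 u ↔ sideOf T hT p.1 p.2 v
  · rw [if_neg (fun hm => (hchar.mp hm) h), if_pos h]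
  · rw [if_pos (hchar.mpr h), if_neg h]

end TreeOT

namespace TreeOT
open SimpleGraph

variable {V : Type*} {T : SimpleGraph V}

lemma tri (hT : T.IsTree) (w : Sym2 V → ℝ) (hw : ∀ e, 0 ≤ w e) (D : Finset (V × V))
    (hD : ∀ p ∈ D, T.Adj p.1 p.2)
    (hDorient : ∀ u v : V, T.Adj u v →
      ((u, v) ∈ D ∧ (v, u) ∉ D) ∨ ((v, u) ∈ D ∧ (u, v) ∉ D))
    (u z v : V) :
    treeDist T hT w u v ≤ treeDist T hT w u z + treeDist T hT w z v := by
  rw [L1 hT w D hD hDorient u v, L1 hT w D hD hDorient u z, L1 hT w D hD hDorient z v,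
    ← Finset.sum_add_distrib]
  refine Finset.sum_le_sum fun p hp => ?_
  have hwp := hw s(p.1, p.2)
  split_ifs <;> first | linarith | tauto

end TreeOT


/-- For finite sets `A`, `B` of equal cardinality and ground costs given by a
tree metric (tree `T`, non-negative weights `w`, map `ρ` into the nodes of `T`), the minimal
cost over all bijections `f : A → B` of `∑ c(a, f a)` equals
`∑_{uv ∈ E(T)} |A_{uv} − B_{uv}| ⬝ w(uv)`, where the sum ranges over a fixed orientation `D`
of the edges of `T` and `S_{uv}` counts the elements of `S` mapped into the component of
`T − uv` containing `u`. -/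
theorem optimal_assignment_eq_tree_edge_sum
    {X V : Type} [Fintype V]
    (T : SimpleGraph V) (hT : T.IsTree) (w : Sym2 V → ℝ) (hw : ∀ e, 0 ≤ w e)
    (ρ : X → V) (A B : Finset X) (hcard : A.card = B.card)
    (D : Finset (V × V))
    (hD : ∀ p ∈ D, T.Adj p.1 p.2)
    (hDorient : ∀ u v : V, T.Adj u v →
      ((u, v) ∈ D ∧ (v, u) ∉ D) ∨ ((v, u) ∈ D ∧ (u, v) ∉ D)) :
    IsLeast {r : ℝ | ∃ f : {x // x ∈ A} ≃ {y // y ∈ B},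
        r = ∑ a : {x // x ∈ A}, treeDist T hT w (ρ a.1) (ρ (f a).1)}
      (∑ p ∈ D,
        |((A.filter fun a => sideOf T hT p.1 p.2 (ρ a)).card : ℝ)
          - ((B.filter fun b => sideOf T hT p.1 p.2 (ρ b)).card : ℝ)| * w s(p.1, p.2)) := by
  classical
  set χ : V × V → V → ℝ := fun p z => if sideOf T hT p.1 p.2 z then 1 else 0 with hχ
  have hterm : ∀ (p : V × V) (zu zv : V),
      (if sideOf T hT p.1 p.2 zu ↔ sideOf T hT p.1 p.2 zv then (0:ℝ) else w s(p.1, p.2))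
        = |χ p zu - χ p zv| * w s(p.1, p.2) := by
    intro p zu zv
    by_cases h1 : sideOf T hT p.1 p.2 zu <;> by_cases h2 : sideOf T hT p.1 p.2 zv <;>
      simp [hχ, h1, h2] <;> tauto
  have costEq : ∀ f : {x // x ∈ A} ≃ {y // y ∈ B},
      (∑ a : {x // x ∈ A}, treeDist T hT w (ρ a.1) (ρ (f a).1))
        = ∑ p ∈ D, (∑ a : {x // x ∈ A}, |χ p (ρ a.1) - χ p (ρ (f a).1)|) * w s(p.1, p.2) := by
    intro f
    have hstep : ∀ a : {x // x ∈ A}, treeDist T hT w (ρ a.1) (ρ (f a).1)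
        = ∑ p ∈ D, |χ p (ρ a.1) - χ p (ρ (f a).1)| * w s(p.1, p.2) := by
      intro a
      rw [TreeOT.L1 hT w D hD hDorient]
      exact Finset.sum_congr rfl fun p _ => hterm p _ _
    rw [Finset.sum_congr rfl fun a _ => hstep a, Finset.sum_comm]
    exact Finset.sum_congr rfl fun p _ => (Finset.sum_mul _ _ _).symm
  have netEq : ∀ (f : {x // x ∈ A} ≃ {y // y ∈ B}) (p : V × V),
      ∑ a : {x // x ∈ A}, (χ p (ρ a.1) - χ p (ρ (f a).1))
        = ((A.filter fun a => sideOf T hT p.1 p.2 (ρ a)).card : ℝ)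
          - ((B.filter fun b => sideOf T hT p.1 p.2 (ρ b)).card : ℝ) := by
    intro f p
    rw [Finset.sum_sub_distrib]
    congr 1
    · rw [show (∑ a : {x // x ∈ A}, χ p (ρ a.1)) = ∑ a ∈ A, χ p (ρ a) from
        Finset.sum_coe_sort A (fun a => χ p (ρ a))]
      simp [hχ, Finset.sum_boole]
    · rw [Equiv.sum_comp f (fun b => χ p (ρ b.1))]
      rw [show (∑ b : {y // y ∈ B}, χ p (ρ b.1)) = ∑ b ∈ B, χ p (ρ b) from
        Finset.sum_coe_sort B (fun b => χ p (ρ b))]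
      simp [hχ, Finset.sum_boole]
  have key : ∀ f : {x // x ∈ A} ≃ {y // y ∈ B},
      (∑ p ∈ D,
        |((A.filter fun a => sideOf T hT p.1 p.2 (ρ a)).card : ℝ)
          - ((B.filter fun b => sideOf T hT p.1 p.2 (ρ b)).card : ℝ)| * w s(p.1, p.2))
        ≤ ∑ a : {x // x ∈ A}, treeDist T hT w (ρ a.1) (ρ (f a).1) := by
    intro f
    rw [costEq f]
    refine Finset.sum_le_sum fun p hp => ?_
    refine mul_le_mul_of_nonneg_right ?_ (hw _)
    rw [← netEq f p]
    exact Finset.abs_sum_le_sum_abs _ _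
  constructor
  · -- membership : the bound is attained by a minimizing bijection
    have hcardeq : Fintype.card {x // x ∈ A} = Fintype.card {y // y ∈ B} := by
      simp only [Fintype.card_coe]; exact hcard
    have hnonempty : Nonempty ({x // x ∈ A} ≃ {y // y ∈ B}) :=
      ⟨Fintype.equivOfCardEq hcardeq⟩
    obtain ⟨f₀, hf₀⟩ := Finite.exists_min
      (fun f : {x // x ∈ A} ≃ {y // y ∈ B} => ∑ a : {x // x ∈ A}, treeDist T hT w (ρ a.1) (ρ (f a).1))
    refine ⟨f₀, ?_⟩
    refine le_antisymm (key f₀) ?_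
    by_contra hlt
    push_neg at hlt
    have h1 : (∑ p ∈ D,
        |((A.filter fun a => sideOf T hT p.1 p.2 (ρ a)).card : ℝ)
          - ((B.filter fun b => sideOf T hT p.1 p.2 (ρ b)).card : ℝ)| * w s(p.1, p.2))
        < ∑ p ∈ D, (∑ a : {x // x ∈ A}, |χ p (ρ a.1) - χ p (ρ (f₀ a).1)|) * w s(p.1, p.2) := by
      rw [← costEq f₀]; exact hlt
    obtain ⟨p, hpD, hplt⟩ := Finset.exists_lt_of_sum_lt h1
    have hwp : (0:ℝ) ≤ w s(p.1, p.2) := hw _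
    have hwp0 : (0:ℝ) < w s(p.1, p.2) := by
      rcases lt_or_eq_of_le hwp with h | h
      · exact h
      · rw [← h] at hplt; simp at hplt
    have hS : |((A.filter fun a => sideOf T hT p.1 p.2 (ρ a)).card : ℝ)
          - ((B.filter fun b => sideOf T hT p.1 p.2 (ρ b)).card : ℝ)|
        < ∑ a : {x // x ∈ A}, |χ p (ρ a.1) - χ p (ρ (f₀ a).1)| :=
      lt_of_mul_lt_mul_right hplt hwp
    rw [← netEq f₀ p] at hS
    have hpos : ∃ a : {x // x ∈ A}, 0 < χ p (ρ a.1) - χ p (ρ (f₀ a).1) := by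
      by_contra h
      push_neg at h
      have heq : (∑ a : {x // x ∈ A}, |χ p (ρ a.1) - χ p (ρ (f₀ a).1)|)
          = |∑ a : {x // x ∈ A}, (χ p (ρ a.1) - χ p (ρ (f₀ a).1))| := by
        rw [Finset.sum_congr rfl (fun a _ => abs_of_nonpos (h a)),
          abs_of_nonpos (Finset.sum_nonpos (fun a _ => h a)), ← Finset.sum_neg_distrib]
      rw [heq] at hS
      exact lt_irrefl _ hS
    have hneg : ∃ a : {x // x ∈ A}, χ p (ρ a.1) - χ p (ρ (f₀ a).1) < 0 := by
      by_contra h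
      push_neg at h
      have heq : (∑ a : {x // x ∈ A}, |χ p (ρ a.1) - χ p (ρ (f₀ a).1)|)
          = |∑ a : {x // x ∈ A}, (χ p (ρ a.1) - χ p (ρ (f₀ a).1))| := by
        rw [Finset.sum_congr rfl (fun a _ => abs_of_nonneg (h a)),
          abs_of_nonneg (Finset.sum_nonneg (fun a _ => h a))]
      rw [heq] at hS
      exact lt_irrefl _ hS
    obtain ⟨ap, hap⟩ := hpos
    obtain ⟨am, ham⟩ := hneg
    have hΔpos : sideOf T hT p.1 p.2 (ρ ap.1) ∧ ¬ sideOf T hT p.1 p.2 (ρ (f₀ ap).1) := by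
      by_cases h1 : sideOf T hT p.1 p.2 (ρ ap.1) <;>
        by_cases h2 : sideOf T hT p.1 p.2 (ρ (f₀ ap).1) <;>
        simp [hχ, h1, h2] at hap ⊢ <;> linarith
    have hΔneg : ¬ sideOf T hT p.1 p.2 (ρ am.1) ∧ sideOf T hT p.1 p.2 (ρ (f₀ am).1) := by
      by_cases h1 : sideOf T hT p.1 p.2 (ρ am.1) <;>
        by_cases h2 : sideOf T hT p.1 p.2 (ρ (f₀ am).1) <;>
        simp [hχ, h1, h2] at ham ⊢ <;> linarith
    have hne : ap ≠ am := by
      intro h; rw [h] at hap; linarith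
    have hadjp : T.Adj p.1 p.2 := hD p hpD
    -- convert to sgside
    have s1 : TreeOT.sgside T p.1 p.2 (ρ ap.1) :=
      (TreeOT.sideOf_iff hT hadjp _).mp hΔpos.1
    have s2 : ¬ TreeOT.sgside T p.1 p.2 (ρ (f₀ ap).1) :=
      fun h => hΔpos.2 ((TreeOT.sideOf_iff hT hadjp _).mpr h)
    have s3 : ¬ TreeOT.sgside T p.1 p.2 (ρ am.1) :=
      fun h => hΔneg.1 ((TreeOT.sideOf_iff hT hadjp _).mpr h)
    have s4 : TreeOT.sgside T p.1 p.2 (ρ (f₀ am).1) :=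
      (TreeOT.sideOf_iff hT hadjp _).mp hΔneg.2
    have e1 : treeDist T hT w (ρ ap.1) (ρ (f₀ ap).1)
        = treeDist T hT w (ρ ap.1) p.1 + w s(p.1, p.2) + treeDist T hT w p.2 (ρ (f₀ ap).1) :=
      TreeOT.main_decomp hT w hadjp s1 s2
    have e2 : treeDist T hT w (ρ am.1) (ρ (f₀ am).1)
        = treeDist T hT w (ρ (f₀ am).1) p.1 + w s(p.1, p.2) + treeDist T hT w p.2 (ρ am.1) := by
      rw [TreeOT.treeDist_comm hT w]
      exact TreeOT.main_decomp hT w hadjp s4 s3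
    have t1 : treeDist T hT w (ρ ap.1) (ρ (f₀ am).1)
        ≤ treeDist T hT w (ρ ap.1) p.1 + treeDist T hT w p.1 (ρ (f₀ am).1) :=
      TreeOT.tri hT w hw D hD hDorient _ _ _
    have t2 : treeDist T hT w (ρ am.1) (ρ (f₀ ap).1)
        ≤ treeDist T hT w (ρ am.1) p.2 + treeDist T hT w p.2 (ρ (f₀ ap).1) :=
      TreeOT.tri hT w hw D hD hDorient _ _ _
    have c1 : treeDist T hT w p.1 (ρ (f₀ am).1) = treeDist T hT w (ρ (f₀ am).1) p.1 :=
      TreeOT.treeDist_comm hT w _ _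
    have c2 : treeDist T hT w (ρ am.1) p.2 = treeDist T hT w p.2 (ρ am.1) :=
      TreeOT.treeDist_comm hT w _ _
    set f' := (Equiv.swap ap am).trans f₀ with hf'
    have hf'ap : f' ap = f₀ am := by
      rw [hf']; simp [Equiv.swap_apply_left]
    have hf'am : f' am = f₀ ap := by
      rw [hf']; simp [Equiv.swap_apply_right]
    have hf'other : ∀ b : {x // x ∈ A}, b ≠ ap → b ≠ am → f' b = f₀ b := by
      intro b h1 h2
      rw [hf']; simp [Equiv.swap_apply_of_ne_of_ne h1 h2]
    have hsplit : (∑ a : {x // x ∈ A}, treeDist T hT w (ρ a.1) (ρ (f₀ a).1))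
        - (∑ a : {x // x ∈ A}, treeDist T hT w (ρ a.1) (ρ (f' a).1))
        = (treeDist T hT w (ρ ap.1) (ρ (f₀ ap).1) - treeDist T hT w (ρ ap.1) (ρ (f₀ am).1))
          + (treeDist T hT w (ρ am.1) (ρ (f₀ am).1) - treeDist T hT w (ρ am.1) (ρ (f₀ ap).1)) := by
      rw [← Finset.sum_sub_distrib]
      rw [← Finset.sum_subset (Finset.subset_univ ({ap, am} : Finset {x // x ∈ A})) ?_]
      · rw [Finset.sum_pair hne, hf'ap, hf'am]
      · intro b _ hb
        simp only [Finset.mem_insert, Finset.mem_singleton] at hb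
        push_neg at hb
        rw [hf'other b hb.1 hb.2, sub_self]
    have hlt2 : (∑ a : {x // x ∈ A}, treeDist T hT w (ρ a.1) (ρ (f' a).1))
        < ∑ a : {x // x ∈ A}, treeDist T hT w (ρ a.1) (ρ (f₀ a).1) := by
      have : (∑ a : {x // x ∈ A}, treeDist T hT w (ρ a.1) (ρ (f₀ a).1))
          - (∑ a : {x // x ∈ A}, treeDist T hT w (ρ a.1) (ρ (f' a).1)) ≥ 2 * w s(p.1, p.2) := by
        rw [hsplit]; linarith
      linarith
    exact absurd (hf₀ f') (not_le.mpr hlt2)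
  · -- lower bound
    rintro r ⟨f, rfl⟩
    exact key f
end

section
/- Under the same hypotheses (tree-metric ground costs), the optimal assignment cost between A and B equals the Manhattan (ℓ1) distance between the vectors Φ(A) and Φ(B), where Φ(S) is the vector indexed by the edges uv of T with entries S_{uv} · w(uv). -/
open scoped Classical

/-- The embedding vector of a set `S` (given via `ρ`) indexed by the oriented edges of the
tree: the entry for edge `uv` is `S_{uv} ⬝ w(uv)`. -/
noncomputable def phi {X V : Type} (T : SimpleGraph V) (hT : T.IsTree) (w : Sym2 V → ℝ)
    (ρ : X → V) (S : Finset X) (p : V × V) : ℝ :=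
  ((S.filter fun a => sideOf T hT p.1 p.2 (ρ a)).card : ℝ) * w s(p.1, p.2)

section TreeLemmas

variable {V : Type*} {T : SimpleGraph V} (hT : T.IsTree)

noncomputable def tPath (hT : T.IsTree) (x y : V) : T.Walk x y :=
  (hT.existsUnique_path x y).exists.choose

lemma tPath_isPath (x y : V) : (tPath hT x y).IsPath :=
  (hT.existsUnique_path x y).exists.choose_spec

lemma tPath_unique {x y : V} (q : T.Walk x y) (hq : q.IsPath) : q = tPath hT x y :=
  (hT.existsUnique_path x y).unique hq (tPath_isPath hT x y)

lemma sideOf_iff (u v x : V) : sideOf T hT u v x ↔ u ∈ (tPath hT x v).support := Iff.rfl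

lemma treeDist_def (w : Sym2 V → ℝ) (x y : V) :
    treeDist T hT w x y = ((tPath hT x y).edges.map w).sum := rfl

lemma tPath_self (x : V) : tPath hT x x = SimpleGraph.Walk.nil :=
  (tPath_unique hT _ SimpleGraph.Walk.IsPath.nil).symm

lemma sideOf_left (u v : V) : sideOf T hT u v u := by
  rw [sideOf_iff]; exact SimpleGraph.Walk.start_mem_support _

lemma sideOf_right_iff (u v : V) : sideOf T hT u v v ↔ u = v := by
  rw [sideOf_iff, tPath_self]; simp

lemma tPath_single (huv : T.Adj u v) :
    tPath hT u v = SimpleGraph.Walk.cons huv SimpleGraph.Walk.nil :=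
  (tPath_unique hT _ (SimpleGraph.Path.singleton huv).2).symm

lemma edge_mem_of_sideOf (huv : T.Adj u v) {x : V} (h : sideOf T hT u v x) :
    s(u, v) ∈ (tPath hT x v).edges := by
  rw [sideOf_iff] at h
  have hspec := SimpleGraph.Walk.take_spec (tPath hT x v) h
  have hdrop : (tPath hT x v).dropUntil u h = SimpleGraph.Walk.cons huv SimpleGraph.Walk.nil := by
    rw [← tPath_single hT huv]
    exact tPath_unique hT _ ((tPath_isPath hT x v).dropUntil h)
  rw [← hspec, SimpleGraph.Walk.edges_append, hdrop]
  simp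

lemma xor_or_iff (Pa Pb Pc : Prop) (hboth : ¬(¬(Pa ↔ Pb) ∧ ¬(Pb ↔ Pc))) :
    (¬(Pa ↔ Pb) ∨ ¬(Pb ↔ Pc)) ↔ ¬(Pa ↔ Pc) := by tauto

lemma sideOf_step_aux {u v x x' : V} (huv : T.Adj u v) (hxx' : T.Adj x x')
    (hne : s(x, x') ≠ s(u, v)) (hx : sideOf T hT u v x) : sideOf T hT u v x' := by
  by_contra hx'
  rw [sideOf_iff] at hx hx'
  by_cases hmem : x ∈ (tPath hT x' v).support
  · have hdrop : (tPath hT x' v).dropUntil x hmem = tPath hT x v :=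
      tPath_unique hT _ ((tPath_isPath hT x' v).dropUntil hmem)
    exact hx' (SimpleGraph.Walk.support_dropUntil_subset _ hmem (hdrop ▸ hx))
  · have hcons : tPath hT x v = SimpleGraph.Walk.cons hxx' (tPath hT x' v) :=
      (tPath_unique hT _ ((tPath_isPath hT x' v).cons hmem)).symm
    have hedge : s(u, v) ∈ (tPath hT x v).edges :=
      edge_mem_of_sideOf hT huv ((sideOf_iff hT u v x).2 hx)
    rw [hcons, SimpleGraph.Walk.edges_cons, List.mem_cons] at hedge
    rcases hedge with h | h
    · exact hne h.symm
    · exact hx' (SimpleGraph.Walk.fst_mem_support_of_mem_edges _ h)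

lemma sideOf_step {u v x x' : V} (huv : T.Adj u v) (hxx' : T.Adj x x') :
    ¬ (sideOf T hT u v x ↔ sideOf T hT u v x') ↔ s(x, x') = s(u, v) := by
  constructor
  · intro h
    by_contra hne
    apply h
    constructor
    · exact sideOf_step_aux hT huv hxx' hne
    · exact sideOf_step_aux hT huv hxx'.symm (by rwa [Sym2.eq_swap])
  · intro h
    have h' : (x = u ∧ x' = v) ∨ (x = v ∧ x' = u) := Sym2.eq_iff.1 h
    rcases h' with ⟨rfl, rfl⟩ | ⟨rfl, rfl⟩
    · intro hiff
      exact huv.ne ((sideOf_right_iff hT _ _).1 (hiff.1 (sideOf_left hT _ _)))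
    · intro hiff
      exact huv.ne ((sideOf_right_iff hT _ _).1 (hiff.2 (sideOf_left hT _ _)))

lemma edge_mem_path_iff {u v : V} (huv : T.Adj u v) {x y : V} (p : T.Walk x y)
    (hp : p.IsPath) :
    s(u, v) ∈ p.edges ↔ ¬ (sideOf T hT u v x ↔ sideOf T hT u v y) := by
  induction p with
  | nil => simp
  | @cons a b c h q ih =>
    have hq : q.IsPath := hp.of_cons
    have hstep := sideOf_step hT huv h
    have hih := ih hq
    have hnodup : s(a, b) ∉ q.edges := by
      have := hp.edges_nodup
      rw [SimpleGraph.Walk.edges_cons] at this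
      exact (List.nodup_cons.1 this).1
    have hboth : ¬ (¬ (sideOf T hT u v a ↔ sideOf T hT u v b) ∧
        ¬ (sideOf T hT u v b ↔ sideOf T hT u v c)) := by
      rintro ⟨h1, h2⟩
      exact hnodup ((hstep.1 h1) ▸ (hih.2 h2))
    rw [SimpleGraph.Walk.edges_cons, List.mem_cons, hih, eq_comm, ← hstep]
    exact xor_or_iff _ _ _ hboth


lemma laminar {u v s t m1 n1 m2 n2 : V} (huv : T.Adj u v) (hst : T.Adj s t)
    (h1 : sideOf T hT u v m1) (h2 : ¬ sideOf T hT u v n1)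
    (h3 : ¬ sideOf T hT u v m2) (h4 : sideOf T hT u v n2)
    (q1 : sideOf T hT s t m1 ↔ sideOf T hT s t n1)
    (q2 : sideOf T hT s t m2 ↔ sideOf T hT s t n2)
    (q3 : ¬ (sideOf T hT s t m1 ↔ sideOf T hT s t m2)) : False := by
  have key : ∀ x y : V, ¬ (sideOf T hT s t x ↔ sideOf T hT s t y) →
      (sideOf T hT u v x ↔ sideOf T hT u v y) →
      (sideOf T hT u v x ↔ sideOf T hT u v s) := by
    intro x y hq hp
    have hqe : s(s, t) ∈ (tPath hT x y).edges :=
      (edge_mem_path_iff hT hst _ (tPath_isPath hT x y)).2 hq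
    have hpe : s(u, v) ∉ (tPath hT x y).edges := fun hc =>
      ((edge_mem_path_iff hT huv _ (tPath_isPath hT x y)).1 hc) hp
    have hs : s ∈ (tPath hT x y).support :=
      SimpleGraph.Walk.fst_mem_support_of_mem_edges _ hqe
    have hpe' : s(u, v) ∉ ((tPath hT x y).takeUntil s hs).edges := fun hc =>
      hpe (SimpleGraph.Walk.edges_takeUntil_subset _ hs hc)
    by_contra hc
    exact hpe' ((edge_mem_path_iff hT huv _ ((tPath_isPath hT x y).takeUntil hs)).2 hc)
  have c1 : sideOf T hT u v m1 ↔ sideOf T hT u v s :=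
    key m1 n2 (by tauto) (iff_of_true h1 h4)
  have c2 : sideOf T hT u v n1 ↔ sideOf T hT u v s :=
    key n1 m2 (by tauto) (iff_of_false h2 h3)
  exact h2 (c2.2 (c1.1 h1))

lemma abs_ind_sub_ind (P Q : Prop) :
    |(if P then (1:ℝ) else 0) - (if Q then (1:ℝ) else 0)| = if P ↔ Q then 0 else 1 := by
  by_cases hP : P <;> by_cases hQ : Q <;> simp [hP, hQ]

lemma D_inj {D : Finset (V × V)}
    (hDorient : ∀ u v : V, T.Adj u v → ((u, v) ∈ D ∧ (v, u) ∉ D) ∨ ((v, u) ∈ D ∧ (u, v) ∉ D))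
    (hD : ∀ p ∈ D, T.Adj p.1 p.2)
    {p q : V × V} (hp : p ∈ D) (hq : q ∈ D) (h : s(p.1, p.2) = s(q.1, q.2)) : p = q := by
  obtain ⟨p1, p2⟩ := p
  obtain ⟨q1, q2⟩ := q
  rcases Sym2.eq_iff.1 h with ⟨rfl, rfl⟩ | ⟨rfl, rfl⟩
  · rfl
  · rcases hDorient _ _ (hD _ hp) with ⟨_, hn⟩ | ⟨_, hn⟩
    · exact absurd hq hn
    · exact absurd hp hn

lemma treeDist_eq (w : Sym2 V → ℝ) (D : Finset (V × V))
    (hD : ∀ p ∈ D, T.Adj p.1 p.2)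
    (hDorient : ∀ u v : V, T.Adj u v → ((u, v) ∈ D ∧ (v, u) ∉ D) ∨ ((v, u) ∈ D ∧ (u, v) ∉ D))
    (x y : V) :
    treeDist T hT w x y = ∑ p ∈ D, w s(p.1, p.2) *
      |(if sideOf T hT p.1 p.2 x then (1:ℝ) else 0) -
        (if sideOf T hT p.1 p.2 y then (1:ℝ) else 0)| := by
  rw [treeDist_def]
  set l := (tPath hT x y).edges with hl
  have hnd : l.Nodup := (tPath_isPath hT x y).edges_nodup
  have h1 : (l.map w).sum = ∑ e ∈ l.toFinset, w e := by
    rw [Finset.sum_list_map_count]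
    refine Finset.sum_congr rfl fun e he => ?_
    rw [List.count_eq_one_of_mem hnd (List.mem_toFinset.1 he), one_nsmul]
  have h2 : l.toFinset =
      (D.filter fun p => s(p.1, p.2) ∈ l).image fun p => s(p.1, p.2) := by
    ext e
    refine Sym2.inductionOn e fun a b => ?_
    simp only [List.mem_toFinset, Finset.mem_image, Finset.mem_filter]
    constructor
    · intro hmem
      have hadj : T.Adj a b := (tPath hT x y).adj_of_mem_edges hmem
      rcases hDorient a b hadj with ⟨hin, _⟩ | ⟨hin, _⟩
      · exact ⟨(a, b), ⟨hin, hmem⟩, rfl⟩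
      · refine ⟨(b, a), ⟨hin, ?_⟩, Sym2.eq_swap⟩
        show s(b, a) ∈ l
        rw [Sym2.eq_swap]; exact hmem
    · rintro ⟨p, ⟨_, hmem⟩, heq⟩
      exact heq ▸ hmem
  rw [h1, h2, Finset.sum_image (fun p hp q hq h =>
    D_inj hDorient hD (Finset.mem_filter.1 hp).1 (Finset.mem_filter.1 hq).1 h),
    Finset.sum_filter]
  refine Finset.sum_congr rfl fun p hp => ?_
  rw [abs_ind_sub_ind]
  by_cases hmem : s(p.1, p.2) ∈ l
  · rw [if_pos hmem, if_neg, mul_one]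
    exact (edge_mem_path_iff hT (hD p hp) _ (tPath_isPath hT x y)).1 hmem
  · rw [if_neg hmem, if_pos, mul_zero]
    by_contra hc
    exact hmem ((edge_mem_path_iff hT (hD p hp) _ (tPath_isPath hT x y)).2 hc)


end TreeLemmas

lemma sum_pair_split {α : Type*} [Fintype α] [DecidableEq α] (F : α → ℝ) {a1 a2 : α}
    (h : a1 ≠ a2) :
    ∑ a, F a = ∑ a ∈ Finset.univ \ {a1, a2}, F a + (F a1 + F a2) := by
  rw [← Finset.sum_sdiff (Finset.subset_univ ({a1, a2} : Finset α)), Finset.sum_pair h]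

/-- With tree-metric ground costs, the optimal assignment cost between `A` and
`B` equals the Manhattan (ℓ1) distance between the vectors `Φ(A)` and `Φ(B)`, where `Φ(S)` is
indexed by the (oriented) edges of `T` with entries `S_{uv} ⬝ w(uv)`. -/
theorem optimal_assignment_eq_manhattan
    {X V : Type} [Fintype V]
    (T : SimpleGraph V) (hT : T.IsTree) (w : Sym2 V → ℝ) (hw : ∀ e, 0 ≤ w e)
    (ρ : X → V) (A B : Finset X) (hcard : A.card = B.card)
    (D : Finset (V × V))
    (hD : ∀ p ∈ D, T.Adj p.1 p.2)
    (hDorient : ∀ u v : V, T.Adj u v →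
      ((u, v) ∈ D ∧ (v, u) ∉ D) ∨ ((v, u) ∈ D ∧ (u, v) ∉ D)) :
    IsLeast {r : ℝ | ∃ f : {x // x ∈ A} ≃ {y // y ∈ B},
        r = ∑ a : {x // x ∈ A}, treeDist T hT w (ρ a.1) (ρ (f a).1)}
      (∑ p ∈ D, |phi T hT w ρ A p - phi T hT w ρ B p|) := by
  classical
  set χ : V × V → V → ℝ := fun p z => if sideOf T hT p.1 p.2 z then 1 else 0 with hχ
  have hdist : ∀ x y : V, treeDist T hT w x y =
      ∑ p ∈ D, w s(p.1, p.2) * |χ p x - χ p y| := fun x y =>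
    treeDist_eq hT w D hD hDorient x y
  have hphi : ∀ (S : Finset X) (p : V × V),
      phi T hT w ρ S p = (∑ a ∈ S, χ p (ρ a)) * w s(p.1, p.2) := by
    intro S p
    unfold phi
    congr 1
    rw [Finset.sum_boole]
  set C : ({x // x ∈ A} ≃ {y // y ∈ B}) → ℝ :=
    fun f => ∑ a : {x // x ∈ A}, treeDist T hT w (ρ a.1) (ρ (f a).1) with hC
  set M : ℝ := ∑ p ∈ D, |phi T hT w ρ A p - phi T hT w ρ B p| with hM
  have hcost : ∀ f, C f = ∑ p ∈ D, w s(p.1, p.2) *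
      ∑ a : {x // x ∈ A}, |χ p (ρ a.1) - χ p (ρ (f a).1)| := by
    intro f
    rw [hC]
    simp only [hdist]
    rw [Finset.sum_comm]
    exact Finset.sum_congr rfl fun p _ => (Finset.mul_sum _ _ _).symm
  have hdiff : ∀ (f : {x // x ∈ A} ≃ {y // y ∈ B}) (p : V × V),
      phi T hT w ρ A p - phi T hT w ρ B p =
        (∑ a : {x // x ∈ A}, (χ p (ρ a.1) - χ p (ρ (f a).1))) * w s(p.1, p.2) := by
    intro f p
    rw [hphi, hphi, ← sub_mul, Finset.sum_sub_distrib]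
    congr 2
    · exact (Finset.sum_coe_sort A (fun a => χ p (ρ a))).symm
    · rw [← Finset.sum_coe_sort B (fun b => χ p (ρ b))]
      exact (Equiv.sum_comp f (fun b => χ p (ρ b.1))).symm
  have hLB : ∀ f, M ≤ C f := by
    intro f
    rw [hM, hcost f]
    refine Finset.sum_le_sum fun p hp => ?_
    rw [hdiff f p, abs_mul, abs_of_nonneg (hw _), mul_comm]
    refine mul_le_mul_of_nonneg_left ?_ (hw _)
    exact Finset.abs_sum_le_sum_abs _ _
  have hNE : Nonempty ({x // x ∈ A} ≃ {y // y ∈ B}) :=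
    ⟨Fintype.equivOfCardEq (by simp [hcard])⟩
  obtain ⟨f0, hf0⟩ : ∃ f0, ∀ f, C f0 ≤ C f := Finite.exists_min C
  have hUB : C f0 ≤ M := by
    by_contra hlt
    push_neg at hlt
    have hMsum : M = ∑ p ∈ D, w s(p.1, p.2) *
        |∑ a : {x // x ∈ A}, (χ p (ρ a.1) - χ p (ρ (f0 a).1))| := by
      rw [hM]
      refine Finset.sum_congr rfl fun p _ => ?_
      rw [hdiff f0 p, abs_mul, abs_of_nonneg (hw _), mul_comm]
    rw [hMsum, hcost f0] at hlt
    obtain ⟨p, hpD, hplt⟩ := Finset.exists_lt_of_sum_lt hlt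
    have hwp : 0 < w s(p.1, p.2) := by
      rcases lt_or_eq_of_le (hw s(p.1, p.2)) with h | h
      · exact h
      · rw [← h] at hplt; simp at hplt
    set t : {x // x ∈ A} → ℝ := fun a => χ p (ρ a.1) - χ p (ρ (f0 a).1) with ht
    have habs : |∑ a : {x // x ∈ A}, t a| < ∑ a : {x // x ∈ A}, |t a| :=
      lt_of_mul_lt_mul_left hplt (le_of_lt hwp)
    have hpos : ∃ a1, 0 < t a1 := by
      by_contra hall; push_neg at hall
      refine absurd habs (not_lt.2 (le_of_eq ?_))
      rw [abs_of_nonpos (Finset.sum_nonpos fun a _ => hall a), ← Finset.sum_neg_distrib]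
      exact Finset.sum_congr rfl fun a _ => abs_of_nonpos (hall a)
    have hneg : ∃ a2, t a2 < 0 := by
      by_contra hall; push_neg at hall
      refine absurd habs (not_lt.2 (le_of_eq ?_))
      rw [abs_of_nonneg (Finset.sum_nonneg fun a _ => hall a)]
      exact Finset.sum_congr rfl fun a _ => abs_of_nonneg (hall a)
    obtain ⟨a1, ha1⟩ := hpos
    obtain ⟨a2, ha2⟩ := hneg
    have hne12 : a1 ≠ a2 := fun h => by rw [h] at ha1; linarith
    have hone : ∀ z, sideOf T hT p.1 p.2 z ↔ χ p z = 1 := by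
      intro z
      by_cases h : sideOf T hT p.1 p.2 z <;> simp [hχ, h]
    have hrange : ∀ z, χ p z = 0 ∨ χ p z = 1 := by
      intro z
      by_cases h : sideOf T hT p.1 p.2 z <;> simp [hχ, h]
    have hdecode : ∀ (z1 z2 : V), 0 < χ p z1 - χ p z2 →
        sideOf T hT p.1 p.2 z1 ∧ ¬ sideOf T hT p.1 p.2 z2 := by
      intro z1 z2 h
      rcases hrange z1 with h1 | h1 <;> rcases hrange z2 with h2 | h2 <;>
        rw [h1, h2] at h <;>
        first
        | linarith
        | exact ⟨(hone z1).2 h1, fun hc => by rw [(hone z2).1 hc] at h2; linarith⟩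
    have hta1 : 0 < χ p (ρ a1.1) - χ p (ρ (f0 a1).1) := by
      have h := ha1; rw [ht] at h; exact h
    have hta2 : 0 < χ p (ρ (f0 a2).1) - χ p (ρ a2.1) := by
      have h := ha2; rw [ht] at h; simp only at h; linarith
    obtain ⟨hm1, hn1⟩ := hdecode _ _ hta1
    obtain ⟨hn2, hm2⟩ := hdecode _ _ hta2
    set m1 := ρ a1.1 with hm1d
    set n1 := ρ (f0 a1).1 with hn1d
    set m2 := ρ a2.1 with hm2d
    set n2 := ρ (f0 a2).1 with hn2d
    have hone' : ∀ (q : V × V) (z : V), sideOf T hT q.1 q.2 z ↔ χ q z = 1 := by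
      intro q z
      by_cases h : sideOf T hT q.1 q.2 z <;> simp [hχ, h]
    have hzero' : ∀ (q : V × V) (z : V), χ q z = 0 → ¬ sideOf T hT q.1 q.2 z := by
      intro q z h hc
      rw [(hone' q z).1 hc] at h
      norm_num at h
    have hrange' : ∀ (q : V × V) (z : V), χ q z = 0 ∨ χ q z = 1 := by
      intro q z
      by_cases h : sideOf T hT q.1 q.2 z <;> simp [hχ, h]
    set B : V × V → ℝ := fun q =>
      |χ q m1 - χ q n1| + |χ q m2 - χ q n2| - |χ q m1 - χ q n2| - |χ q m2 - χ q n1|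
      with hB
    have hBnonneg : ∀ q ∈ D, 0 ≤ B q := by
      intro q hq
      have hadjq : T.Adj q.1 q.2 := hD q hq
      rw [hB]
      simp only
      rcases hrange' q m1 with e1 | e1 <;> rcases hrange' q n1 with e2 | e2 <;>
        rcases hrange' q m2 with e3 | e3 <;> rcases hrange' q n2 with e4 | e4 <;>
        rw [e1, e2, e3, e4] <;>
        first
        | norm_num
        | exfalso
      all_goals
        refine laminar hT (hD p hpD) hadjq hm1 hn1 hm2 hn2 ?_ ?_ ?_
        · rw [hone' q m1, hone' q n1, e1, e2]
        · rw [hone' q m2, hone' q n2, e3, e4]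
        · rw [hone' q m1, hone' q m2, e1, e3]; norm_num
    have hBp : B p = 2 := by
      have e1 : χ p m1 = 1 := (hone' p m1).1 hm1
      have e4 : χ p n2 = 1 := (hone' p n2).1 hn2
      have e2 : χ p n1 = 0 := by
        rcases hrange' p n1 with h | h
        · exact h
        · exact absurd ((hone' p n1).2 h) hn1
      have e3 : χ p m2 = 0 := by
        rcases hrange' p m2 with h | h
        · exact h
        · exact absurd ((hone' p m2).2 h) hm2
      rw [hB]
      simp only
      rw [e1, e2, e3, e4]
      norm_num
    have hsingle : w s(p.1, p.2) * 2 ≤ ∑ q ∈ D, w s(q.1, q.2) * B q := by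
      have h := Finset.single_le_sum (f := fun q => w s(q.1, q.2) * B q)
        (fun q hq => mul_nonneg (hw _) (hBnonneg q hq)) hpD
      simpa [hBp] using h
    have hcomb : ∑ q ∈ D, w s(q.1, q.2) * B q =
        (treeDist T hT w m1 n1 + treeDist T hT w m2 n2) -
          (treeDist T hT w m1 n2 + treeDist T hT w m2 n1) := by
      rw [hdist m1 n1, hdist m2 n2, hdist m1 n2, hdist m2 n1,
        ← Finset.sum_add_distrib, ← Finset.sum_add_distrib, ← Finset.sum_sub_distrib]
      refine Finset.sum_congr rfl fun q _ => ?_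
      rw [hB]
      ring
    set f1 := (Equiv.swap a1 a2).trans f0 with hf1
    have hg1a1 : f1 a1 = f0 a2 := by rw [hf1]; simp
    have hg1a2 : f1 a2 = f0 a1 := by rw [hf1]; simp
    have hsplit0 : C f0 = (∑ a ∈ Finset.univ \ {a1, a2},
        treeDist T hT w (ρ a.1) (ρ (f0 a).1)) +
        (treeDist T hT w m1 n1 + treeDist T hT w m2 n2) := by
      simp only [hC]
      rw [sum_pair_split (fun a => treeDist T hT w (ρ a.1) (ρ (f0 a).1)) hne12]
    have hsplit1 : C f1 = (∑ a ∈ Finset.univ \ {a1, a2},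
        treeDist T hT w (ρ a.1) (ρ (f0 a).1)) +
        (treeDist T hT w m1 n2 + treeDist T hT w m2 n1) := by
      simp only [hC]
      rw [sum_pair_split (fun a => treeDist T hT w (ρ a.1) (ρ (f1 a).1)) hne12]
      congr 1
      · refine Finset.sum_congr rfl fun a ha => ?_
        rw [Finset.mem_sdiff, Finset.mem_insert, Finset.mem_singleton] at ha
        push_neg at ha
        rw [hf1]
        simp [Equiv.swap_apply_of_ne_of_ne ha.2.1 ha.2.2]
      · rw [hg1a1, hg1a2]
    have hless : C f1 < C f0 := by
      rw [hsplit0, hsplit1]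
      linarith
    exact absurd (hf0 f1) (not_le.2 hless)
  have hEq : C f0 = M := le_antisymm hUB (hLB f0)
  constructor
  · exact ⟨f0, hEq.symm⟩
  · rintro r ⟨f, rfl⟩
    exact hLB f
end

section
/- A metric d on a finite set X is a tree metric (i.e., is realized by path distances in some positively weighted tree containing X among its nodes) if and only if for all v, w, x, y ∈ X: d(x,y) + d(v,w) ≤ max{ d(x,v) + d(y,w), d(x,w) + d(y,v) } (the four-point condition). -/
open scoped Classical

/-- `d` is a metric on `X`. -/
def IsMetricOn {X : Type*} (d : X → X → ℝ) : Prop :=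
  (∀ x y, 0 ≤ d x y) ∧ (∀ x y, d x y = 0 ↔ x = y) ∧ (∀ x y, d x y = d y x) ∧
    ∀ x y z, d x y ≤ d x z + d y z

open SimpleGraph
set_option linter.unusedSectionVars false
set_option maxHeartbeats 1000000

namespace TreeAux

variable {V : Type*} {T : SimpleGraph V} (hT : T.IsTree) (w : Sym2 V → ℝ)

noncomputable def upath (u v : V) : T.Walk u v := (hT.existsUnique_path u v).exists.choose

lemma upath_isPath (u v : V) : (upath hT u v).IsPath :=
  (hT.existsUnique_path u v).exists.choose_spec

lemma path_eq_upath {u v : V} {q : T.Walk u v} (hq : q.IsPath) : q = upath hT u v :=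
  (hT.existsUnique_path u v).unique hq (upath_isPath hT u v)

lemma treeDist_eq_upath (u v : V) :
    treeDist T hT w u v = ((upath hT u v).edges.map w).sum := rfl

lemma treeDist_eq_sum {u v : V} {q : T.Walk u v} (hq : q.IsPath) :
    treeDist T hT w u v = (q.edges.map w).sum := by
  rw [treeDist_eq_upath, path_eq_upath hT hq]

lemma treeDist_self (u : V) : treeDist T hT w u u = 0 := by
  have : (Walk.nil : T.Walk u u).IsPath := by simp
  rw [treeDist_eq_sum hT w this]; simp

lemma treeDist_comm (u v : V) : treeDist T hT w u v = treeDist T hT w v u := by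
  rw [treeDist_eq_sum hT w ((upath_isPath hT u v).reverse),
    treeDist_eq_upath hT w u v, SimpleGraph.Walk.edges_reverse, List.map_reverse,
    List.sum_reverse]

variable (hw : ∀ e ∈ T.edgeSet, 0 < w e)
include hw

lemma wsum_nonneg {u v : V} (q : T.Walk u v) : 0 ≤ (q.edges.map w).sum := by
  apply List.sum_nonneg
  intro x hx
  obtain ⟨e, he, rfl⟩ := List.mem_map.1 hx
  exact (hw e (q.edges_subset_edgeSet he)).le

lemma treeDist_adj {u v : V} (h : T.Adj u v) : treeDist T hT w u v = w s(u, v) := by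
  have hp : (Walk.cons h Walk.nil : T.Walk u v).IsPath := by simp [h.ne]
  rw [treeDist_eq_sum hT w hp]; simp

private lemma list_sum_le {l₁ l₂ : List (Sym2 V)} (hn : l₁.Nodup) (hsub : l₁ ⊆ l₂)
    (hpos : ∀ e ∈ l₂, 0 ≤ w e) : (l₁.map w).sum ≤ (l₂.map w).sum := by
  induction l₂ generalizing l₁ with
  | nil => simp [List.subset_nil.1 hsub]
  | cons e t ih =>
    by_cases he : e ∈ l₁
    · have hperm : l₁.Perm (e :: l₁.erase e) := List.perm_cons_erase he
      rw [(hperm.map w).sum_eq]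
      simp only [List.map_cons, List.sum_cons]
      have h1 : (l₁.erase e).Nodup := hn.erase e
      have h2 : l₁.erase e ⊆ t := by
        intro x hx
        have hxe := (hn.mem_erase_iff).1 hx
        rcases List.mem_cons.1 (hsub hxe.2) with h | h
        · exact absurd h hxe.1
        · exact h
      exact add_le_add le_rfl (ih h1 h2 fun x hx => hpos x (List.mem_cons_of_mem _ hx))
    · have h2 : l₁ ⊆ t := by
        intro x hx
        rcases List.mem_cons.1 (hsub hx) with h | h
        · exact absurd (h ▸ hx) he
        · exact h
      simp only [List.map_cons, List.sum_cons]
      have := ih hn h2 fun x hx => hpos x (List.mem_cons_of_mem _ hx)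
      linarith [hpos e List.mem_cons_self]

lemma treeDist_le_wsum {u v : V} (q : T.Walk u v) :
    treeDist T hT w u v ≤ (q.edges.map w).sum := by
  rw [treeDist_eq_sum hT w q.bypass_isPath]
  exact list_sum_le w hw (q.bypass_isPath.isTrail.edges_nodup) (q.edges_bypass_subset)
    (fun e he => (hw e (q.edges_subset_edgeSet he)).le)

lemma treeDist_nonneg (u v : V) : 0 ≤ treeDist T hT w u v :=
  wsum_nonneg w hw _

lemma treeDist_triangle (u z v : V) :
    treeDist T hT w u v ≤ treeDist T hT w u z + treeDist T hT w z v := by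
  have h := treeDist_le_wsum hT w hw ((upath hT u z).append (upath hT z v))
  rwa [SimpleGraph.Walk.edges_append, List.map_append, List.sum_append,
    ← treeDist_eq_upath, ← treeDist_eq_upath] at h

/-- split along any path -/
lemma treeDist_split_of_mem {u v m : V} {q : T.Walk u v} (hq : q.IsPath)
    (hm : m ∈ q.support) :
    treeDist T hT w u v = treeDist T hT w u m + treeDist T hT w m v := by
  have hc := congrArg (fun r : T.Walk u v => (r.edges.map w).sum) (q.take_spec hm)
  simp only [SimpleGraph.Walk.edges_append, List.map_append, List.sum_append] at hc
  rw [treeDist_eq_sum hT w hq, treeDist_eq_sum hT w (hq.takeUntil hm),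
    treeDist_eq_sum hT w (hq.dropUntil hm), ← hc]

lemma treeDist_pos {u v : V} (h : u ≠ v) : 0 < treeDist T hT w u v := by
  rw [treeDist_eq_upath]
  cases hq : upath hT u v with
  | nil => exact absurd rfl h
  | cons hadj q =>
    simp only [SimpleGraph.Walk.edges_cons, List.map_cons, List.sum_cons]
    have h1 := hw _ (T.mem_edgeSet.2 hadj)
    have h2 : 0 ≤ (q.edges.map w).sum := wsum_nonneg w hw q
    linarith

lemma treeDist_eq_zero_iff {u v : V} : treeDist T hT w u v = 0 ↔ u = v := by
  constructor
  · intro h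
    by_contra hne
    exact absurd h (ne_of_gt (treeDist_pos hT w hw hne))
  · rintro rfl; exact treeDist_self hT w u

end TreeAux

namespace TreeAux

variable {V : Type*} {T : SimpleGraph V} (hT : T.IsTree) (w : Sym2 V → ℝ)
variable (hw : ∀ e ∈ T.edgeSet, 0 < w e)
include hw

local notation "dd" => treeDist T hT w

lemma treeDist_prefix {u v m t : V} {q : T.Walk u v} (hq : q.IsPath)
    (hm : m ∈ q.support) (ht : t ∈ (q.dropUntil m hm).support) :
    dd u t = dd u m + dd m t := by
  set r := q.dropUntil m hm with hr
  have hrp : r.IsPath := hq.dropUntil hm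
  have key : ((q.takeUntil m hm).append (r.takeUntil t ht)).append (r.dropUntil t ht) = q := by
    rw [← SimpleGraph.Walk.append_assoc, r.take_spec ht, q.take_spec hm]
  have hq1 : ((q.takeUntil m hm).append (r.takeUntil t ht)).IsPath := by
    rw [← key] at hq
    exact hq.of_append_left
  rw [treeDist_eq_sum hT w hq1, SimpleGraph.Walk.edges_append, List.map_append, List.sum_append,
    ← treeDist_eq_sum hT w (hq.takeUntil hm), ← treeDist_eq_sum hT w (hrp.takeUntil ht)]

lemma treeDist_dichotomy {u v m t : V} {q : T.Walk u v} (hq : q.IsPath)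
    (hm : m ∈ q.support) (ht : t ∈ q.support) :
    dd u t + dd t m = dd u m ∨ dd u m + dd m t = dd u t := by
  by_cases h : t ∈ (q.takeUntil m hm).support
  · left
    exact (treeDist_split_of_mem hT w hw (hq.takeUntil hm) h).symm
  · right
    have ht' : t ∈ (q.dropUntil m hm).support := by
      have := ht
      rw [← q.take_spec hm, SimpleGraph.Walk.mem_support_append_iff] at this
      tauto
    exact (treeDist_prefix hT w hw hq hm ht').symm

/-- Median lemma. -/
lemma exists_median (u v z : V) :
    ∃ m, m ∈ (upath hT u v).support ∧
      dd u v = dd u m + dd m v ∧ dd u z = dd u m + dd m z ∧ dd v z = dd v m + dd m z := by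
  classical
  set p := upath hT u v with hp
  set q := upath hT u z with hq
  have hpp : p.IsPath := upath_isPath hT u v
  have hqp : q.IsPath := upath_isPath hT u z
  set F : Finset V := p.support.toFinset.filter (fun t => t ∈ q.support) with hF
  have hFne : F.Nonempty := ⟨u, by simp [hF]⟩
  obtain ⟨m, hmF, hmax⟩ := F.exists_max_image (fun t => dd u t) hFne
  have hmp : m ∈ p.support := by
    have := (Finset.mem_filter.1 hmF).1; simpa using this
  have hmq : m ∈ q.support := (Finset.mem_filter.1 hmF).2
  have key : ∀ t, t ∈ p.support → t ∈ q.support → dd u m = dd u t + dd t m := by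
    intro t htp htq
    rcases treeDist_dichotomy hT w hw hqp hmq htq with h | h
    · exact h.symm
    · have hle : dd u t ≤ dd u m := hmax t (by simp [hF, htp, htq])
      have h0' : dd m t = 0 := le_antisymm (by linarith) (treeDist_nonneg hT w hw m t)
      have : m = t := (treeDist_eq_zero_iff hT w hw).1 h0'
      subst this
      simp [treeDist_self hT w]
  refine ⟨m, hmp, treeDist_split_of_mem hT w hw hpp hmp,
    treeDist_split_of_mem hT w hw hqp hmq, ?_⟩
  set p2 := p.dropUntil m hmp with hp2
  set q2 := q.dropUntil m hmq with hq2
  have hp2p : p2.IsPath := hpp.dropUntil hmp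
  have hq2p : q2.IsPath := hqp.dropUntil hmq
  have hW : (p2.reverse.append q2).IsPath := by
    rw [SimpleGraph.Walk.isPath_def, SimpleGraph.Walk.support_append, List.nodup_append]
    refine ⟨by rw [← SimpleGraph.Walk.isPath_def]; exact hp2p.reverse, ?_, ?_⟩
    · exact (hq2p.support_nodup).sublist (List.tail_sublist _)
    · intro t htp2 t' htq2 htt
      subst htt
      have htq2' : t ∈ q2.support := List.mem_of_mem_tail htq2
      have htne : t ≠ m := by
        intro h; subst h
        have hsc := q2.support_eq_cons
        have hnd := hq2p.support_nodup
        rw [hsc] at hnd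
        exact (List.nodup_cons.1 hnd).1 htq2
      have htp2' : t ∈ p2.support := by
        rwa [SimpleGraph.Walk.support_reverse, List.mem_reverse] at htp2
      have htp : t ∈ p.support := p.support_dropUntil_subset hmp htp2'
      have htq : t ∈ q.support := q.support_dropUntil_subset hmq htq2'
      have h1 := key t htp htq
      have h2 := treeDist_prefix hT w hw hqp hmq htq2'
      have hc := treeDist_comm hT w m t
      have hn1 := treeDist_nonneg hT w hw t m
      have hn2 := treeDist_nonneg hT w hw m t
      exact htne ((treeDist_eq_zero_iff hT w hw).1 (by linarith))
  have hsum : dd v z = ((p2.reverse.append q2).edges.map w).sum := treeDist_eq_sum hT w hW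
  rw [SimpleGraph.Walk.edges_append, List.map_append, List.sum_append,
    SimpleGraph.Walk.edges_reverse, List.map_reverse, List.sum_reverse,
    ← treeDist_eq_sum hT w hp2p, ← treeDist_eq_sum hT w hq2p] at hsum
  rw [hsum, treeDist_comm hT w m v]

lemma mem_support_of_btw {u v m : V} (h : dd u m + dd m v = dd u v) :
    m ∈ (upath hT u v).support := by
  obtain ⟨m', hm'p, h1, h2, h3⟩ := exists_median hT w hw u v m
  have hc := treeDist_comm hT w v m
  have hc2 := treeDist_comm hT w v m'
  have hn := treeDist_nonneg hT w hw m' m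
  have h0 : dd m' m = 0 := by linarith
  have : m' = m := (treeDist_eq_zero_iff hT w hw).1 h0
  subst this
  exact hm'p

lemma segment_order {u v m c : V} (hm : dd u m + dd m v = dd u v)
    (hc : dd u c + dd c v = dd u v) (hle : dd u c ≤ dd u m) :
    dd u m = dd u c + dd c m := by
  have hmp := mem_support_of_btw hT w hw hm
  have hcp := mem_support_of_btw hT w hw hc
  rcases treeDist_dichotomy hT w hw (upath_isPath hT u v) hmp hcp with h | h
  · exact h.symm
  · have h0 : dd m c = 0 := le_antisymm (by linarith)
      (treeDist_nonneg hT w hw m c)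
    have : m = c := (treeDist_eq_zero_iff hT w hw).1 h0
    subst this
    have := treeDist_self hT w m
    linarith

/-- distance from any point to a point `c` on the segment `[y,z]`. -/
lemma seg_formula {y z c : V} (hc : dd y c + dd c z = dd y z) (u : V) :
    dd u c = max (dd u y - dd y c) (dd u z - (dd y z - dd y c)) := by
  obtain ⟨m, _, h1, h2, h3⟩ := exists_median hT w hw y z u
  -- h1 : dd y z = dd y m + dd m z ; h2 : dd y u = dd y m + dd m u ; h3 : dd z u = dd z m + dd m u
  have hmb : dd y m + dd m z = dd y z := h1.symm
  have tri1 := treeDist_triangle hT w hw u m c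
  have tri2 := treeDist_triangle hT w hw u c y
  have tri3 := treeDist_triangle hT w hw u c z
  have cuy := treeDist_comm hT w u y
  have cuz := treeDist_comm hT w u z
  have cum := treeDist_comm hT w u m
  have ccy := treeDist_comm hT w c y
  have ccz := treeDist_comm hT w c z
  have ccm := treeDist_comm hT w c m
  have czm := treeDist_comm hT w z m
  rcases le_total (dd y c) (dd y m) with hle | hle
  · have hs := segment_order hT w hw hmb hc hle
    have hval : dd u c = dd u y - dd y c := le_antisymm (by linarith) (by linarith)
    rw [hval, max_eq_left (by linarith)]
  · have hs := segment_order hT w hw hc hmb hle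
    have hval : dd u c = dd u z - (dd y z - dd y c) := le_antisymm (by linarith) (by linarith)
    rw [hval, max_eq_right (by linarith)]

lemma four_point_half (x y v v' : V)
    (H : ∃ m1 m2, (dd x y = dd x m1 + dd m1 y ∧ dd x v = dd x m1 + dd m1 v ∧
        dd y v = dd y m1 + dd m1 v) ∧ (dd x y = dd x m2 + dd m2 y ∧
        dd x v' = dd x m2 + dd m2 v' ∧ dd y v' = dd y m2 + dd m2 v') ∧ dd x m1 ≤ dd x m2) :
    dd x y + dd v v' ≤ dd x v' + dd y v := by
  obtain ⟨m1, m2, ⟨h1, h2, h3⟩, ⟨h4, h5, h6⟩, hle⟩ := H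
  have ha : dd x m2 + dd m2 y = dd x y := by linarith
  have hb : dd x m1 + dd m1 y = dd x y := by linarith
  have hs : dd x m2 = dd x m1 + dd m1 m2 := segment_order hT w hw ha hb hle
  have tri1 := treeDist_triangle hT w hw v m1 m2
  have tri2 := treeDist_triangle hT w hw v m2 v'
  have c1 := treeDist_comm hT w m1 v
  have c2 := treeDist_comm hT w m2 v'
  have c3 := treeDist_comm hT w m1 y
  linarith

lemma four_point (x y v v' : V) :
    dd x y + dd v v' ≤ max (dd x v + dd y v') (dd x v' + dd y v) := by
  obtain ⟨m1, _, h1, h2, h3⟩ := exists_median hT w hw x y v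
  obtain ⟨m2, _, h4, h5, h6⟩ := exists_median hT w hw x y v'
  rcases le_total (dd x m1) (dd x m2) with hle | hle
  · exact le_max_of_le_right (four_point_half hT w hw x y v v'
      ⟨m1, m2, ⟨h1, h2, h3⟩, ⟨h4, h5, h6⟩, hle⟩)
  · have := four_point_half hT w hw x y v' v ⟨m2, m1, ⟨h4, h5, h6⟩, ⟨h1, h2, h3⟩, hle⟩
    have hc := treeDist_comm hT w v v'
    exact le_max_of_le_left (by linarith)

/-- Locate the position at distance `β` along the segment `[y,z]`: either a vertex, or
strictly within an edge. -/
lemma walk_find (y z : V) (β : ℝ) (h0 : 0 ≤ β) (h1 : β ≤ dd y z) :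
    (∃ c, dd y c + dd c z = dd y z ∧ dd y c = β) ∨
    (∃ a b, ∃ hab : T.Adj a b, (dd y a + dd a z = dd y z) ∧ (dd y b + dd b z = dd y z) ∧
      dd y a < β ∧ β < dd y a + w s(a, b) ∧ dd y b = dd y a + w s(a, b)) := by
  classical
  set p := upath hT y z with hp
  have hpp : p.IsPath := upath_isPath hT y z
  set F : Finset V := p.support.toFinset.filter (fun t => dd y t ≤ β) with hF
  have hFne : F.Nonempty := ⟨y, by
    simp [hF, treeDist_self hT w, h0]⟩
  obtain ⟨c, hcF, hmax⟩ := F.exists_max_image (fun t => dd y t) hFne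
  have hcp : c ∈ p.support := by
    have := (Finset.mem_filter.1 hcF).1; simpa using this
  have hcβ : dd y c ≤ β := (Finset.mem_filter.1 hcF).2
  have hcyz : dd y c + dd c z = dd y z := (treeDist_split_of_mem hT w hw hpp hcp).symm
  rcases eq_or_lt_of_le hcβ with heq | hlt
  · exact Or.inl ⟨c, hcyz, heq⟩
  · have hcz : c ≠ z := by
      intro h
      rw [h] at hlt
      linarith
    right
    obtain ⟨b, hadj, r', hr⟩ := SimpleGraph.Walk.exists_eq_cons_of_ne hcz (p.dropUntil c hcp)
    have hbr : b ∈ (p.dropUntil c hcp).support := by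
      rw [hr]
      simp [SimpleGraph.Walk.support_cons]
    have hbp : b ∈ p.support := p.support_dropUntil_subset hcp hbr
    have hbyz : dd y b + dd b z = dd y z := (treeDist_split_of_mem hT w hw hpp hbp).symm
    have hyb : dd y b = dd y c + dd c b := treeDist_prefix hT w hw hpp hcp hbr
    have hcb : dd c b = w s(c, b) := treeDist_adj hT w hw hadj
    have hwpos : 0 < w s(c, b) := hw _ (T.mem_edgeSet.2 hadj)
    have hβb : β < dd y b := by
      by_contra hle
      push_neg at hle
      have hbF : b ∈ F := by simp [hF, hbp, hle]
      have := hmax b hbF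
      linarith
    exact ⟨c, b, hadj, hcyz, hbyz, hlt, by linarith, by linarith⟩

end TreeAux

namespace TreeAux

section Convert

variable {V : Type*} {T : SimpleGraph V} {T₂ : SimpleGraph (Option V)}

lemma collapse_walk (hadj : ∀ u v : V, T₂.Adj (some u) (some v) → T.Adj u v)
    {x y : Option V} (q : T₂.Walk x y) (hn : none ∉ q.support) {u v : V}
    (hx : x = some u) (hy : y = some v) :
    ∃ p : T.Walk u v, p.edges.map (Sym2.map some) = q.edges ∧
      p.support.map some = q.support := by
  induction q generalizing u v with
  | nil =>
    subst hx
    obtain rfl : u = v := Option.some_injective _ hy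
    exact ⟨Walk.nil, by simp, by simp⟩
  | @cons a z b h q' ih =>
    subst hx; subst hy
    have hz : z ∈ (Walk.cons h q').support := by
      simp [SimpleGraph.Walk.support_cons, q'.start_mem_support]
    have hzne : z ≠ none := by
      rintro rfl
      exact hn hz
    obtain ⟨z', rfl⟩ := Option.ne_none_iff_exists'.1 hzne
    have hn' : none ∉ q'.support := fun hmem => hn (by simp [SimpleGraph.Walk.support_cons, hmem])
    obtain ⟨p', h1, h2⟩ := ih hn' rfl rfl
    exact ⟨Walk.cons (hadj _ _ h) p', by simp [h1], by simp [h2]⟩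

lemma collapse_wsum {w : Sym2 V → ℝ} {w₂ : Sym2 (Option V) → ℝ}
    (hwt : ∀ u v : V, T₂.Adj (some u) (some v) → w₂ s(some u, some v) = w s(u, v))
    {x y : V} {q : T₂.Walk (some x) (some y)} {p : T.Walk x y}
    (h1 : p.edges.map (Sym2.map some) = q.edges) :
    (q.edges.map w₂).sum = (p.edges.map w).sum := by
  rw [← h1, List.map_map]
  congr 1
  apply List.map_congr_left
  intro e he
  have he2 : Sym2.map some e ∈ q.edges := h1 ▸ List.mem_map_of_mem he
  have hadj2 := q.edges_subset_edgeSet he2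
  induction e with
  | _ a b =>
    simp only [Sym2.map_pair_eq, Function.comp_apply]
    exact hwt a b (by simpa using hadj2)

lemma collapse_cycle (hadj : ∀ u v : V, T₂.Adj (some u) (some v) → T.Adj u v)
    {x : V} (c : T₂.Walk (some x) (some x)) (hn : none ∉ c.support) (hc : c.IsCycle) :
    ∃ p : T.Walk x x, p.IsCycle := by
  obtain ⟨p, h1, h2⟩ := collapse_walk hadj c hn rfl rfl
  obtain ⟨ht, hne, hnd⟩ := (SimpleGraph.Walk.isCycle_def c).1 hc
  refine ⟨p, (SimpleGraph.Walk.isCycle_def p).2 ⟨?_, ?_, ?_⟩⟩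
  · rw [SimpleGraph.Walk.isTrail_def]
    have := ht.edges_nodup
    rw [← h1] at this
    exact this.of_map _
  · intro hnil
    subst hnil
    have hce : c.edges = [] := by simpa using h1.symm
    have hlen : c.length = 0 := by
      have := congrArg List.length hce
      simpa [SimpleGraph.Walk.length_edges] using this
    exact hne (SimpleGraph.Walk.nil_iff_eq_nil.1 (SimpleGraph.Walk.length_eq_zero_iff.1 hlen))
  · have h3 : p.support.tail.map some = c.support.tail := by
      rw [← h2, List.map_tail]
    rw [← h3] at hnd
    exact hnd.of_map _

lemma expand_walk {w : Sym2 V → ℝ} {w₂ : Sym2 (Option V) → ℝ}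
    (h : ∀ u v : V, T.Adj u v →
      ∃ q : T₂.Walk (some u) (some v), (q.edges.map w₂).sum = w s(u, v))
    {u v : V} (p : T.Walk u v) :
    ∃ q : T₂.Walk (some u) (some v), (q.edges.map w₂).sum = (p.edges.map w).sum := by
  induction p with
  | nil => exact ⟨Walk.nil, by simp⟩
  | cons hadj p' ih =>
    obtain ⟨q1, hq1⟩ := h _ _ hadj
    obtain ⟨q2, hq2⟩ := ih
    exact ⟨q1.append q2, by
      rw [SimpleGraph.Walk.edges_append, List.map_append, List.sum_append, hq1, hq2]
      simp⟩

end Convert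

end TreeAux

namespace TreeAux

section Pendant

variable {V : Type*} (T : SimpleGraph V) (pt : V)

def pendant : SimpleGraph (Option V) where
  Adj x y := (∃ u v : V, x = some u ∧ y = some v ∧ T.Adj u v) ∨
    (x = none ∧ y = some pt) ∨ (x = some pt ∧ y = none)
  symm := by
    constructor
    rintro x y (⟨u, v, rfl, rfl, h⟩ | ⟨rfl, rfl⟩ | ⟨rfl, rfl⟩)
    · exact Or.inl ⟨v, u, rfl, rfl, h.symm⟩
    · exact Or.inr (Or.inr ⟨rfl, rfl⟩)
    · exact Or.inr (Or.inl ⟨rfl, rfl⟩)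
  loopless := by
    constructor
    rintro x (⟨u, v, rfl, h1, h⟩ | ⟨rfl, h⟩ | ⟨h1, h2⟩)
    · exact h.ne (Option.some_injective _ h1)
    · exact nomatch h
    · rw [h1] at h2; exact nomatch h2

@[simp] lemma pendant_adj_some {u v : V} :
    (pendant T pt).Adj (some u) (some v) ↔ T.Adj u v := by
  constructor
  · rintro (⟨u', v', hu, hv, h⟩ | ⟨h, _⟩ | ⟨_, h⟩)
    · cases Option.some_injective _ hu; cases Option.some_injective _ hv; exact h
    · exact nomatch h
    · exact nomatch h
  · intro h; exact Or.inl ⟨u, v, rfl, rfl, h⟩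

@[simp] lemma pendant_adj_none {x : Option V} :
    (pendant T pt).Adj none x ↔ x = some pt := by
  constructor
  · rintro (⟨u', v', hu, hv, h⟩ | ⟨_, h⟩ | ⟨h, _⟩)
    · exact nomatch hu
    · exact h
    · exact nomatch h
  · rintro rfl; exact Or.inr (Or.inl ⟨rfl, rfl⟩)

lemma pendant_isTree (hT : T.IsTree) : (pendant T pt).IsTree := by
  constructor
  · -- connected
    have hne : Nonempty V := hT.isConnected.nonempty
    constructor
    · intro x y
      have key : ∀ u v : V, (pendant T pt).Reachable (some u) (some v) := by
        intro u v
        have := (hT.isConnected.preconnected u v)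
        obtain ⟨q⟩ := this
        induction q with
        | nil => exact SimpleGraph.Reachable.refl _
        | cons h q' ih =>
          exact (SimpleGraph.Adj.reachable (by simp [h])).trans ih
      have hnp : (pendant T pt).Reachable none (some pt) :=
        SimpleGraph.Adj.reachable (by simp)
      match x, y with
      | none, none => exact SimpleGraph.Reachable.refl _
      | none, some v => exact hnp.trans (key pt v)
      | some u, none => exact (hnp.trans (key pt u)).symm
      | some u, some v => exact key u v
  · -- acyclic
    intro o c hc
    by_cases hn : none ∈ c.support
    · set c' := c.rotate none hn with hc'
      have hcyc' : c'.IsCycle := hc.rotate hn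
      cases hcc : c' with
      | nil => rw [hcc] at hcyc'; exact hcyc'.ne_nil rfl
      | cons h q =>
        have hz := (pendant_adj_none T pt).1 h
        subst hz
        rw [hcc] at hcyc'
        rw [SimpleGraph.Walk.cons_isCycle_iff] at hcyc'
        obtain ⟨hqp, hqe⟩ := hcyc'
        obtain ⟨z', hadj', r, hr⟩ :=
          SimpleGraph.Walk.exists_eq_cons_of_ne (by simp : (none : Option V) ≠ some pt) q.reverse
        have hz' := (pendant_adj_none T pt).1 hadj'
        subst hz'
        apply hqe
        have : s(none, some pt) ∈ q.reverse.edges := by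
          rw [hr]; simp
        rwa [SimpleGraph.Walk.edges_reverse, List.mem_reverse] at this
    · cases o with
      | none => exact hn c.start_mem_support
      | some x =>
        obtain ⟨p, hp⟩ := collapse_cycle (fun u v h => (pendant_adj_some T pt).1 h) c hn hc
        exact hT.IsAcyclic p hp

end Pendant

end TreeAux

namespace TreeAux

section PendantDist

variable {V : Type*} {T : SimpleGraph V} (hT : T.IsTree) (w : Sym2 V → ℝ)
  (hw : ∀ e ∈ T.edgeSet, 0 < w e) (pt : V) (α : ℝ) (hα : 0 < α)

/-- weights on the pendant graph -/
noncomputable def pw : Sym2 (Option V) → ℝ :=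
  fun e => if none ∈ e then α else w (Sym2.map (fun o => o.getD pt) e)

@[simp] lemma pw_some {u v : V} : pw w pt α s(some u, some v) = w s(u, v) := by
  rw [pw]
  simp

@[simp] lemma pw_none : pw w pt α s(none, some pt) = α := by
  rw [pw]
  simp

lemma pendant_path_avoids_none {u v : V} (q : (pendant T pt).Walk (some u) (some v))
    (hq : q.IsPath) : none ∉ q.support := by
  intro hn
  have hsplit := q.take_spec hn
  set q1 := q.takeUntil none hn with hq1
  set q2 := q.dropUntil none hn with hq2
  have hq1p : q1.IsPath := hq.takeUntil hn
  have hq2p : q2.IsPath := hq.dropUntil hn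
  obtain ⟨z1, h1, r1, hr1⟩ :=
    SimpleGraph.Walk.exists_eq_cons_of_ne (by simp : (none : Option V) ≠ some u) q1.reverse
  obtain ⟨z2, h2, r2, hr2⟩ :=
    SimpleGraph.Walk.exists_eq_cons_of_ne (by simp : (none : Option V) ≠ some v) q2
  have hz1 := (pendant_adj_none T pt).1 h1
  have hz2 := (pendant_adj_none T pt).1 h2
  subst hz1; subst hz2
  have he1 : s(none, some pt) ∈ q1.edges := by
    have : s(none, some pt) ∈ q1.reverse.edges := by rw [hr1]; simp
    rwa [SimpleGraph.Walk.edges_reverse, List.mem_reverse] at this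
  have he2 : s(none, some pt) ∈ q2.edges := by rw [hr2]; simp
  have htrail : q.IsTrail := hq.isTrail
  have : q.edges.Nodup := htrail.edges_nodup
  rw [← hsplit, SimpleGraph.Walk.edges_append, List.nodup_append] at this
  exact this.2.2 _ he1 _ he2 rfl


include hw hα

lemma pw_pos : ∀ e ∈ (pendant T pt).edgeSet, 0 < pw w pt α e := by
  intro e he
  induction e with
  | _ x y =>
    rw [SimpleGraph.mem_edgeSet] at he
    match x, y with
    | some u, some v =>
      have := (pendant_adj_some T pt).1 he
      rw [pw_some]
      exact hw _ (T.mem_edgeSet.2 this)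
    | none, y =>
      have := (pendant_adj_none T pt).1 he
      subst this
      rw [pw_none]
      exact hα
    | some u, none =>
      have := (pendant_adj_none T pt).1 he.symm
      have hu : u = pt := by
        cases this
        rfl
      subst hu
      rw [Sym2.eq_swap, pw_none]
      exact hα


lemma pendant_dist_some (hT2 : (pendant T pt).IsTree) (u v : V) :
    treeDist (pendant T pt) hT2 (pw w pt α) (some u) (some v) = treeDist T hT w u v := by
  apply le_antisymm
  · obtain ⟨q, hq⟩ := expand_walk (T₂ := pendant T pt) (w := w) (w₂ := pw w pt α)
      (fun a b hab => ⟨Walk.cons (by simp [hab]) Walk.nil, by simp⟩) (upath hT u v)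
    calc treeDist (pendant T pt) hT2 (pw w pt α) (some u) (some v)
        ≤ (q.edges.map (pw w pt α)).sum := treeDist_le_wsum hT2 _ (pw_pos w hw pt α hα) q
      _ = _ := by rw [hq, ← treeDist_eq_upath]
  · set q := upath hT2 (some u) (some v) with hqdef
    have hqp : q.IsPath := upath_isPath hT2 (some u) (some v)
    have hnone := pendant_path_avoids_none pt q hqp
    obtain ⟨p, h1, h2⟩ := collapse_walk (fun a b hab => (pendant_adj_some T pt).1 hab)
      q hnone rfl rfl
    have hsum := collapse_wsum (T₂ := pendant T pt) (w := w) (w₂ := pw w pt α)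
      (fun a b hab => by simp) h1
    calc treeDist T hT w u v ≤ (p.edges.map w).sum := treeDist_le_wsum hT w hw p
      _ = (q.edges.map (pw w pt α)).sum := hsum.symm
      _ = _ := (treeDist_eq_upath hT2 (pw w pt α) _ _).symm

lemma pendant_dist_none (hT2 : (pendant T pt).IsTree) (u : V) :
    treeDist (pendant T pt) hT2 (pw w pt α) none (some u) = α + treeDist T hT w pt u := by
  apply le_antisymm
  · obtain ⟨q, hq⟩ := expand_walk (T₂ := pendant T pt) (w := w) (w₂ := pw w pt α)
      (fun a b hab => ⟨Walk.cons (by simp [hab]) Walk.nil, by simp⟩) (upath hT pt u)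
    have hcons : (Walk.cons (by simp : (pendant T pt).Adj none (some pt)) q).IsPath ∨ True :=
      Or.inr trivial
    calc treeDist (pendant T pt) hT2 (pw w pt α) none (some u)
        ≤ ((Walk.cons (by simp : (pendant T pt).Adj none (some pt)) q).edges.map
            (pw w pt α)).sum := treeDist_le_wsum hT2 _ (pw_pos w hw pt α hα) _
      _ = α + treeDist T hT w pt u := by
          rw [SimpleGraph.Walk.edges_cons, List.map_cons, List.sum_cons, hq,
            ← treeDist_eq_upath, pw_none]
  · set q := upath hT2 none (some u) with hqdef
    have hqp : q.IsPath := upath_isPath hT2 none (some u)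
    obtain ⟨z, hz, r, hr⟩ :=
      SimpleGraph.Walk.exists_eq_cons_of_ne (by simp : (none : Option V) ≠ some u) q
    have hzpt := (pendant_adj_none T pt).1 hz
    subst hzpt
    have hrp : r.IsPath ∧ none ∉ r.support := by
      have := hqp
      rw [hr, SimpleGraph.Walk.cons_isPath_iff] at this
      exact this
    obtain ⟨p, h1, h2⟩ := collapse_walk (fun a b hab => (pendant_adj_some T pt).1 hab)
      r hrp.2 rfl rfl
    have hsum := collapse_wsum (T₂ := pendant T pt) (w := w) (w₂ := pw w pt α)
      (fun a b hab => by simp) h1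
    have : treeDist (pendant T pt) hT2 (pw w pt α) none (some u)
        = α + (r.edges.map (pw w pt α)).sum := by
      rw [treeDist_eq_upath, ← hqdef, hr, SimpleGraph.Walk.edges_cons, List.map_cons,
        List.sum_cons, pw_none]
    rw [this, hsum]
    have := treeDist_le_wsum hT w hw p
    linarith

end PendantDist

end TreeAux

namespace TreeAux

section Subdiv

variable {V : Type*} (T : SimpleGraph V) (a b : V)

def subdiv : SimpleGraph (Option V) where
  Adj x y := (∃ u v : V, x = some u ∧ y = some v ∧ T.Adj u v ∧ s(u, v) ≠ s(a, b)) ∨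
    (x = none ∧ (y = some a ∨ y = some b)) ∨ ((x = some a ∨ x = some b) ∧ y = none)
  symm := by
    constructor
    rintro x y (⟨u, v, rfl, rfl, h, hne⟩ | ⟨rfl, h⟩ | ⟨h, rfl⟩)
    · exact Or.inl ⟨v, u, rfl, rfl, h.symm, by rwa [Sym2.eq_swap]⟩
    · exact Or.inr (Or.inr ⟨h, rfl⟩)
    · exact Or.inr (Or.inl ⟨rfl, h⟩)
  loopless := by
    constructor
    rintro x (⟨u, v, rfl, h1, h, _⟩ | ⟨rfl, h⟩ | ⟨h, rfl⟩)
    · exact h.ne (Option.some_injective _ h1)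
    · rcases h with h | h <;> exact nomatch h
    · rcases h with h | h <;> exact nomatch h

@[simp] lemma subdiv_adj_some {u v : V} :
    (subdiv T a b).Adj (some u) (some v) ↔ T.Adj u v ∧ s(u, v) ≠ s(a, b) := by
  constructor
  · rintro (⟨u', v', hu, hv, h, hne⟩ | ⟨h, _⟩ | ⟨_, h⟩)
    · cases Option.some_injective _ hu; cases Option.some_injective _ hv; exact ⟨h, hne⟩
    · exact nomatch h
    · exact nomatch h
  · rintro ⟨h, hne⟩; exact Or.inl ⟨u, v, rfl, rfl, h, hne⟩

@[simp] lemma subdiv_adj_none {x : Option V} :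
    (subdiv T a b).Adj none x ↔ x = some a ∨ x = some b := by
  constructor
  · rintro (⟨u', v', hu, hv, h, hne⟩ | ⟨_, h⟩ | ⟨h, hn⟩)
    · exact nomatch hu
    · exact h
    · rcases h with h | h <;> exact nomatch h
  · rintro h; exact Or.inr (Or.inl ⟨rfl, h⟩)

variable {T a b} (hT : T.IsTree) (hab : T.Adj a b)

include hT in
/-- In a tree, every walk between adjacent vertices uses the edge between them. -/
lemma tree_adj_mem_edges {u v : V} (huv : T.Adj u v) (W : T.Walk u v) :
    s(u, v) ∈ W.edges := by
  have hup : (Walk.cons huv Walk.nil : T.Walk u v).IsPath := by simp [huv.ne]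
  have h1 : (W.toPath : T.Walk u v) = Walk.cons huv Walk.nil :=
    (path_eq_upath hT W.toPath.2).trans (path_eq_upath hT hup).symm
  apply W.edges_toPath_subset
  rw [h1]
  simp

include hT hab in
lemma subdiv_isTree : (subdiv T a b).IsTree := by
  constructor
  · have hne : Nonempty V := hT.isConnected.nonempty
    constructor
    · intro x y
      have edge : ∀ u v : V, T.Adj u v → (subdiv T a b).Reachable (some u) (some v) := by
        intro u v h
        by_cases hcase : s(u, v) = s(a, b)
        · rcases Sym2.eq_iff.1 hcase with ⟨rfl, rfl⟩ | ⟨rfl, rfl⟩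
          · exact ((SimpleGraph.Adj.reachable (by simp : (subdiv T u v).Adj none (some u))).symm.trans
              (SimpleGraph.Adj.reachable (by simp : (subdiv T u v).Adj none (some v))))
          · exact ((SimpleGraph.Adj.reachable (by simp : (subdiv T v u).Adj none (some u))).symm.trans
              (SimpleGraph.Adj.reachable (by simp : (subdiv T v u).Adj none (some v))))
        · exact SimpleGraph.Adj.reachable (by simp [h, hcase])
      have key : ∀ u v : V, (subdiv T a b).Reachable (some u) (some v) := by
        intro u v
        obtain ⟨q⟩ := hT.isConnected.preconnected u v
        induction q with
        | nil => exact SimpleGraph.Reachable.refl _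
        | cons h q' ih => exact (edge _ _ h).trans ih
      have hna : (subdiv T a b).Reachable none (some a) :=
        SimpleGraph.Adj.reachable (by simp)
      match x, y with
      | none, none => exact SimpleGraph.Reachable.refl _
      | none, some v => exact hna.trans (key a v)
      | some u, none => exact (hna.trans (key a u)).symm
      | some u, some v => exact key u v
  · intro o c hc
    by_cases hn : none ∈ c.support
    · set c' := c.rotate none hn with hc'
      have hcyc' : c'.IsCycle := hc.rotate hn
      obtain ⟨z, h, q, hcc⟩ := SimpleGraph.Walk.not_nil_iff.1 hcyc'.not_nil
      · rw [hcc] at hcyc'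
        rw [SimpleGraph.Walk.cons_isCycle_iff] at hcyc'
        obtain ⟨hqp, hqe⟩ := hcyc'
        have hz := (subdiv_adj_none T a b).1 h
        -- decompose q from the end
        have hzne : (none : Option V) ≠ z := by
          rcases hz with rfl | rfl <;> simp
        obtain ⟨z', hadj', r, hr⟩ := SimpleGraph.Walk.exists_eq_cons_of_ne hzne q.reverse
        have hz' := (subdiv_adj_none T a b).1 hadj'
        have hrnone : none ∉ r.support ∧ r.IsPath := by
          have hqrev : q.reverse.IsPath := hqp.reverse
          rw [hr, SimpleGraph.Walk.cons_isPath_iff] at hqrev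
          exact ⟨hqrev.2, hqrev.1⟩
        have hez' : s(none, z') ∈ q.edges := by
          have : s(none, z') ∈ q.reverse.edges := by rw [hr]; simp
          rwa [SimpleGraph.Walk.edges_reverse, List.mem_reverse] at this
        have hzz' : z ≠ z' := by
          rintro rfl
          exact hqe hez'
        -- so {z, z'} = {a, b}; r is a none-free walk from z' to z
        -- collapse r to a T-walk avoiding edge s(a,b)
        have hzsome : ∃ z0, z = some z0 := by rcases hz with rfl | rfl <;> exact ⟨_, rfl⟩
        have hz'some : ∃ z0', z' = some z0' := by rcases hz' with rfl | rfl <;> exact ⟨_, rfl⟩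
        obtain ⟨z0, rfl⟩ := hzsome
        obtain ⟨z0', rfl⟩ := hz'some
        obtain ⟨p, h1, h2⟩ := collapse_walk
          (fun u v hadj => ((subdiv_adj_some T a b).1 hadj).1) r hrnone.1 rfl rfl
        -- edge s(a,b) not among p's edges
        have hpab : s(a, b) ∉ p.edges := by
          intro hmem
          have : s(some a, some b) ∈ r.edges := by
            rw [← h1]
            exact List.mem_map_of_mem hmem
          have := r.edges_subset_edgeSet this
          rw [SimpleGraph.mem_edgeSet, subdiv_adj_some] at this
          exact this.2 rfl
        -- p is a T-walk between z0' and z0 where {z0, z0'} = {a, b}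
        have hz0 : (z0 = a ∧ z0' = b) ∨ (z0 = b ∧ z0' = a) := by
          rcases hz with hza | hzb
          · rcases hz' with hza' | hzb'
            · exact absurd (hza.trans hza'.symm) hzz'
            · exact Or.inl ⟨Option.some_injective _ hza, Option.some_injective _ hzb'⟩
          · rcases hz' with hza' | hzb'
            · exact Or.inr ⟨Option.some_injective _ hzb, Option.some_injective _ hza'⟩
            · exact absurd (hzb.trans hzb'.symm) hzz'
        -- in T, the unique path between a and b is the single edge; contradiction
        rcases hz0 with ⟨hz0a, hz0b⟩ | ⟨hz0a, hz0b⟩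
        · subst hz0a; subst hz0b
          have := tree_adj_mem_edges hT hab.symm p
          rw [Sym2.eq_swap] at this
          exact hpab this
        · subst hz0a; subst hz0b
          exact hpab (tree_adj_mem_edges hT hab p)
    · cases o with
      | none => exact hn c.start_mem_support
      | some x =>
        obtain ⟨p, hp⟩ := collapse_cycle (fun u v h => ((subdiv_adj_some T a b).1 h).1) c hn hc
        exact hT.IsAcyclic p hp

end Subdiv

end TreeAux

namespace TreeAux

section SubdivDist

variable {V : Type*} {T : SimpleGraph V} (hT : T.IsTree) (w : Sym2 V → ℝ)
  (hw : ∀ e ∈ T.edgeSet, 0 < w e)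

noncomputable def sw (w : Sym2 V → ℝ) (a b : V) (β : ℝ) : Sym2 (Option V) → ℝ :=
  fun e => if e = s(none, some a) then β
    else if none ∈ e then w s(a, b) - β
    else w (Sym2.map (fun o => o.getD a) e)

variable {a b : V}

@[simp] lemma sw_some {β : ℝ} {u v : V} : sw w a b β s(some u, some v) = w s(u, v) := by
  rw [sw]
  have h1 : s(some u, some v) ≠ s((none : Option V), some a) := by
    simp [Sym2.eq_iff]
  have h2 : (none : Option V) ∉ s(some u, some v) := by simp
  simp [h1, h2]

@[simp] lemma sw_nonea {β : ℝ} : sw w a b β s(none, some a) = β := by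
  rw [sw]; simp

@[simp] lemma sw_noneb {β : ℝ} (hne : a ≠ b) : sw w a b β s(none, some b) = w s(a, b) - β := by
  rw [sw]
  have h1 : s((none : Option V), some b) ≠ s((none : Option V), some a) := by
    simp [Sym2.eq_iff, hne.symm]
  simp [h1]

variable (hab : T.Adj a b) {β : ℝ} (hβ0 : 0 < β) (hβ1 : β < w s(a, b))
include hw hab hβ0 hβ1

lemma sw_pos : ∀ e ∈ (subdiv T a b).edgeSet, 0 < sw w a b β e := by
  intro e he
  induction e with
  | _ x y =>
    rw [SimpleGraph.mem_edgeSet] at he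
    match x, y with
    | some u, some v =>
      have := ((subdiv_adj_some T a b).1 he).1
      rw [sw_some]
      exact hw _ (T.mem_edgeSet.2 this)
    | none, y =>
      rcases (subdiv_adj_none T a b).1 he with rfl | rfl
      · rw [sw_nonea]; exact hβ0
      · rw [sw_noneb w hab.ne]; linarith
    | some u, none =>
      rw [Sym2.eq_swap]
      rcases (subdiv_adj_none T a b).1 he.symm with h | h
      · cases Option.some_injective _ h.symm ▸ h with
        | refl => rw [(Option.some_injective _ h : u = a), sw_nonea]; exact hβ0
      · rw [(Option.some_injective _ h : u = b), sw_noneb w hab.ne]; linarith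

lemma subdiv_dist_some (hT2 : (subdiv T a b).IsTree) (u v : V) :
    treeDist (subdiv T a b) hT2 (sw w a b β) (some u) (some v) = treeDist T hT w u v := by
  apply le_antisymm
  · -- expand each T-edge to a walk in the subdivision
    have hexp : ∀ u' v' : V, T.Adj u' v' →
        ∃ q : (subdiv T a b).Walk (some u') (some v'),
          (q.edges.map (sw w a b β)).sum = w s(u', v') := by
      intro u' v' h
      by_cases hcase : s(u', v') = s(a, b)
      · rcases Sym2.eq_iff.1 hcase with ⟨rfl, rfl⟩ | ⟨rfl, rfl⟩
        · refine ⟨Walk.cons (((subdiv_adj_none T u' v').2 (Or.inl rfl)).symm)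
            (Walk.cons ((subdiv_adj_none T u' v').2 (Or.inr rfl)) Walk.nil), ?_⟩
          simp only [SimpleGraph.Walk.edges_cons, SimpleGraph.Walk.edges_nil, List.map_cons,
            List.map_nil, List.sum_cons, List.sum_nil]
          rw [Sym2.eq_swap, sw_nonea, sw_noneb w hab.ne]
          ring
        · refine ⟨Walk.cons (((subdiv_adj_none T v' u').2 (Or.inr rfl)).symm)
            (Walk.cons ((subdiv_adj_none T v' u').2 (Or.inl rfl)) Walk.nil), ?_⟩
          simp only [SimpleGraph.Walk.edges_cons, SimpleGraph.Walk.edges_nil, List.map_cons,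
            List.map_nil, List.sum_cons, List.sum_nil]
          rw [Sym2.eq_swap, sw_noneb w hab.ne, sw_nonea, Sym2.eq_swap]
          ring
      · exact ⟨Walk.cons ((subdiv_adj_some T a b).2 ⟨h, hcase⟩) Walk.nil, by simp⟩
    obtain ⟨q, hq⟩ := expand_walk hexp (upath hT u v)
    calc treeDist (subdiv T a b) hT2 (sw w a b β) (some u) (some v)
        ≤ (q.edges.map (sw w a b β)).sum :=
          treeDist_le_wsum hT2 _ (sw_pos w hw hab hβ0 hβ1) q
      _ = _ := by rw [hq, ← treeDist_eq_upath]
  · set q := upath hT2 (some u) (some v) with hqdef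
    have hqp : q.IsPath := upath_isPath hT2 (some u) (some v)
    by_cases hn : none ∈ q.support
    · -- the path passes through the subdivision vertex
      have hsplit := q.take_spec hn
      set q1 := q.takeUntil none hn with hq1
      set q2 := q.dropUntil none hn with hq2
      have hq1p : q1.IsPath := hqp.takeUntil hn
      have hq2p : q2.IsPath := hqp.dropUntil hn
      obtain ⟨z1, h1, r1, hr1⟩ := SimpleGraph.Walk.exists_eq_cons_of_ne
        (by simp : (none : Option V) ≠ some u) q1.reverse
      obtain ⟨z2, h2, r2, hr2⟩ := SimpleGraph.Walk.exists_eq_cons_of_ne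
        (by simp : (none : Option V) ≠ some v) q2
      have hr1p : r1.IsPath ∧ none ∉ r1.support := by
        have := hq1p.reverse
        rw [hr1, SimpleGraph.Walk.cons_isPath_iff] at this
        exact ⟨this.1, this.2⟩
      have hr2p : r2.IsPath ∧ none ∉ r2.support := by
        have := hq2p
        rw [hr2, SimpleGraph.Walk.cons_isPath_iff] at this
        exact ⟨this.1, this.2⟩
      have hz1 := (subdiv_adj_none T a b).1 h1
      have hz2 := (subdiv_adj_none T a b).1 h2
      -- z1 ≠ z2
      have hz1q1 : z1 ∈ q1.support := by
        have : z1 ∈ q1.reverse.support := by rw [hr1]; simp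
        rwa [SimpleGraph.Walk.support_reverse, List.mem_reverse] at this
      have hz2q2 : z2 ∈ q2.support.tail := by
        have hmem : z2 ∈ q2.support := by rw [hr2]; simp
        have hne : z2 ≠ none := by rcases hz2 with rfl | rfl <;> simp
        rw [q2.support_eq_cons] at hmem
        rcases List.mem_cons.1 hmem with h | h
        · exact absurd h hne
        · exact h
      have hzz : z1 ≠ z2 := by
        rintro rfl
        have hnd := hqp.support_nodup
        rw [← hsplit, SimpleGraph.Walk.support_append, List.nodup_append] at hnd
        exact hnd.2.2 _ hz1q1 _ hz2q2 rfl
      obtain ⟨c1, rfl⟩ : ∃ c1, z1 = some c1 := by rcases hz1 with rfl | rfl <;> exact ⟨_, rfl⟩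
      obtain ⟨c2, rfl⟩ : ∃ c2, z2 = some c2 := by rcases hz2 with rfl | rfl <;> exact ⟨_, rfl⟩
      obtain ⟨p1, hp1e, _⟩ := collapse_walk
        (fun u' v' h => ((subdiv_adj_some T a b).1 h).1) r1 hr1p.2 rfl rfl
      obtain ⟨p2, hp2e, _⟩ := collapse_walk
        (fun u' v' h => ((subdiv_adj_some T a b).1 h).1) r2 hr2p.2 rfl rfl
      have hs1 := collapse_wsum (T₂ := subdiv T a b) (w := w) (w₂ := sw w a b β)
        (fun u' v' h => by simp) hp1e
      have hs2 := collapse_wsum (T₂ := subdiv T a b) (w := w) (w₂ := sw w a b β)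
        (fun u' v' h => by simp) hp2e
      -- adjacency between c1 and c2 in T
      have hcadj : T.Adj c1 c2 ∧ w s(c1, c2) = w s(a, b) := by
        rcases hz1 with h1' | h1' <;> rcases hz2 with h2' | h2'
        · exact absurd (h1'.trans h2'.symm) hzz
        · obtain rfl : c1 = a := Option.some_injective _ h1'
          obtain rfl : c2 = b := Option.some_injective _ h2'
          exact ⟨hab, rfl⟩
        · obtain rfl : c1 = b := Option.some_injective _ h1'
          obtain rfl : c2 = a := Option.some_injective _ h2'
          exact ⟨hab.symm, by rw [Sym2.eq_swap]⟩
        · exact absurd (h1'.trans h2'.symm) hzz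
      -- total weight of none-incident edges
      have hwnone : sw w a b β s(some c1, none) + sw w a b β s(none, some c2)
          = w s(a, b) := by
        rcases hz1 with h1' | h1' <;> rcases hz2 with h2' | h2'
        · exact absurd (h1'.trans h2'.symm) hzz
        · obtain rfl : c1 = a := Option.some_injective _ h1'
          obtain rfl : c2 = b := Option.some_injective _ h2'
          rw [Sym2.eq_swap, sw_nonea, sw_noneb w hab.ne]; ring
        · obtain rfl : c1 = b := Option.some_injective _ h1'
          obtain rfl : c2 = a := Option.some_injective _ h2'
          rw [Sym2.eq_swap, sw_noneb w hab.ne, sw_nonea]; ring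
        · exact absurd (h1'.trans h2'.symm) hzz
      -- build the T-walk
      set W : T.Walk u v := p1.reverse.append (Walk.cons hcadj.1 p2) with hW
      have hWsum : (W.edges.map w).sum = (p1.edges.map w).sum + w s(c1, c2)
          + (p2.edges.map w).sum := by
        rw [hW, SimpleGraph.Walk.edges_append, List.map_append, List.sum_append,
          SimpleGraph.Walk.edges_reverse, List.map_reverse, List.sum_reverse]
        simp only [SimpleGraph.Walk.edges_cons, List.map_cons, List.sum_cons]
        ring
      have hq1sum : (q1.edges.map (sw w a b β)).sum
          = sw w a b β s(some c1, none) + (r1.edges.map (sw w a b β)).sum := by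
        have : q1.edges = (q1.reverse.edges).reverse := by
          rw [SimpleGraph.Walk.edges_reverse, List.reverse_reverse]
        rw [this, hr1, List.map_reverse, List.sum_reverse]
        simp only [SimpleGraph.Walk.edges_cons, List.map_cons, List.sum_cons]
        rw [Sym2.eq_swap]
      have hq2sum : (q2.edges.map (sw w a b β)).sum
          = sw w a b β s(none, some c2) + (r2.edges.map (sw w a b β)).sum := by
        rw [hr2]
        simp only [SimpleGraph.Walk.edges_cons, List.map_cons, List.sum_cons]
      have hqsum : treeDist (subdiv T a b) hT2 (sw w a b β) (some u) (some v)
          = (q1.edges.map (sw w a b β)).sum + (q2.edges.map (sw w a b β)).sum := by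
        rw [treeDist_eq_upath, ← hqdef, ← hsplit, SimpleGraph.Walk.edges_append,
          List.map_append, List.sum_append]
      have hWle := treeDist_le_wsum hT w hw W
      rw [hqsum, hq1sum, hq2sum, hs1, hs2]
      rw [hWsum] at hWle
      linarith [hwnone, hcadj.2]
    · obtain ⟨p, h1, _⟩ := collapse_walk
        (fun u' v' h => ((subdiv_adj_some T a b).1 h).1) q hn rfl rfl
      have hsum := collapse_wsum (T₂ := subdiv T a b) (w := w) (w₂ := sw w a b β)
        (fun u' v' h => by simp) h1
      calc treeDist T hT w u v ≤ (p.edges.map w).sum := treeDist_le_wsum hT w hw p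
        _ = (q.edges.map (sw w a b β)).sum := hsum.symm
        _ = _ := (treeDist_eq_upath hT2 (sw w a b β) _ _).symm

include hT in
lemma subdiv_dist_none (hT2 : (subdiv T a b).IsTree) :
    treeDist (subdiv T a b) hT2 (sw w a b β) none (some a) = β ∧
    treeDist (subdiv T a b) hT2 (sw w a b β) none (some b) = w s(a, b) - β := by
  have hposs := sw_pos w hw hab hβ0 hβ1
  have ha' : treeDist (subdiv T a b) hT2 (sw w a b β) none (some a) ≤ β := by
    have := treeDist_le_wsum hT2 _ hposs
      (Walk.cons ((subdiv_adj_none T a b).2 (Or.inl rfl)) Walk.nil)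
    simpa using this
  have hb' : treeDist (subdiv T a b) hT2 (sw w a b β) none (some b) ≤ w s(a, b) - β := by
    have := treeDist_le_wsum hT2 _ hposs
      (Walk.cons ((subdiv_adj_none T a b).2 (Or.inr rfl)) Walk.nil)
    simpa [sw_noneb w hab.ne] using this
  have hd : treeDist (subdiv T a b) hT2 (sw w a b β) (some a) (some b) = w s(a, b) := by
    rw [subdiv_dist_some hT w hw hab hβ0 hβ1 hT2, treeDist_adj hT w hw hab]
  have htri := treeDist_triangle hT2 (sw w a b β) hposs (some a) none (some b)
  have hcomm := treeDist_comm hT2 (sw w a b β) (some a) (none : Option V)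
  constructor <;> linarith

end SubdivDist

end TreeAux

namespace TreeAux

/-- trivial tree on `PUnit` -/
lemma punit_isTree : (⊥ : SimpleGraph PUnit).IsTree := by
  constructor
  · constructor
    · intro u v
      rw [Subsingleton.elim u v]
  · exact SimpleGraph.isAcyclic_bot

def RealizesOn (X : Type) (d : X → X → ℝ) : Prop :=
  ∃ (V : Type) (_ : Fintype V) (T : SimpleGraph V) (hT : T.IsTree)
      (w : Sym2 V → ℝ) (ι : X → V),
    Function.Injective ι ∧ (∀ e ∈ T.edgeSet, 0 < w e) ∧
    ∀ x y, d x y = treeDist T hT w (ι x) (ι y)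

lemma realizes_of_zero {X : Type} (d : X → X → ℝ) (hzero : ∀ x y : X, d x y = 0)
    (hinj : ∀ x y : X, x = y) : RealizesOn X d := by
  refine ⟨PUnit, inferInstance, ⊥, punit_isTree, fun _ => 1, fun _ => PUnit.unit,
    fun x y _ => hinj x y, by simp, fun x y => ?_⟩
  rw [hzero, Subsingleton.elim (PUnit.unit) (PUnit.unit), treeDist_self]

lemma lift_realization {X : Type} (x : X) (d : X → X → ℝ) (hd : IsMetricOn d)
    {V1 : Type} [Fintype V1] {T1 : SimpleGraph V1} (hT1 : T1.IsTree) (w1 : Sym2 V1 → ℝ)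
    (hw1 : ∀ e ∈ T1.edgeSet, 0 < w1 e) (ι1 : {y : X // y ≠ x} → V1)
    (hinj : Function.Injective ι1)
    (hreal : ∀ u v : {y : X // y ≠ x}, d u.1 v.1 = treeDist T1 hT1 w1 (ι1 u) (ι1 v))
    (c : V1) (α : ℝ) (hα : 0 ≤ α)
    (hc : ∀ u : {y : X // y ≠ x}, treeDist T1 hT1 w1 (ι1 u) c = d x u.1 - α) :
    RealizesOn X d := by
  classical
  obtain ⟨hnn, hzero, hcomm, htri⟩ := hd
  have hne : ∀ u : {y : X // y ≠ x}, 0 < d x u.1 := by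
    intro u
    rcases lt_or_eq_of_le (hnn x u.1) with h | h
    · exact h
    · exact absurd ((hzero x u.1).1 h.symm).symm u.2
  rcases eq_or_lt_of_le hα with rfl | hαpos
  · -- α = 0 : identify x with the vertex c
    refine ⟨V1, inferInstance, T1, hT1, w1,
      fun t => if h : t = x then c else ι1 ⟨t, h⟩, ?_, hw1, ?_⟩
    · intro t1 t2 heq
      dsimp only at heq
      by_cases h1 : t1 = x <;> by_cases h2 : t2 = x
      · rw [h1, h2]
      · rw [dif_pos h1, dif_neg h2] at heq
        have := hc ⟨t2, h2⟩
        rw [← heq, treeDist_comm, treeDist_self] at this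
        have h0 := hne ⟨t2, h2⟩
        simp only [sub_zero] at this
        linarith
      · rw [dif_neg h1, dif_pos h2] at heq
        have := hc ⟨t1, h1⟩
        rw [heq, treeDist_comm, treeDist_self] at this
        have h0 := hne ⟨t1, h1⟩
        simp only [sub_zero] at this
        linarith
      · rw [dif_neg h1, dif_neg h2] at heq
        exact congrArg Subtype.val (hinj heq)
    · intro t1 t2
      dsimp only
      by_cases h1 : t1 = x <;> by_cases h2 : t2 = x
      · subst h1; subst h2
        rw [dif_pos rfl, treeDist_self]
        exact (hzero _ _).2 rfl
      · subst h1
        rw [dif_pos rfl, dif_neg h2]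
        have ha := hc ⟨t2, h2⟩
        have hb := treeDist_comm hT1 w1 (ι1 ⟨t2, h2⟩) c
        simp only [sub_zero] at ha
        linarith
      · subst h2
        rw [dif_neg h1, dif_pos rfl]
        have ha := hc ⟨t1, h1⟩
        have hcm := hcomm t1 t2
        simp only [sub_zero] at ha
        linarith
      · rw [dif_neg h1, dif_neg h2]
        exact hreal ⟨t1, h1⟩ ⟨t2, h2⟩
  · -- α > 0 : attach a pendant vertex at c
    have hT2 := pendant_isTree T1 c hT1
    have hpos2 := pw_pos w1 hw1 c α hαpos
    refine ⟨Option V1, inferInstance, pendant T1 c, hT2, pw w1 c α,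
      fun t => if h : t = x then none else some (ι1 ⟨t, h⟩), ?_, hpos2, ?_⟩
    · intro t1 t2 heq
      dsimp only at heq
      by_cases h1 : t1 = x <;> by_cases h2 : t2 = x
      · rw [h1, h2]
      · rw [dif_pos h1, dif_neg h2] at heq
        exact nomatch heq
      · rw [dif_neg h1, dif_pos h2] at heq
        exact nomatch heq
      · rw [dif_neg h1, dif_neg h2] at heq
        exact congrArg Subtype.val (hinj (Option.some_injective _ heq))
    · intro t1 t2
      dsimp only
      by_cases h1 : t1 = x <;> by_cases h2 : t2 = x
      · subst h1; subst h2
        rw [dif_pos rfl, treeDist_self]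
        exact (hzero _ _).2 rfl
      · subst h1
        rw [dif_pos rfl, dif_neg h2]
        have ha := pendant_dist_none hT1 w1 hw1 c α hαpos hT2 (ι1 ⟨t2, h2⟩)
        have hb := hc ⟨t2, h2⟩
        have hcm := treeDist_comm hT1 w1 (ι1 ⟨t2, h2⟩) c
        linarith
      · subst h2
        rw [dif_neg h1, dif_pos rfl]
        have ha := pendant_dist_none hT1 w1 hw1 c α hαpos hT2 (ι1 ⟨t1, h1⟩)
        have hb := hc ⟨t1, h1⟩
        have hcm := treeDist_comm hT1 w1 (ι1 ⟨t1, h1⟩) c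
        have hc2 := treeDist_comm hT2 (pw w1 c α) (some (ι1 ⟨t1, h1⟩)) none
        have hcm2 := hcomm t1 t2
        linarith
      · rw [dif_neg h1, dif_neg h2,
          pendant_dist_some hT1 w1 hw1 c α hαpos hT2]
        exact hreal ⟨t1, h1⟩ ⟨t2, h2⟩

end TreeAux

namespace TreeAux

theorem reverse_main : ∀ (n : ℕ) (X : Type) [Fintype X] (d : X → X → ℝ),
    Fintype.card X ≤ n → IsMetricOn d →
    (∀ v w x y : X, d x y + d v w ≤ max (d x v + d y w) (d x w + d y v)) →
    RealizesOn X d := by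
  intro n
  induction n with
  | zero =>
    intro X _ d hcard hd h4
    have : IsEmpty X := Fintype.card_eq_zero_iff.1 (Nat.le_zero.1 hcard)
    exact realizes_of_zero d (fun x y => isEmptyElim x) (fun x y => isEmptyElim x)
  | succ n ih =>
    intro X _ d hcard hd h4
    by_cases hle : Fintype.card X ≤ n
    · exact ih X d hle hd h4
    have hpos : 0 < Fintype.card X := by omega
    have hXne : Nonempty X := Fintype.card_pos_iff.1 hpos
    obtain ⟨hnn, hzero, hcomm, htri⟩ := hd
    set x := Classical.arbitrary X with hxdef
    set Y := {y : X // y ≠ x} with hYdef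
    have hcardY : Fintype.card Y ≤ n := by
      have : Fintype.card Y < Fintype.card X :=
        Fintype.card_subtype_lt (x := x) (by simp)
      omega
    set dY : Y → Y → ℝ := fun u v => d u.1 v.1 with hdYdef
    have hdY : IsMetricOn dY :=
      ⟨fun u v => hnn _ _, fun u v => by
        rw [hdYdef]
        constructor
        · intro h
          exact Subtype.ext ((hzero _ _).1 h)
        · intro h
          rw [h]
          exact (hzero _ _).2 rfl,
        fun u v => hcomm _ _, fun u v z => htri _ _ _⟩
    have h4Y : ∀ v w u y : Y, dY u y + dY v w ≤ max (dY u v + dY y w) (dY u w + dY y v) :=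
      fun v w u y => h4 _ _ _ _
    obtain ⟨VY, instVY, TY, hTY, wY, ιY, hinjY, hwY, hdistY0⟩ := ih Y dY hcardY hdY h4Y
    have hdistY : ∀ u v : Y, d u.1 v.1 = treeDist TY hTY wY (ιY u) (ιY v) := hdistY0
    rcases isEmpty_or_nonempty Y with hYe | hYne
    · -- X is a singleton
      have hall : ∀ z : X, z = x := by
        intro z
        by_contra h
        exact hYe.false (⟨z, h⟩ : Y)
      refine realizes_of_zero d (fun z1 z2 => ?_) (fun z1 z2 => (hall z1).trans (hall z2).symm)
      rw [hall z1, hall z2]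
      exact (hzero x x).2 rfl
    · -- choose the minimizing pair (Gromov products at x)
      obtain ⟨pr, _, hminpr⟩ := (Finset.univ : Finset (Y × Y)).exists_min_image
        (fun pr => d x pr.1.1 + d x pr.2.1 - d pr.1.1 pr.2.1)
        ⟨(Classical.arbitrary Y, Classical.arbitrary Y), Finset.mem_univ _⟩
      set y0 := pr.1 with hy0
      set z0 := pr.2 with hz0
      have hmin : ∀ u v : Y, d x y0.1 + d x z0.1 - d y0.1 z0.1
          ≤ d x u.1 + d x v.1 - d u.1 v.1 := by
        intro u v
        have := hminpr (u, v) (Finset.mem_univ _)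
        simpa using this
      set α : ℝ := (d x y0.1 + d x z0.1 - d y0.1 z0.1) / 2 with hαdef
      set β : ℝ := d x y0.1 - α with hβdef
      set L : ℝ := d y0.1 z0.1 with hLdef
      have hα0 : 0 ≤ α := by
        have := htri y0.1 z0.1 x
        have hc1 := hcomm y0.1 x
        have hc2 := hcomm z0.1 x
        rw [hαdef]
        linarith
      have hβ0 : 0 ≤ β := by
        have := htri x z0.1 y0.1
        have hc1 := hcomm z0.1 y0.1
        rw [hβdef, hαdef]
        linarith
      have hβL : β ≤ L := by
        have := htri x y0.1 z0.1
        have hc1 := hcomm y0.1 z0.1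
        rw [hβdef, hαdef, hLdef]
        linarith
      -- the key consequence of the four-point condition
      have key : ∀ u : Y, max (d u.1 y0.1 - β) (d u.1 z0.1 - (L - β)) = d x u.1 - α := by
        intro u
        have hA : α ≤ (d x y0.1 + d x u.1 - d y0.1 u.1) / 2 := by
          have := hmin y0 u
          rw [hαdef]
          linarith
        have hB : α ≤ (d x z0.1 + d x u.1 - d z0.1 u.1) / 2 := by
          have := hmin z0 u
          rw [hαdef]
          linarith
        have h4i := h4 y0.1 z0.1 x u.1
        have hcy := hcomm u.1 y0.1
        have hcz := hcomm u.1 z0.1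
        apply le_antisymm
        · apply max_le
          · rw [hβdef, hαdef]
            linarith
          · rw [hβdef, hαdef, hLdef]
            linarith
        · rcases le_max_iff.1 h4i with hcase | hcase
          · refine le_max_of_le_right ?_
            rw [hβdef, hαdef, hLdef]
            linarith
          · refine le_max_of_le_left ?_
            rw [hβdef, hαdef]
            linarith
      -- locate the attachment point in the tree for Y
      have hLY : treeDist TY hTY wY (ιY y0) (ιY z0) = L := (hdistY y0 z0).symm
      rcases walk_find hTY wY hwY (ιY y0) (ιY z0) β hβ0 (by rw [hLY]; exact hβL)
        with ⟨c, hbtw, hyc⟩ | ⟨a, b, hab2, hbtwa, hbtwb, hlt1, hlt2, hyb⟩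
      · -- the attachment point is an existing vertex c
        have hcform : ∀ u : Y, treeDist TY hTY wY (ιY u) c = d x u.1 - α := by
          intro u
          have hseg := seg_formula hTY wY hwY hbtw (ιY u)
          rw [hyc, hLY, ← hdistY u y0, ← hdistY u z0] at hseg
          rw [hseg]
          exact key u
        exact lift_realization x d ⟨hnn, hzero, hcomm, htri⟩ hTY wY hwY ιY hinjY
          hdistY c α hα0 hcform
      · -- subdivide the edge s(a,b)
        set βloc : ℝ := β - treeDist TY hTY wY (ιY y0) a with hβloc
        have h0loc : 0 < βloc := by rw [hβloc]; linarith
        have h1loc : βloc < wY s(a, b) := by rw [hβloc]; linarith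
        have hT2 := subdiv_isTree hTY hab2
        have hpos2 := sw_pos wY hwY hab2 h0loc h1loc
        have hsome := subdiv_dist_some hTY wY hwY hab2 h0loc h1loc hT2
        obtain ⟨hna, hnb⟩ := subdiv_dist_none hTY wY hwY hab2 h0loc h1loc hT2
        set w2 := sw wY a b βloc with hw2
        set T2 := subdiv TY a b with hT2def
        -- establish that `none` lies between ιY y0 and ιY z0 at distance β
        have tri1 := treeDist_triangle hT2 w2 hpos2 (some (ιY y0)) (some a) none
        have tri2 := treeDist_triangle hT2 w2 hpos2 none (some b) (some (ιY z0))
        have tri3 := treeDist_triangle hT2 w2 hpos2 (some (ιY y0)) none (some (ιY z0))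
        have ca := treeDist_comm hT2 w2 (some a) (none : Option VY)
        have hya := hsome (ιY y0) a
        have hyb2 := hsome (ιY y0) b
        have hbz2 := hsome b (ιY z0)
        have hyz2 := hsome (ιY y0) (ιY z0)
        have hdbz : treeDist TY hTY wY b (ιY z0) = L - treeDist TY hTY wY (ιY y0) b := by
          rw [hLY] at hbtwb
          linarith
        have hd1 : treeDist T2 hT2 w2 (some (ιY y0)) none ≤ β := by
          rw [hβloc] at *
          linarith
        have hd2 : treeDist T2 hT2 w2 none (some (ιY z0)) ≤ L - β := by
          rw [hβloc] at *
          linarith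
        have hd3 : treeDist T2 hT2 w2 (some (ιY y0)) (some (ιY z0)) = L := by
          rw [hyz2, hLY]
        have hby : treeDist T2 hT2 w2 (some (ιY y0)) none = β := by linarith
        have hbz : treeDist T2 hT2 w2 none (some (ιY z0)) = L - β := by linarith
        have hbtw2 : treeDist T2 hT2 w2 (some (ιY y0)) none
            + treeDist T2 hT2 w2 none (some (ιY z0))
            = treeDist T2 hT2 w2 (some (ιY y0)) (some (ιY z0)) := by linarith
        have hcform : ∀ u : Y, treeDist T2 hT2 w2 (some (ιY u)) none = d x u.1 - α := by
          intro u
          have hseg := seg_formula hT2 w2 hpos2 hbtw2 (some (ιY u))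
          rw [hby, hd3, hsome (ιY u) (ιY y0), hsome (ιY u) (ιY z0),
            ← hdistY u y0, ← hdistY u z0] at hseg
          rw [hseg]
          exact key u
        refine lift_realization x d ⟨hnn, hzero, hcomm, htri⟩ hT2 w2 hpos2
          (fun u => some (ιY u)) (fun u v huv => hinjY (Option.some_injective _ huv))
          (fun u v => by rw [hdistY u v, hsome]) none α hα0 hcform

end TreeAux

/-- A metric `d` on a finite set `X` is a tree metric (realized by path
distances in some finite, positively weighted tree containing `X` among its nodes) if and
only if the four-point condition holds:
`d(x,y) + d(v,w) ≤ max (d(x,v) + d(y,w)) (d(x,w) + d(y,v))` for all `v w x y ∈ X`. -/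
theorem tree_metric_iff_four_point {X : Type} [Fintype X]
    (d : X → X → ℝ) (hd : IsMetricOn d) :
    (∃ (V : Type) (_ : Fintype V) (T : SimpleGraph V) (hT : T.IsTree)
        (w : Sym2 V → ℝ) (ι : X → V),
      Function.Injective ι ∧ (∀ e ∈ T.edgeSet, 0 < w e) ∧
      ∀ x y, d x y = treeDist T hT w (ι x) (ι y)) ↔
    (∀ v w x y : X, d x y + d v w ≤ max (d x v + d y w) (d x w + d y v)) := by
  constructor
  · rintro ⟨V, instV, T, hT, w, ι, hinj, hw, hdist⟩ v w' x y
    rw [hdist x y, hdist v w', hdist x v, hdist y w', hdist x w', hdist y v]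
    exact TreeAux.four_point hT w hw (ι x) (ι y) (ι v) (ι w')
  · intro h4
    exact TreeAux.reverse_main (Fintype.card X) X d le_rfl hd h4
end

section
/- A metric d on a set X is an ultrametric (satisfies d(x,y) ≤ max{d(x,z), d(y,z)} for all x, y, z) if and only if it is realized as the leaf-to-leaf path distance in a rooted positively-weighted tree whose leaves are X and in which every root-to-leaf path has the same total weight. -/
open scoped Classical

namespace EquiTree

open SimpleGraph Walk

variable {V : Type*} {T : SimpleGraph V}

/-- weighted length of a walk -/
def wlen (w : Sym2 V → ℝ) {u v : V} (p : T.Walk u v) : ℝ := (p.edges.map w).sum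

lemma wlen_append (w : Sym2 V → ℝ) {u v x : V} (p : T.Walk u v) (q : T.Walk v x) :
    wlen w (p.append q) = wlen w p + wlen w q := by
  simp [wlen, Walk.edges_append]

lemma wlen_reverse (w : Sym2 V → ℝ) {u v : V} (p : T.Walk u v) :
    wlen w p.reverse = wlen w p := by
  simp [wlen, Walk.edges_reverse, List.sum_reverse]

lemma wlen_copy (w : Sym2 V → ℝ) {u v u' v' : V} (p : T.Walk u v) (hu : u = u')
    (hv : v = v') : wlen w (p.copy hu hv) = wlen w p := by
  subst hu; subst hv; rfl

lemma wlen_nonneg {w : Sym2 V → ℝ} (hw : ∀ e ∈ T.edgeSet, 0 ≤ w e) {u v : V}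
    (p : T.Walk u v) : 0 ≤ wlen w p := by
  apply List.sum_nonneg
  rintro a ha
  obtain ⟨e, he, rfl⟩ := List.mem_map.1 ha
  exact hw e (p.edges_subset_edgeSet he)

lemma wlen_pos {w : Sym2 V → ℝ} (hw : ∀ e ∈ T.edgeSet, 0 < w e) {u v : V}
    (p : T.Walk u v) (huv : u ≠ v) : 0 < wlen w p := by
  cases p with
  | nil => exact absurd rfl huv
  | cons h q =>
    have h1 : 0 < w s(u, _) := hw _ h
    have h2 : 0 ≤ wlen w q := wlen_nonneg (fun e he => (hw e he).le) q
    simpa [wlen] using add_pos_of_pos_of_nonneg h1 h2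

variable (hT : T.IsTree)

lemma treeDist_eq (w : Sym2 V → ℝ) {u v : V} (p : T.Walk u v) (hp : p.IsPath) :
    treeDist T hT w u v = wlen w p := by
  have h := hT.existsUnique_path u v
  have he : h.exists.choose = p := h.unique h.exists.choose_spec hp
  rw [treeDist, he]; rfl

/-- the canonical path between two vertices -/
noncomputable def pth (u v : V) : T.Walk u v := (hT.existsUnique_path u v).exists.choose

lemma pth_isPath (u v : V) : (pth hT u v).IsPath := (hT.existsUnique_path u v).exists.choose_spec

lemma pth_unique {u v : V} (p : T.Walk u v) (hp : p.IsPath) : p = pth hT u v :=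
  (hT.existsUnique_path u v).unique hp (pth_isPath hT u v)

lemma treeDist_self (w : Sym2 V → ℝ) (u : V) : treeDist T hT w u u = 0 := by
  rw [treeDist_eq hT w Walk.nil (by simp)]; simp [wlen]

lemma treeDist_comm (w : Sym2 V → ℝ) (u v : V) :
    treeDist T hT w u v = treeDist T hT w v u := by
  rw [treeDist_eq hT w (pth hT v u).reverse ((pth_isPath hT v u).reverse),
    wlen_reverse, treeDist_eq hT w (pth hT v u) (pth_isPath hT v u)]

lemma treeDist_nonneg {w : Sym2 V → ℝ} (hw : ∀ e ∈ T.edgeSet, 0 ≤ w e) (u v : V) :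
    0 ≤ treeDist T hT w u v := by
  rw [treeDist_eq hT w (pth hT u v) (pth_isPath hT u v)]
  exact wlen_nonneg hw _

lemma treeDist_pos {w : Sym2 V → ℝ} (hw : ∀ e ∈ T.edgeSet, 0 < w e) {u v : V} (h : u ≠ v) :
    0 < treeDist T hT w u v := by
  rw [treeDist_eq hT w (pth hT u v) (pth_isPath hT u v)]
  exact wlen_pos hw _ h

lemma treeDist_add_of_mem (w : Sym2 V → ℝ) {x r v : V} {p : T.Walk x r} (hp : p.IsPath)
    (hv : v ∈ p.support) :
    treeDist T hT w x r = treeDist T hT w x v + treeDist T hT w v r := by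
  rw [treeDist_eq hT w p hp, ← p.take_spec hv, wlen_append,
    treeDist_eq hT w (p.takeUntil v hv) (hp.takeUntil hv),
    treeDist_eq hT w (p.dropUntil v hv) (hp.dropUntil hv)]

lemma exists_split (S : Set V) {x r : V} (p : T.Walk x r) (hp : r ∈ S) :
    ∃ (m : V) (q1 : T.Walk x m) (q2 : T.Walk m r), q1.append q2 = p ∧ m ∈ S ∧
      ∀ v ∈ q1.support, v ∈ S → v = m := by
  induction p with
  | @nil u => exact ⟨u, .nil, .nil, rfl, hp, by intro v hv _; simpa using hv⟩
  | @cons a b c h q ih =>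
    by_cases ha : a ∈ S
    · refine ⟨a, .nil, .cons h q, rfl, ha, ?_⟩
      intro v hv _
      simpa using hv
    · obtain ⟨m, q1, q2, happ, hm, hfirst⟩ := ih hp
      refine ⟨m, .cons h q1, q2, by rw [Walk.cons_append, happ], hm, ?_⟩
      intro v hv hvS
      rcases List.mem_cons.1 (by simpa [Walk.support_cons] using hv) with rfl | hv'
      · exact absurd hvS ha
      · exact hfirst v hv' hvS


lemma isPath_append_reverse {x m y : V} {q1 : T.Walk x m} {A : T.Walk y m}
    (hq1 : q1.IsPath) (hA : A.IsPath)
    (hdisj : ∀ v ∈ q1.support, v ∈ A.support → v = m) :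
    (q1.append A.reverse).IsPath := by
  rw [Walk.isPath_def, Walk.support_append]
  have hArev : A.reverse.support.Nodup := hA.reverse.support_nodup
  refine List.Nodup.append hq1.support_nodup
    ((List.tail_sublist _).nodup hArev) ?_
  intro v hv hv'
  have hv2 : v ∈ A.reverse.support := List.mem_of_mem_tail hv'
  have hvm : v = m := hdisj v hv (by rwa [Walk.support_reverse, List.mem_reverse] at hv2)
  subst hvm
  have : A.reverse.support = v :: A.reverse.support.tail := Walk.support_eq_cons _
  rw [this] at hArev
  exact (List.nodup_cons.1 hArev).1 hv'

lemma exists_meet (w : Sym2 V → ℝ) (hw : ∀ e ∈ T.edgeSet, 0 ≤ w e) (x y r : V) :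
    ∃ m : V,
      treeDist T hT w x y = treeDist T hT w x m + treeDist T hT w m y ∧
      treeDist T hT w x r = treeDist T hT w x m + treeDist T hT w m r ∧
      treeDist T hT w y r = treeDist T hT w y m + treeDist T hT w m r ∧
      m ∈ (pth hT x r).support ∧ m ∈ (pth hT y r).support ∧
      ∀ v, v ∈ (pth hT x r).support → v ∈ (pth hT y r).support →
        treeDist T hT w v r ≤ treeDist T hT w m r := by
  obtain ⟨m, q1, q2, happ, hm, hfirst⟩ :=
    exists_split (S := {v | v ∈ (pth hT y r).support}) (pth hT x r) (Walk.end_mem_support _)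
  have hq12 : (q1.append q2).IsPath := by rw [happ]; exact pth_isPath hT x r
  have hq1 : q1.IsPath := hq12.of_append_left
  have hq2 : q2.IsPath := hq12.of_append_right
  have hmx : m ∈ (pth hT x r).support := by
    rw [← happ, Walk.mem_support_append_iff]
    exact Or.inl (Walk.end_mem_support q1)
  have hmy : m ∈ (pth hT y r).support := hm
  have e1 : treeDist T hT w x r = treeDist T hT w x m + treeDist T hT w m r :=
    treeDist_add_of_mem hT w (pth_isPath hT x r) hmx
  have e2 : treeDist T hT w y r = treeDist T hT w y m + treeDist T hT w m r :=
    treeDist_add_of_mem hT w (pth_isPath hT y r) hmy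
  have hA : ((pth hT y r).takeUntil m hmy).IsPath := (pth_isPath hT y r).takeUntil hmy
  have hdisj : ∀ v ∈ q1.support, v ∈ ((pth hT y r).takeUntil m hmy).support → v = m := by
    intro v hv hv'
    exact hfirst v hv (Walk.support_takeUntil_subset _ hmy hv')
  have hP : (q1.append ((pth hT y r).takeUntil m hmy).reverse).IsPath :=
    isPath_append_reverse hq1 hA hdisj
  have e3 : treeDist T hT w x y = treeDist T hT w x m + treeDist T hT w m y := by
    rw [treeDist_eq hT w _ hP, wlen_append, wlen_reverse,
      ← treeDist_eq hT w q1 hq1, ← treeDist_eq hT w _ hA, treeDist_comm hT w y m]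
  refine ⟨m, e3, e1, e2, hmx, hmy, ?_⟩
  intro v hvx hvy
  have hvx' : v ∈ q1.support ∨ v ∈ q2.support := by
    rw [← Walk.mem_support_append_iff, happ]; exact hvx
  rcases hvx' with h1 | h2
  · rw [hfirst v h1 hvy]
  · have := treeDist_add_of_mem hT w hq2 h2
    have h0 : 0 ≤ treeDist T hT w m v := treeDist_nonneg hT hw m v
    linarith

lemma treeDist_chain (w : Sym2 V → ℝ) {c r v1 v2 : V} {q : T.Walk c r} (hq : q.IsPath)
    (h2 : v2 ∈ q.support) (h1 : v1 ∈ (q.takeUntil v2 h2).support) :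
    treeDist T hT w v1 r = treeDist T hT w v1 v2 + treeDist T hT w v2 r := by
  have hq' : (((q.takeUntil v2 h2).dropUntil v1 h1).append (q.dropUntil v2 h2)).IsPath := by
    have heq : ((q.takeUntil v2 h2).takeUntil v1 h1).append
        (((q.takeUntil v2 h2).dropUntil v1 h1).append (q.dropUntil v2 h2)) = q := by
      rw [Walk.append_assoc, Walk.take_spec, Walk.take_spec]
    have : (((q.takeUntil v2 h2).takeUntil v1 h1).append
        (((q.takeUntil v2 h2).dropUntil v1 h1).append (q.dropUntil v2 h2))).IsPath := by
      rw [heq]; exact hq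
    exact this.of_append_right
  rw [treeDist_eq hT w _ hq', wlen_append,
    ← treeDist_eq hT w _ ((hq.takeUntil h2).dropUntil h1),
    ← treeDist_eq hT w _ (hq.dropUntil h2)]

lemma tree_ultra {w : Sym2 V → ℝ} (hw : ∀ e ∈ T.edgeSet, 0 < w e) (r : V) {h : ℝ}
    (a b c : V) (hha : treeDist T hT w r a = h) (hhb : treeDist T hT w r b = h)
    (hhc : treeDist T hT w r c = h) :
    treeDist T hT w a b ≤ max (treeDist T hT w a c) (treeDist T hT w b c) := by
  have hw0 : ∀ e ∈ T.edgeSet, 0 ≤ w e := fun e he => (hw e he).le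
  obtain ⟨m1, f1, f1a, f1b, hm1a, hm1b, hmax1⟩ := exists_meet hT w hw0 a b r
  obtain ⟨m2, f2, f2a, f2c, hm2a, hm2c, -⟩ := exists_meet hT w hw0 a c r
  obtain ⟨m3, f3, f3b, f3c, hm3b, hm3c, -⟩ := exists_meet hT w hw0 b c r
  have ha' : treeDist T hT w a r = h := by rw [treeDist_comm]; exact hha
  have hb' : treeDist T hT w b r = h := by rw [treeDist_comm]; exact hhb
  have hc' : treeDist T hT w c r = h := by rw [treeDist_comm]; exact hhc
  -- key claim: ∃ common vertex of pth a r, pth b r whose distance to r is that of m2 or m3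
  have key : treeDist T hT w m2 r ≤ treeDist T hT w m1 r ∨
      treeDist T hT w m3 r ≤ treeDist T hT w m1 r := by
    have hq := pth_isPath hT c r
    have hcase : m2 ∈ ((pth hT c r).takeUntil m3 hm3c).support ∨
        m2 ∈ ((pth hT c r).dropUntil m3 hm3c).support := by
      rw [← Walk.mem_support_append_iff, Walk.take_spec]; exact hm2c
    rcases hcase with hcase | hcase
    · have hcase2 : m3 ∈ ((pth hT c r).takeUntil m2 hm2c).support ∨
          m3 ∈ ((pth hT c r).dropUntil m2 hm2c).support := by
        rw [← Walk.mem_support_append_iff, Walk.take_spec]; exact hm3c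
      rcases hcase2 with hcase2 | hcase2
      · -- both before each other: m2 = m3
        have e23 := treeDist_chain hT w hq hm3c hcase
        have e32 := treeDist_chain hT w hq hm2c hcase2
        by_cases hmm : m2 = m3
        · subst hmm
          right
          exact hmax1 m2 hm2a hm3b
        · have p1 : 0 < treeDist T hT w m2 m3 := treeDist_pos hT hw hmm
          have p2 : 0 ≤ treeDist T hT w m3 m2 := treeDist_nonneg hT hw0 _ _
          linarith
      · -- m3 in the suffix from m2 : m3 ∈ pth a r
        have hd : ((pth hT c r).dropUntil m2 hm2c).IsPath := hq.dropUntil hm2c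
        have h1 : (pth hT c r).dropUntil m2 hm2c = pth hT m2 r := pth_unique hT _ hd
        have h2 : (pth hT a r).dropUntil m2 hm2a = pth hT m2 r :=
          pth_unique hT _ ((pth_isPath hT a r).dropUntil hm2a)
        have hm3a : m3 ∈ (pth hT a r).support := by
          apply Walk.support_dropUntil_subset (pth hT a r) hm2a
          rw [h2, ← h1]; exact hcase2
        right
        exact hmax1 m3 hm3a hm3b
    · -- m2 in the suffix from m3 : m2 ∈ pth b r
      have hd : ((pth hT c r).dropUntil m3 hm3c).IsPath := hq.dropUntil hm3c
      have h1 : (pth hT c r).dropUntil m3 hm3c = pth hT m3 r := pth_unique hT _ hd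
      have h2 : (pth hT b r).dropUntil m3 hm3b = pth hT m3 r :=
        pth_unique hT _ ((pth_isPath hT b r).dropUntil hm3b)
      have hm2b : m2 ∈ (pth hT b r).support := by
        apply Walk.support_dropUntil_subset (pth hT b r) hm3b
        rw [h2, ← h1]; exact hcase
      left
      exact hmax1 m2 hm2a hm2b
  have c1 := treeDist_comm hT w m1 b
  have c2 := treeDist_comm hT w m2 c
  have c3 := treeDist_comm hT w m3 c
  rcases key with key | key
  · refine le_trans ?_ (le_max_left _ _)
    linarith
  · refine le_trans ?_ (le_max_right _ _)
    linarith

end EquiTree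

namespace UltraFwd

open SimpleGraph

set_option linter.unusedSectionVars false

variable {X : Type} [Fintype X] [Nontrivial X] (d : X → X → ℝ)

/-- the set of half-distances, used as the heights of the dendrogram -/
noncomputable def levels : Finset ℝ := Finset.image (fun p : X × X => d p.1 p.2 / 2) Finset.univ

noncomputable def nl : ℕ := (levels d).card

noncomputable def lvl (i : Fin (nl d)) : ℝ := (levels d).orderEmbOfFin rfl i

lemma lvl_strictMono : StrictMono (lvl d) := ((levels d).orderEmbOfFin rfl).strictMono

lemma lvl_mem (i : Fin (nl d)) : lvl d i ∈ levels d := Finset.orderEmbOfFin_mem _ rfl i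

lemma half_mem (x y : X) : d x y / 2 ∈ levels d :=
  Finset.mem_image.2 ⟨(x, y), Finset.mem_univ _, rfl⟩

lemma exists_lvl {t : ℝ} (ht : t ∈ levels d) : ∃ i, lvl d i = t := by
  have h2 : t ∈ Set.range ((levels d).orderEmbOfFin rfl) := by
    rw [Finset.range_orderEmbOfFin]; exact ht
  exact h2

lemma nl_pos : 0 < nl d :=
  Finset.card_pos.2 ⟨_, half_mem d (Classical.arbitrary X) (Classical.arbitrary X)⟩

variable (hd : IsMetricOn d)
include hd

lemma lvl_nonneg (i : Fin (nl d)) : 0 ≤ lvl d i := by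
  obtain ⟨p, -, h⟩ := Finset.mem_image.1 (lvl_mem d i)
  rw [← h]
  linarith [hd.1 p.1 p.2]

lemma zero_mem : (0 : ℝ) ∈ levels d := by
  have h := half_mem d (Classical.arbitrary X) (Classical.arbitrary X)
  rwa [(hd.2.1 _ _).2 rfl, zero_div] at h

lemma lvl_zero : lvl d ⟨0, nl_pos d⟩ = 0 := by
  refine le_antisymm ?_ (lvl_nonneg d hd _)
  obtain ⟨i, hi⟩ := exists_lvl d (zero_mem d hd)
  rw [← hi]
  exact ((lvl_strictMono d).monotone (by rw [Fin.le_def]; exact Nat.zero_le _))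

noncomputable def top : Fin (nl d) := ⟨nl d - 1, by have := nl_pos d; omega⟩

lemma lvl_le_top (i : Fin (nl d)) : lvl d i ≤ lvl d (top d) :=
  (lvl_strictMono d).monotone (by rw [Fin.le_def]; have := i.2; simp [top]; omega)

lemma le_lvl_top {t : ℝ} (ht : t ∈ levels d) : t ≤ lvl d (top d) := by
  obtain ⟨i, rfl⟩ := exists_lvl d ht
  exact lvl_le_top d hd i

lemma one_lt_nl : 1 < nl d := by
  obtain ⟨a, b, hab⟩ := exists_pair_ne X
  refine Finset.one_lt_card.2 ⟨0, zero_mem d hd, d a b / 2, half_mem d a b, ?_⟩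
  intro h
  exact hab ((hd.2.1 a b).1 (by linarith))

variable (hu : ∀ x y z, d x y ≤ max (d x z) (d y z))
include hu

def st : Setoid (X × Fin (nl d)) where
  r a b := a.2 = b.2 ∧ d a.1 b.1 ≤ 2 * lvl d a.2
  iseqv := by
    constructor
    · intro a
      refine ⟨rfl, ?_⟩
      rw [(hd.2.1 _ _).2 rfl]
      linarith [lvl_nonneg d hd a.2]
    · rintro a b ⟨h1, h2⟩
      exact ⟨h1.symm, by rw [hd.2.2.1 b.1 a.1, ← h1]; exact h2⟩
    · rintro a b c ⟨h1, h2⟩ ⟨h3, h4⟩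
      refine ⟨h1.trans h3, ?_⟩
      calc d a.1 c.1 ≤ max (d a.1 b.1) (d c.1 b.1) := hu _ _ _
        _ ≤ 2 * lvl d a.2 := max_le h2 (by rw [hd.2.2.1 c.1 b.1, h1]; rw [h1] at h2; exact h4)

def QV := Quotient (st d hd hu)

def mkV (x : X) (i : Fin (nl d)) : QV d hd hu := Quotient.mk _ (x, i)

lemma mkV_eq {x y : X} {i j : Fin (nl d)} :
    mkV d hd hu x i = mkV d hd hu y j ↔ i = j ∧ d x y ≤ 2 * lvl d i :=
  ⟨fun h => Quotient.exact h, fun h => Quotient.sound h⟩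

def lev : QV d hd hu → Fin (nl d) := Quotient.lift (fun a => a.2) (fun _ _ h => h.1)

@[simp] lemma lev_mkV (x : X) (i : Fin (nl d)) : lev d hd hu (mkV d hd hu x i) = i := rfl

def TG : SimpleGraph (QV d hd hu) where
  Adj a b := ∃ (x : X) (i j : Fin (nl d)), (j : ℕ) = (i : ℕ) + 1 ∧
    ((a = mkV d hd hu x i ∧ b = mkV d hd hu x j) ∨ (a = mkV d hd hu x j ∧ b = mkV d hd hu x i))
  symm := by
    constructor
    rintro a b ⟨x, i, j, hij, h | h⟩
    exacts [⟨x, i, j, hij, Or.inr ⟨h.2, h.1⟩⟩, ⟨x, i, j, hij, Or.inl ⟨h.2, h.1⟩⟩]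
  loopless := by
    constructor
    rintro a ⟨x, i, j, hij, ⟨h1, h2⟩ | ⟨h1, h2⟩⟩ <;>
    · rw [h1] at h2
      have := (mkV_eq d hd hu).1 h2
      have := congrArg (Fin.val) this.1
      omega

lemma adj_up (x : X) (i j : Fin (nl d)) (hij : (j : ℕ) = (i : ℕ) + 1) :
    (TG d hd hu).Adj (mkV d hd hu x i) (mkV d hd hu x j) :=
  ⟨x, i, j, hij, Or.inl ⟨rfl, rfl⟩⟩

lemma adj_lev {a b : QV d hd hu} (h : (TG d hd hu).Adj a b) :
    ((lev d hd hu b) : ℕ) = (lev d hd hu a) + 1 ∨ ((lev d hd hu a) : ℕ) = (lev d hd hu b) + 1 := by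
  obtain ⟨x, i, j, hij, ⟨h1, h2⟩ | ⟨h1, h2⟩⟩ := h <;> subst h1 <;> subst h2 <;> simp [hij]

lemma parent_eq {x : X} {i : Fin (nl d)} {c : QV d hd hu}
    (h : (TG d hd hu).Adj (mkV d hd hu x i) c) {hlt : (i : ℕ) + 1 < nl d}
    (hc : ((lev d hd hu c) : ℕ) = (i : ℕ) + 1) :
    c = mkV d hd hu x ⟨(i : ℕ) + 1, hlt⟩ := by
  obtain ⟨y, i', j', hj', ⟨h1, h2⟩ | ⟨h1, h2⟩⟩ := h
  · obtain ⟨hii, hdxy⟩ := (mkV_eq d hd hu).1 h1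
    subst h2
    have hj : (j' : ℕ) = (i : ℕ) + 1 := by simpa using hc
    refine (mkV_eq d hd hu).2 ⟨Fin.ext (by simp [hj]), ?_⟩
    have hmono : lvl d i ≤ lvl d j' := (lvl_strictMono d).monotone (by rw [Fin.le_def]; omega)
    have hsym : d y x = d x y := hd.2.2.1 y x
    linarith
  · exfalso
    have h3 := congrArg Fin.val ((mkV_eq d hd hu).1 h1).1
    subst h2
    have h4 : (i' : ℕ) = (i : ℕ) + 1 := by simpa using hc
    omega

lemma reach_top (x : X) (i : Fin (nl d)) :
    (TG d hd hu).Reachable (mkV d hd hu x i) (mkV d hd hu x (top d)) := by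
  obtain ⟨k, hk⟩ : ∃ k, (i : ℕ) + k = nl d - 1 := ⟨nl d - 1 - i, by have := i.2; omega⟩
  induction k generalizing i with
  | zero =>
    have : i = top d := Fin.ext (by simp [top]; omega)
    rw [this]
  | succ k ih =>
    have h1 : (i : ℕ) + 1 < nl d := by have := nl_pos d; omega
    exact ((adj_up d hd hu x i ⟨(i : ℕ) + 1, h1⟩ rfl).reachable).trans
      (ih ⟨(i : ℕ) + 1, h1⟩ (by simp; omega))

lemma top_eq (x y : X) : mkV d hd hu x (top d) = mkV d hd hu y (top d) :=
  (mkV_eq d hd hu).2 ⟨rfl, by have := le_lvl_top d hd (half_mem d x y); linarith⟩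

lemma TG_connected : (TG d hd hu).Connected := by
  rw [SimpleGraph.connected_iff]
  constructor
  · intro a b
    obtain ⟨⟨x, i⟩, rfl⟩ := Quotient.exists_rep a
    obtain ⟨⟨y, j⟩, rfl⟩ := Quotient.exists_rep b
    have h1 := reach_top d hd hu x i
    have h2 := (reach_top d hd hu y j).symm
    rw [← top_eq d hd hu x y] at h2
    exact h1.trans h2
  · exact ⟨mkV d hd hu (Classical.arbitrary X) (top d)⟩

noncomputable def wt : Sym2 (QV d hd hu) → ℝ :=
  Sym2.lift ⟨fun a b => |lvl d (lev d hd hu a) - lvl d (lev d hd hu b)|,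
    fun a b => abs_sub_comm _ _⟩

lemma wt_pos : ∀ e ∈ (TG d hd hu).edgeSet, 0 < wt d hd hu e := by
  intro e he
  induction e with
  | _ a b =>
    rw [SimpleGraph.mem_edgeSet] at he
    have hlev := adj_lev d hd hu he
    have hne : lvl d (lev d hd hu a) ≠ lvl d (lev d hd hu b) := by
      intro hEq
      have := congrArg Fin.val ((lvl_strictMono d).injective hEq)
      omega
    exact abs_pos.2 (sub_ne_zero.2 hne)

lemma parent_unique {a c1 c2 : QV d hd hu} (h1 : (TG d hd hu).Adj a c1)
    (h2 : (TG d hd hu).Adj a c2)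
    (hl1 : ((lev d hd hu c1) : ℕ) = (lev d hd hu a : ℕ) + 1)
    (hl2 : ((lev d hd hu c2) : ℕ) = (lev d hd hu a : ℕ) + 1) : c1 = c2 := by
  obtain ⟨⟨x, i⟩, rfl⟩ := Quotient.exists_rep a
  have hl1' : ((lev d hd hu c1) : ℕ) = (i : ℕ) + 1 := hl1
  have hl2' : ((lev d hd hu c2) : ℕ) = (i : ℕ) + 1 := hl2
  have hlt : (i : ℕ) + 1 < nl d := hl1' ▸ (lev d hd hu c1).2
  have e1 := parent_eq d hd hu (x := x) (i := i) h1 (hlt := hlt) hl1'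
  have e2 := parent_eq d hd hu (x := x) (i := i) h2 (hlt := hlt) hl2'
  exact e1.trans e2.symm

lemma TG_acyclic : (TG d hd hu).IsAcyclic := by
  intro v c hc
  classical
  have hlen3 := hc.three_le_length
  have hlsup : c.support.length = c.length + 1 := SimpleGraph.Walk.length_support c
  have hne : c.support.tail ≠ [] := by
    intro h
    have h7 := congrArg List.length h
    rw [List.length_tail] at h7
    simp only [List.length_nil] at h7
    omega
  obtain ⟨u, hu_arg0⟩ :
      ∃ u, List.argmin (fun v => (lev d hd hu v : ℕ)) c.support.tail = some u := by
    cases h : List.argmin (fun v => (lev d hd hu v : ℕ)) c.support.tail with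
    | none => exact absurd (List.argmin_eq_none.1 h) hne
    | some u => exact ⟨u, rfl⟩
  have hu_arg : u ∈ List.argmin (fun v => (lev d hd hu v : ℕ)) c.support.tail :=
    Option.mem_def.2 hu_arg0
  have hu_mem : u ∈ c.support.tail := List.argmin_mem hu_arg
  have hu_min : ∀ a ∈ c.support.tail, (lev d hd hu u : ℕ) ≤ (lev d hd hu a : ℕ) :=
    fun a ha => List.le_of_mem_argmin (f := fun v => (lev d hd hu v : ℕ)) ha hu_arg
  have hu_sup : u ∈ c.support := List.mem_of_mem_tail hu_mem
  have hc' := hc.rotate hu_sup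
  set c' := c.rotate u hu_sup with hc'def
  have hrot := SimpleGraph.Walk.support_rotate c u hu_sup
  have hmemrot : ∀ a, a ∈ c'.support.tail → a ∈ c.support.tail := fun a ha =>
    (hrot.mem_iff).1 ha
  have hnil : ¬ c'.Nil := hc'.isCircuit.not_nil
  obtain ⟨b, hab, q, hq⟩ := SimpleGraph.Walk.not_nil_iff.1 hnil
  have hnil2 : ¬ c'.reverse.Nil := by
    rw [SimpleGraph.Walk.not_nil_iff_lt_length, SimpleGraph.Walk.length_reverse]
    have := hc'.three_le_length
    omega
  obtain ⟨b2, hab2, q2, hq2⟩ := SimpleGraph.Walk.not_nil_iff.1 hnil2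
  have hb_tail : b ∈ c'.support.tail := by
    rw [hq, SimpleGraph.Walk.support_cons]
    exact SimpleGraph.Walk.start_mem_support q
  have hb2_tail : b2 ∈ c'.support.tail := by
    have h1 : b2 ∈ c'.support := by
      have h2 : b2 ∈ c'.reverse.support := by
        rw [hq2, SimpleGraph.Walk.support_cons]
        exact List.mem_cons_of_mem _ (SimpleGraph.Walk.start_mem_support q2)
      rwa [SimpleGraph.Walk.support_reverse, List.mem_reverse] at h2
    have h3 : c'.support = u :: c'.support.tail := SimpleGraph.Walk.support_eq_cons c'
    rw [h3, List.mem_cons] at h1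
    rcases h1 with h1 | h1
    · exact absurd h1.symm hab2.ne
    · exact h1
  have hbb2 : b ≠ b2 := by
    intro hEq
    subst hEq
    have hedges : c'.edges = s(u, b) :: q.edges := by rw [hq, SimpleGraph.Walk.edges_cons]
    have hrevedges : c'.edges.reverse = s(u, b) :: q2.edges := by
      rw [← SimpleGraph.Walk.edges_reverse, hq2, SimpleGraph.Walk.edges_cons]
    have h5 : c'.edges = q2.edges.reverse ++ [s(u, b)] := by
      rw [← List.reverse_reverse c'.edges, hrevedges]
      simp
    have hnd : c'.edges.Nodup := hc'.isTrail.edges_nodup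
    rw [hedges] at hnd
    have hnotmem : s(u, b) ∉ q.edges := (List.nodup_cons.1 hnd).1
    have hql : q.edges ≠ [] := by
      intro h
      have h6 : c'.edges.length = c'.length := SimpleGraph.Walk.length_edges c'
      rw [hedges, h] at h6
      simp at h6
      have := hc'.three_le_length
      omega
    have hkey : q.edges.reverse ++ [s(u, b)] = s(u, b) :: q2.edges := by
      rw [← List.reverse_cons, ← hedges, hrevedges]
    obtain ⟨e0, t, ht⟩ := List.exists_cons_of_ne_nil (l := q.edges.reverse)
      (by simpa using hql)
    rw [ht, List.cons_append] at hkey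
    have he0 : e0 = s(u, b) := by
      injection hkey with h1 h2
    have hmem : s(u, b) ∈ q.edges := by
      rw [← List.mem_reverse, ht, ← he0]
      exact List.mem_cons_self
    exact hnotmem hmem
  have hlb : (lev d hd hu u : ℕ) ≤ (lev d hd hu b : ℕ) := hu_min b (hmemrot b hb_tail)
  have hlb2 : (lev d hd hu u : ℕ) ≤ (lev d hd hu b2 : ℕ) := hu_min b2 (hmemrot b2 hb2_tail)
  have h1 := adj_lev d hd hu hab
  have h2 := adj_lev d hd hu hab2
  have hb_lev : ((lev d hd hu b) : ℕ) = (lev d hd hu u : ℕ) + 1 := by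
    rcases h1 with h1 | h1
    · exact h1
    · omega
  have hb2_lev : ((lev d hd hu b2) : ℕ) = (lev d hd hu u : ℕ) + 1 := by
    rcases h2 with h2 | h2
    · exact h2
    · omega
  exact hbb2 (parent_unique d hd hu hab hab2 hb_lev hb2_lev)

noncomputable def upW (x : X) : (k : ℕ) → (hk : k < nl d) →
    (TG d hd hu).Walk (mkV d hd hu x ⟨0, nl_pos d⟩) (mkV d hd hu x ⟨k, hk⟩)
  | 0, _ => SimpleGraph.Walk.nil
  | k + 1, hk => (upW x k (by omega)).concat (adj_up d hd hu x ⟨k, by omega⟩ ⟨k + 1, hk⟩ rfl)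

lemma upW_support (x : X) : ∀ (k : ℕ) (hk : k < nl d) (v : QV d hd hu),
    v ∈ (upW d hd hu x k hk).support ↔
      ∃ (j : ℕ) (hj : j ≤ k), v = mkV d hd hu x ⟨j, lt_of_le_of_lt hj hk⟩ := by
  intro k
  induction k with
  | zero =>
    intro hk v
    simp only [upW, SimpleGraph.Walk.support_nil, List.mem_singleton]
    constructor
    · rintro rfl; exact ⟨0, le_refl 0, rfl⟩
    · rintro ⟨j, hj, rfl⟩
      have : j = 0 := by omega
      subst this; rfl
  | succ k ih =>
    intro hk v
    rw [show upW d hd hu x (k + 1) hk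
        = (upW d hd hu x k (by omega)).concat (adj_up d hd hu x ⟨k, by omega⟩ ⟨k + 1, hk⟩ rfl)
      from rfl, SimpleGraph.Walk.support_concat, List.mem_append,
      List.mem_singleton, ih (by omega)]
    constructor
    · rintro (⟨j, hj, rfl⟩ | rfl)
      · exact ⟨j, by omega, rfl⟩
      · exact ⟨k + 1, le_refl _, rfl⟩
    · rintro ⟨j, hj, rfl⟩
      rcases Nat.lt_or_ge j (k + 1) with h | h
      · exact Or.inl ⟨j, by omega, rfl⟩
      · have : j = k + 1 := by omega
        subst this
        exact Or.inr rfl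

lemma upW_isPath (x : X) : ∀ (k : ℕ) (hk : k < nl d), (upW d hd hu x k hk).IsPath := by
  intro k
  induction k with
  | zero => intro hk; simp [upW]
  | succ k ih =>
    intro hk
    rw [show upW d hd hu x (k + 1) hk
        = (upW d hd hu x k (by omega)).concat (adj_up d hd hu x ⟨k, by omega⟩ ⟨k + 1, hk⟩ rfl)
      from rfl, SimpleGraph.Walk.isPath_def, SimpleGraph.Walk.support_concat]
    refine List.Nodup.append ((ih (by omega)).support_nodup) (List.nodup_singleton _) ?_
    intro a ha ha2
    rw [List.mem_singleton] at ha2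
    subst ha2
    obtain ⟨j, hj, hEq⟩ := (upW_support d hd hu x k (by omega) _).1 ha
    have h9 := ((mkV_eq d hd hu).1 hEq).1
    rw [Fin.mk.injEq] at h9
    omega

lemma upW_wlen (x : X) : ∀ (k : ℕ) (hk : k < nl d),
    EquiTree.wlen (wt d hd hu) (upW d hd hu x k hk)
      = lvl d ⟨k, hk⟩ - lvl d ⟨0, nl_pos d⟩ := by
  intro k
  induction k with
  | zero => intro hk; simp [upW, EquiTree.wlen]
  | succ k ih =>
    intro hk
    rw [show upW d hd hu x (k + 1) hk
        = (upW d hd hu x k (by omega)).concat (adj_up d hd hu x ⟨k, by omega⟩ ⟨k + 1, hk⟩ rfl)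
      from rfl]
    have hcon : EquiTree.wlen (wt d hd hu)
        ((upW d hd hu x k (by omega)).concat (adj_up d hd hu x ⟨k, by omega⟩ ⟨k + 1, hk⟩ rfl))
        = EquiTree.wlen (wt d hd hu) (upW d hd hu x k (by omega))
          + wt d hd hu s(mkV d hd hu x ⟨k, by omega⟩, mkV d hd hu x ⟨k + 1, hk⟩) := by
      rw [EquiTree.wlen, SimpleGraph.Walk.edges_concat, List.concat_eq_append,
        List.map_append, List.sum_append]
      simp [EquiTree.wlen]
    rw [hcon, ih (by omega)]
    have hw : wt d hd hu s(mkV d hd hu x ⟨k, by omega⟩, mkV d hd hu x ⟨k + 1, hk⟩)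
        = |lvl d ⟨k, by omega⟩ - lvl d ⟨k + 1, hk⟩| := rfl
    have hmono : lvl d ⟨k, by omega⟩ < lvl d ⟨k + 1, hk⟩ :=
      lvl_strictMono d (by rw [Fin.mk_lt_mk]; omega)
    rw [hw, abs_of_nonpos (by linarith)]
    ring

lemma treeDist_root (hT : (TG d hd hu).IsTree) (x y : X) :
    treeDist (TG d hd hu) hT (wt d hd hu) (mkV d hd hu y (top d)) (mkV d hd hu x ⟨0, nl_pos d⟩)
      = lvl d (top d) := by
  rw [top_eq d hd hu y x]
  have hnl := nl_pos d
  have h2 := EquiTree.treeDist_eq hT (wt d hd hu)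
    ((upW d hd hu x (nl d - 1) (by omega)).reverse)
    ((upW_isPath d hd hu x (nl d - 1) (by omega)).reverse)
  rw [EquiTree.wlen_reverse, upW_wlen, lvl_zero d hd, sub_zero] at h2
  exact h2

lemma treeDist_leaves (hT : (TG d hd hu).IsTree) (x y : X) :
    treeDist (TG d hd hu) hT (wt d hd hu) (mkV d hd hu x ⟨0, nl_pos d⟩)
      (mkV d hd hu y ⟨0, nl_pos d⟩) = d x y := by
  by_cases hxy : x = y
  · subst hxy
    rw [EquiTree.treeDist_self]
    exact ((hd.2.1 x x).2 rfl).symm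
  · obtain ⟨k, hk⟩ := exists_lvl d (half_mem d x y)
    have hk2 : d x y = 2 * lvl d k := by rw [hk]; ring
    have hmerge : mkV d hd hu y k = mkV d hd hu x k :=
      (mkV_eq d hd hu).2 ⟨rfl, by rw [hd.2.2.1 y x]; linarith⟩
    have hmerge' : mkV d hd hu y ⟨(k : ℕ), k.2⟩ = mkV d hd hu x ⟨(k : ℕ), k.2⟩ := hmerge
    set P1 : (TG d hd hu).Walk (mkV d hd hu x ⟨0, nl_pos d⟩) (mkV d hd hu x ⟨(k : ℕ), k.2⟩) :=
      upW d hd hu x (k : ℕ) k.2 with hP1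
    set P2 : (TG d hd hu).Walk (mkV d hd hu x ⟨(k : ℕ), k.2⟩) (mkV d hd hu y ⟨0, nl_pos d⟩) :=
      (upW d hd hu y (k : ℕ) k.2).reverse.copy hmerge' rfl with hP2
    have hP2path : P2.IsPath := by
      rw [hP2, SimpleGraph.Walk.isPath_copy]
      exact (upW_isPath d hd hu y (k : ℕ) k.2).reverse
    have hP2support : P2.support = (upW d hd hu y (k : ℕ) k.2).support.reverse := by
      rw [hP2, SimpleGraph.Walk.support_copy, SimpleGraph.Walk.support_reverse]
    have hdisj : ∀ a ∈ P1.support, a ∉ P2.support.tail := by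
      intro a ha ha2
      have hhead : P2.support = mkV d hd hu x ⟨(k : ℕ), k.2⟩ :: P2.support.tail :=
        SimpleGraph.Walk.support_eq_cons P2
      have hnotail : mkV d hd hu x ⟨(k : ℕ), k.2⟩ ∉ P2.support.tail := by
        have := hP2path.support_nodup
        rw [hhead] at this
        exact (List.nodup_cons.1 this).1
      have ha3 : a ∈ P2.support := List.mem_of_mem_tail ha2
      rw [hP2support, List.mem_reverse] at ha3
      obtain ⟨j, hj, rfl⟩ := (upW_support d hd hu y (k : ℕ) k.2 a).1 ha3
      obtain ⟨j', hj', hEq⟩ := (upW_support d hd hu x (k : ℕ) k.2 _).1 ha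
      obtain ⟨hfin, hdle⟩ := (mkV_eq d hd hu).1 hEq
      have hjj : j = j' := by
        have := hfin
        rw [Fin.mk.injEq] at this
        omega
      subst hjj
      rcases Nat.lt_or_ge j (k : ℕ) with hlt | hge
      · have hlvllt : lvl d ⟨j, lt_of_le_of_lt hj k.2⟩ < lvl d k :=
          lvl_strictMono d (by rw [Fin.lt_def]; exact hlt)
        rw [hd.2.2.1 y x] at hdle
        linarith
      · have hjk : j = (k : ℕ) := by omega
        subst hjk
        have hEq2 : mkV d hd hu y ⟨(k : ℕ), lt_of_le_of_lt hj k.2⟩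
            = mkV d hd hu x ⟨(k : ℕ), k.2⟩ := hmerge'
        have hmemt := ha2
        rw [hEq2] at hmemt
        exact hnotail hmemt
    have hPpath : (P1.append P2).IsPath := by
      rw [SimpleGraph.Walk.isPath_def, SimpleGraph.Walk.support_append]
      refine List.Nodup.append ?_ ((List.tail_sublist _).nodup hP2path.support_nodup) hdisj
      have := (upW_isPath d hd hu x (k : ℕ) k.2).support_nodup
      rwa [hP1]
    rw [EquiTree.treeDist_eq hT (wt d hd hu) (P1.append P2) hPpath, EquiTree.wlen_append,
      hP1, hP2, EquiTree.wlen_copy, EquiTree.wlen_reverse, upW_wlen, upW_wlen, lvl_zero d hd]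
    have hke : (⟨(k : ℕ), k.2⟩ : Fin (nl d)) = k := rfl
    rw [hke, hk2]
    ring

lemma mk0_inj : Function.Injective (fun x => mkV d hd hu x ⟨0, nl_pos d⟩) := by
  intro x y h
  have h2 := ((mkV_eq d hd hu).1 h).2
  rw [lvl_zero d hd] at h2
  exact (hd.2.1 x y).1 (le_antisymm (by linarith) (hd.1 x y))

lemma leaf_iff (v : QV d hd hu) :
    (∃ x : X, mkV d hd hu x ⟨0, nl_pos d⟩ = v) ↔ (∃! u, (TG d hd hu).Adj v u) := by
  constructor
  · rintro ⟨x, rfl⟩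
    have h1lt : 1 < nl d := one_lt_nl d hd
    refine ⟨mkV d hd hu x ⟨1, h1lt⟩, adj_up d hd hu x ⟨0, nl_pos d⟩ ⟨1, h1lt⟩ rfl, ?_⟩
    intro c hc
    have hlev := adj_lev d hd hu hc
    have hval : ((⟨0, nl_pos d⟩ : Fin (nl d)) : ℕ) = 0 := rfl
    simp only [lev_mkV, hval] at hlev
    have hc1 : ((lev d hd hu c) : ℕ) = ((⟨0, nl_pos d⟩ : Fin (nl d)) : ℕ) + 1 := by
      rcases hlev with h | h
      · simpa [hval] using h
      · omega
    have := parent_eq d hd hu hc (hlt := by rw [hval]; omega) hc1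
    exact this
  · rintro ⟨u, hadj, huniq⟩
    obtain ⟨⟨x, i⟩, hrep⟩ := Quotient.exists_rep v
    have hrep' : mkV d hd hu x i = v := hrep
    by_cases hi : (i : ℕ) = 0
    · refine ⟨x, ?_⟩
      rw [← hrep']
      congr 1
      exact Fin.ext (by simpa using hi.symm)
    · exfalso
      subst hrep'
      have hipos : 0 < (i : ℕ) := Nat.pos_of_ne_zero hi
      have c1adj : (TG d hd hu).Adj (mkV d hd hu x i) (mkV d hd hu x ⟨(i : ℕ) - 1, by omega⟩) :=
        (adj_up d hd hu x ⟨(i : ℕ) - 1, by omega⟩ i (by simp; omega)).symm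
      by_cases htop : (i : ℕ) + 1 < nl d
      · have c2adj := adj_up d hd hu x i ⟨(i : ℕ) + 1, htop⟩ rfl
        have e1 := huniq _ c1adj
        have e2 := huniq _ c2adj
        rw [← e2] at e1
        have h3 := ((mkV_eq d hd hu).1 e1).1
        rw [Fin.mk.injEq] at h3
        omega
      · obtain ⟨p, -, hp⟩ := Finset.mem_image.1 (lvl_mem d (top d))
        have h2 : 1 < nl d := one_lt_nl d hd
        have hitop : (i : ℕ) = nl d - 1 := by have := i.2; omega
        have hieq : i = top d := Fin.ext (by simp [top]; omega)
        have hvm1 : mkV d hd hu x i = mkV d hd hu p.1 (top d) := by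
          rw [hieq]; exact top_eq d hd hu x p.1
        have hvm2 : mkV d hd hu x i = mkV d hd hu p.2 (top d) := by
          rw [hieq]; exact top_eq d hd hu x p.2
        have c1adj' : (TG d hd hu).Adj (mkV d hd hu x i)
            (mkV d hd hu p.1 ⟨nl d - 2, by omega⟩) := by
          rw [hvm1]
          exact (adj_up d hd hu p.1 ⟨nl d - 2, by omega⟩ (top d) (by simp [top]; omega)).symm
        have c2adj' : (TG d hd hu).Adj (mkV d hd hu x i)
            (mkV d hd hu p.2 ⟨nl d - 2, by omega⟩) := by
          rw [hvm2]
          exact (adj_up d hd hu p.2 ⟨nl d - 2, by omega⟩ (top d) (by simp [top]; omega)).symm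
        have e1 := huniq _ c1adj'
        have e2 := huniq _ c2adj'
        rw [← e2] at e1
        have h3 := ((mkV_eq d hd hu).1 e1).2
        have hlt2 : lvl d ⟨nl d - 2, by omega⟩ < lvl d (top d) :=
          lvl_strictMono d (by rw [Fin.lt_def]; simp [top]; omega)
        linarith

end UltraFwd

/-- A metric `d` on a (finite, nontrivial) set `X` is an ultrametric, i.e.
satisfies `d(x,y) ≤ max (d(x,z)) (d(y,z))`, if and only if it is realized as the
leaf-to-leaf path distance in a rooted, positively weighted (finite) tree whose leaves are
exactly the elements of `X` (a leaf being a node with exactly one neighbor) and in which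
every root-to-leaf path has the same total weight. -/
theorem ultrametric_iff_equidistant_tree {X : Type} [Fintype X] [Nontrivial X]
    (d : X → X → ℝ) (hd : IsMetricOn d) :
    (∀ x y z, d x y ≤ max (d x z) (d y z)) ↔
    ∃ (V : Type) (_ : Fintype V) (T : SimpleGraph V) (hT : T.IsTree)
      (w : Sym2 V → ℝ) (r : V) (ι : X → V),
      Function.Injective ι ∧ (∀ e ∈ T.edgeSet, 0 < w e) ∧
      (∀ v : V, (∃ x, ι x = v) ↔ (∃! u, T.Adj v u)) ∧
      (∃ h : ℝ, ∀ x, treeDist T hT w r (ι x) = h) ∧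
      (∀ x y, d x y = treeDist T hT w (ι x) (ι y)) := by
  constructor
  · intro hu
    have hT : (UltraFwd.TG d hd hu).IsTree :=
      ⟨UltraFwd.TG_connected d hd hu, UltraFwd.TG_acyclic d hd hu⟩
    refine ⟨UltraFwd.QV d hd hu,
      @Quotient.fintype (X × Fin (UltraFwd.nl d)) _ (UltraFwd.st d hd hu)
        (fun a b => Classical.propDecidable _),
      UltraFwd.TG d hd hu, hT, UltraFwd.wt d hd hu,
      UltraFwd.mkV d hd hu (Classical.arbitrary X) (UltraFwd.top d),
      fun x => UltraFwd.mkV d hd hu x ⟨0, UltraFwd.nl_pos d⟩,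
      UltraFwd.mk0_inj d hd hu, UltraFwd.wt_pos d hd hu,
      UltraFwd.leaf_iff d hd hu, ⟨UltraFwd.lvl d (UltraFwd.top d), ?_⟩, ?_⟩
    · intro x
      exact UltraFwd.treeDist_root d hd hu hT x (Classical.arbitrary X)
    · intro x y
      exact (UltraFwd.treeDist_leaves d hd hu hT x y).symm
  · rintro ⟨V, _, T, hT, w, r, ι, hinj, hw, hleaf, ⟨h, hh⟩, hdist⟩ x y z
    rw [hdist x y, hdist x z, hdist y z]
    exact EquiTree.tree_ultra hT hw r _ _ _ (hh x) (hh y) (hh z)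
end

section
/- For any two labeled graphs G and H, the label lower bound LLB(G,H) — defined as the minimal cost of a bijection between the vertex sets of G and H (each padded with enough dummy vertices ε), where matching two vertices with equal labels or two dummies costs 0, matching vertices with different labels costs c_vl, and matching a vertex with a dummy costs c_v — is at most the graph edit distance GED(G,H). -/
open scoped Classical

/-- A labeled graph: finite vertex set (of natural-number names), finite loop-free edge set,
vertex and edge labeling functions. -/
structure LGraph (Lv Le : Type) where
  verts : Finset ℕ
  edges : Finset (Sym2 ℕ)
  vl : ℕ → Lv
  el : Sym2 ℕ → Le

namespace LGraph

variable {Lv Le : Type}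

/-- Well-formedness: edges are loop-free and their endpoints are vertices. -/
def WF (G : LGraph Lv Le) : Prop :=
  (∀ e ∈ G.edges, ¬ e.IsDiag) ∧ ∀ e ∈ G.edges, ∀ v ∈ e, v ∈ G.verts

/-- The degree of a vertex: the number of incident edges. -/
noncomputable def degree (G : LGraph Lv Le) (v : ℕ) : ℕ :=
  (G.edges.filter fun e => v ∈ e).card

/-- Edit operations: insert/delete/relabel a vertex, insert/delete/relabel an edge. -/
inductive Op (Lv Le : Type) where
  | addV (v : ℕ) (l : Lv)
  | delV (v : ℕ)
  | relV (v : ℕ) (l : Lv)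
  | addE (u v : ℕ) (l : Le)
  | delE (e : Sym2 ℕ)
  | relE (e : Sym2 ℕ) (l : Le)

/-- Applying an edit operation to a graph; `none` if the operation is invalid
(e.g. deleting a non-isolated vertex). -/
noncomputable def apply (o : Op Lv Le) (G : LGraph Lv Le) : Option (LGraph Lv Le) :=
  match o with
  | .addV v l => if v ∈ G.verts then none else
      some ⟨insert v G.verts, G.edges, Function.update G.vl v l, G.el⟩
  | .delV v => if v ∈ G.verts ∧ ∀ e ∈ G.edges, v ∉ e then
      some ⟨G.verts.erase v, G.edges, G.vl, G.el⟩ else none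
  | .relV v l => if v ∈ G.verts then
      some ⟨G.verts, G.edges, Function.update G.vl v l, G.el⟩ else none
  | .addE u v l => if u ∈ G.verts ∧ v ∈ G.verts ∧ u ≠ v ∧ s(u, v) ∉ G.edges then
      some ⟨G.verts, insert s(u, v) G.edges, G.vl, Function.update G.el s(u, v) l⟩ else none
  | .delE e => if e ∈ G.edges then
      some ⟨G.verts, G.edges.erase e, G.vl, G.el⟩ else none
  | .relE e l => if e ∈ G.edges then
      some ⟨G.verts, G.edges, G.vl, Function.update G.el e l⟩ else none

/-- Applying a sequence of edit operations (an edit path). -/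
noncomputable def applyList : List (Op Lv Le) → LGraph Lv Le → Option (LGraph Lv Le)
  | [], G => some G
  | o :: os, G => (apply o G).bind (applyList os)

/-- Cost of a single edit operation, with vertex insertion/deletion cost `cv`, vertex
relabeling cost `cvl`, edge insertion/deletion cost `ce` and edge relabeling cost `cel`. -/
def opCost (cv cvl ce cel : ℝ) : Op Lv Le → ℝ
  | .addV _ _ => cv
  | .delV _ => cv
  | .relV _ _ => cvl
  | .addE _ _ _ => ce
  | .delE _ => ce
  | .relE _ _ => cel

/-- Graph isomorphism: a bijection of the vertex sets preserving labels, adjacency and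
edge labels. -/
def Iso (G H : LGraph Lv Le) : Prop :=
  ∃ f : ℕ → ℕ, Set.BijOn f ↑G.verts ↑H.verts ∧
    (∀ v ∈ G.verts, H.vl (f v) = G.vl v) ∧
    (∀ u ∈ G.verts, ∀ v ∈ G.verts, (s(u, v) ∈ G.edges ↔ s(f u, f v) ∈ H.edges)) ∧
    (∀ u ∈ G.verts, ∀ v ∈ G.verts, s(u, v) ∈ G.edges → H.el s(f u, f v) = G.el s(u, v))

/-- The graph edit distance: the infimum of the total cost over all edit paths
transforming `G` into a graph isomorphic to `H`. -/
noncomputable def GED (cv cvl ce cel : ℝ) (G H : LGraph Lv Le) : ℝ :=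
  sInf {r | ∃ (ops : List (Op Lv Le)) (H' : LGraph Lv Le),
    applyList ops G = some H' ∧ Iso H' H ∧ r = (ops.map (opCost cv cvl ce cel)).sum}

/-- The vertex set of `G` padded with one dummy vertex (`Sum.inr`) for every vertex
of `H`, so that the padded vertex sets of `G` and `H` have equal cardinality. -/
abbrev PadV (G H : LGraph Lv Le) : Type := {x // x ∈ G.verts} ⊕ {x // x ∈ H.verts}

/-- Ground cost `c_llb`: 0 for equal labels or two dummies, `cvl` for distinct labels,
`cv` for matching a vertex with a dummy. -/
noncomputable def cllb (cv cvl : ℝ) (G H : LGraph Lv Le) : PadV G H → PadV H G → ℝ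
  | .inl u, .inl v => if G.vl u.1 = H.vl v.1 then 0 else cvl
  | .inl _, .inr _ => cv
  | .inr _, .inl _ => cv
  | .inr _, .inr _ => 0

/-- Degree of a padded vertex; dummies have degree 0. -/
noncomputable def padDeg (G H : LGraph Lv Le) : PadV G H → ℕ
  | .inl u => G.degree u.1
  | .inr _ => 0

/-- Ground cost `c_dlb(u,v) = (ce/2)·|δ(u) − δ(v)|`. -/
noncomputable def cdlb (ce : ℝ) (G H : LGraph Lv Le) (x : PadV G H) (y : PadV H G) : ℝ :=
  ce / 2 * |(padDeg G H x : ℝ) - (padDeg H G y : ℝ)|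

/-- Optimal assignment cost between the padded vertex sets of `G` and `H` under a ground
cost `c`: the minimum over all bijections `f` of `∑ x, c x (f x)`. -/
noncomputable def oaCost (G H : LGraph Lv Le) (c : PadV G H → PadV H G → ℝ) : ℝ :=
  sInf {r | ∃ f : PadV G H ≃ PadV H G, r = ∑ x, c x (f x)}

/-- The label lower bound. -/
noncomputable def LLB (cv cvl : ℝ) (G H : LGraph Lv Le) : ℝ :=
  oaCost G H (cllb cv cvl G H)

/-- The degree lower bound. -/
noncomputable def DLB (ce : ℝ) (G H : LGraph Lv Le) : ℝ :=
  oaCost G H (cdlb ce G H)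

/-- The combined lower bound `CLB = LLB + DLB`. -/
noncomputable def CLB (cv cvl ce : ℝ) (G H : LGraph Lv Le) : ℝ :=
  LLB cv cvl G H + DLB ce G H

end LGraph
namespace LGedAux
variable {Lv : Type}

noncomputable def cst (cv cvl : ℝ) (labG labH : ℕ → Lv) {sA sB : Finset ℕ} :
    ({x // x ∈ sA} ⊕ {x // x ∈ sB}) → ({x // x ∈ sB} ⊕ {x // x ∈ sA}) → ℝ
  | .inl u, .inl w => if labG u.1 = labH w.1 then 0 else cvl
  | .inl _, .inr _ => cv
  | .inr _, .inl _ => cv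
  | .inr _, .inr _ => 0


lemma cst_nonneg {cv cvl : ℝ} (hcv : 0 ≤ cv) (hcvl : 0 ≤ cvl) (labG labH : ℕ → Lv)
    {sA sB : Finset ℕ} (x : {x // x ∈ sA} ⊕ {x // x ∈ sB})
    (y : {x // x ∈ sB} ⊕ {x // x ∈ sA}) : 0 ≤ cst cv cvl labG labH x y := by
  rcases x with a | b <;> rcases y with c | d <;> simp only [cst]
  · split <;> simp [hcvl]
  · exact hcv
  · exact hcv
  · exact le_refl 0

noncomputable def oL (s t : Finset ℕ) (v : ℕ) (hv : v ∉ s) :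
    Option ({x // x ∈ s} ⊕ {x // x ∈ t}) ≃ ({x // x ∈ insert v s} ⊕ {x // x ∈ t}) where
  toFun x := match x with
    | none => .inl ⟨v, Finset.mem_insert_self v s⟩
    | some (.inl a) => .inl ⟨a.1, Finset.mem_insert_of_mem a.2⟩
    | some (.inr b) => .inr b
  invFun y := match y with
    | .inl a => if h : a.1 = v then none else
        some (.inl ⟨a.1, (Finset.mem_insert.mp a.2).resolve_left h⟩)
    | .inr b => some (.inr b)
  left_inv := by
    rintro (_ | (a | b))
    · simp
    · have h : a.1 ≠ v := fun h => hv (h ▸ a.2)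
      simp [h]
    · rfl
  right_inv := by
    rintro (a | b)
    · by_cases h : a.1 = v
      · simp only [h, dif_pos]
        exact congrArg Sum.inl (Subtype.ext h.symm)
      · simp [h]
    · rfl

noncomputable def oR (s t : Finset ℕ) (v : ℕ) (hv : v ∉ s) :
    Option ({x // x ∈ t} ⊕ {x // x ∈ s}) ≃ ({x // x ∈ t} ⊕ {x // x ∈ insert v s}) where
  toFun x := match x with
    | none => .inr ⟨v, Finset.mem_insert_self v s⟩
    | some (.inr a) => .inr ⟨a.1, Finset.mem_insert_of_mem a.2⟩
    | some (.inl b) => .inl b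
  invFun y := match y with
    | .inr a => if h : a.1 = v then none else
        some (.inr ⟨a.1, (Finset.mem_insert.mp a.2).resolve_left h⟩)
    | .inl b => some (.inl b)
  left_inv := by
    rintro (_ | (b | a))
    · simp
    · rfl
    · have h : a.1 ≠ v := fun h => hv (h ▸ a.2)
      simp [h]
  right_inv := by
    rintro (b | a)
    · rfl
    · by_cases h : a.1 = v
      · simp only [h, dif_pos]
        exact congrArg Sum.inr (Subtype.ext h.symm)
      · simp [h]

section core
variable (cv cvl : ℝ) (labG labG2 labH : ℕ → Lv) (s t : Finset ℕ) (v : ℕ)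

lemma oL_none (hv : v ∉ s) : oL s t v hv none = .inl ⟨v, Finset.mem_insert_self v s⟩ := rfl
lemma oR_none (hv : v ∉ s) : oR s t v hv none = .inr ⟨v, Finset.mem_insert_self v s⟩ := rfl

lemma cst_compat (hv : v ∉ s) (hagree : ∀ x ∈ s, labG2 x = labG x)
    (x : {x // x ∈ s} ⊕ {x // x ∈ t}) (y : {x // x ∈ t} ⊕ {x // x ∈ s}) :
    cst cv cvl labG2 labH (oL s t v hv (some x)) (oR s t v hv (some y))
      = cst cv cvl labG labH x y := by
  rcases x with a | b <;> rcases y with c | d <;>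
    simp only [oL, oR, Equiv.coe_fn_mk, cst]
  rw [hagree _ a.2]

/-- Splitting a padded-sum over the big type at the distinguished point. -/
lemma sum_big (hv : v ∉ s)
    (F : ({x // x ∈ insert v s} ⊕ {x // x ∈ t}) ≃ ({x // x ∈ t} ⊕ {x // x ∈ insert v s})) :
    ∑ x, cst cv cvl labG2 labH x (F x)
      = cst cv cvl labG2 labH (.inl ⟨v, Finset.mem_insert_self v s⟩)
          (F (.inl ⟨v, Finset.mem_insert_self v s⟩))
        + ∑ w : {x // x ∈ s} ⊕ {x // x ∈ t},
            cst cv cvl labG2 labH (oL s t v hv (some w)) (F (oL s t v hv (some w))) := by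
  rw [← Equiv.sum_comp (oL s t v hv) (fun x => cst cv cvl labG2 labH x (F x))]
  rw [Fintype.sum_option]
  rfl

lemma contract (hv : v ∉ s) (hagree : ∀ x ∈ s, labG2 x = labG x)
    (F : ({x // x ∈ insert v s} ⊕ {x // x ∈ t}) ≃ ({x // x ∈ t} ⊕ {x // x ∈ insert v s}))
    (hF : F (.inl ⟨v, Finset.mem_insert_self v s⟩) = .inr ⟨v, Finset.mem_insert_self v s⟩) :
    ∃ f : ({x // x ∈ s} ⊕ {x // x ∈ t}) ≃ ({x // x ∈ t} ⊕ {x // x ∈ s}),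
      ∑ x, cst cv cvl labG labH x (f x) + cv = ∑ x, cst cv cvl labG2 labH x (F x) := by
  set g := (oL s t v hv).trans (F.trans (oR s t v hv).symm) with hg
  have hg0 : g none = none := by
    simp only [hg, Equiv.trans_apply, oL_none, hF]
    rw [Equiv.symm_apply_eq, oR_none]
  refine ⟨Equiv.removeNone g, ?_⟩
  have hgF : ∀ w, oR s t v hv (g w) = F (oL s t v hv w) := by
    intro w; simp [hg]
  have hsome : ∀ x, g (some x) = some (Equiv.removeNone g x) := by
    intro x
    have hex : ∃ y, g (some x) = some y := by
      cases h : g (some x) with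
      | none => exact absurd (g.injective (h.trans hg0.symm)) (by simp)
      | some y => exact ⟨y, rfl⟩
    exact (Equiv.removeNone_some g hex).symm
  rw [sum_big cv cvl labG2 labH s t v hv F, hF]
  have hterm : cst cv cvl labG2 labH
      (Sum.inl ⟨v, Finset.mem_insert_self v s⟩ : {x // x ∈ insert v s} ⊕ {x // x ∈ t})
      (Sum.inr ⟨v, Finset.mem_insert_self v s⟩) = cv := rfl
  rw [hterm]
  have : ∀ x, cst cv cvl labG labH x (Equiv.removeNone g x)
      = cst cv cvl labG2 labH (oL s t v hv (some x)) (F (oL s t v hv (some x))) := by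
    intro x
    rw [← hgF (some x), hsome x, cst_compat cv cvl labG labG2 labH s t v hv hagree]
  rw [Finset.sum_congr rfl (fun x _ => this x)]
  ring

lemma extend (hv : v ∉ s) (hagree : ∀ x ∈ s, labG2 x = labG x)
    (f : ({x // x ∈ s} ⊕ {x // x ∈ t}) ≃ ({x // x ∈ t} ⊕ {x // x ∈ s})) :
    ∃ F : ({x // x ∈ insert v s} ⊕ {x // x ∈ t}) ≃ ({x // x ∈ t} ⊕ {x // x ∈ insert v s}),
      ∑ x, cst cv cvl labG2 labH x (F x) = cv + ∑ x, cst cv cvl labG labH x (f x) := by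
  refine ⟨(oL s t v hv).symm.trans (f.optionCongr.trans (oR s t v hv)), ?_⟩
  rw [sum_big cv cvl labG2 labH s t v hv]
  have h0 : ((oL s t v hv).symm.trans (f.optionCongr.trans (oR s t v hv)))
      (.inl ⟨v, Finset.mem_insert_self v s⟩) = .inr ⟨v, Finset.mem_insert_self v s⟩ := by
    simp only [Equiv.trans_apply, ← oL_none s t v hv, Equiv.symm_apply_apply]
    rfl
  rw [h0]
  have hterm : cst cv cvl labG2 labH
      (Sum.inl ⟨v, Finset.mem_insert_self v s⟩ : {x // x ∈ insert v s} ⊕ {x // x ∈ t})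
      (Sum.inr ⟨v, Finset.mem_insert_self v s⟩) = cv := rfl
  rw [hterm]
  congr 1
  refine Finset.sum_congr rfl fun x _ => ?_
  have h1 : ((oL s t v hv).symm.trans (f.optionCongr.trans (oR s t v hv)))
      (oL s t v hv (some x)) = oR s t v hv (some (f x)) := by
    simp only [Equiv.trans_apply, Equiv.symm_apply_apply]
    rfl
  rw [h1, cst_compat cv cvl labG labG2 labH s t v hv hagree]
end core

/-- Cost change under post-composition with a transposition. -/
lemma sum_swap {γ δ : Type*} [Fintype γ] [DecidableEq δ] (c : γ → δ → ℝ) (f : γ ≃ δ) (y z : δ)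
    (hyz : y ≠ z) :
    ∑ x, c x ((f.trans (Equiv.swap y z)) x)
      = ∑ x, c x (f x) + (c (f.symm y) z + c (f.symm z) y)
        - (c (f.symm y) y + c (f.symm z) z) := by
  classical
  have ha : f.symm y ≠ f.symm z := fun h => hyz (by simpa using congrArg f h)
  have h1 : ∑ x, (c x (Equiv.swap y z (f x)) - c x (f x))
      = (c (f.symm y) z - c (f.symm y) y) + (c (f.symm z) y - c (f.symm z) z) := by
    rw [← Finset.sum_subset (Finset.subset_univ ({f.symm y, f.symm z} : Finset γ))]
    · rw [Finset.sum_pair ha]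
      simp [Equiv.swap_apply_left, Equiv.swap_apply_right]
    · intro x _ hx
      simp only [Finset.mem_insert, Finset.mem_singleton, not_or] at hx
      have hy' : f x ≠ y := fun h => hx.1 (by rw [← h, Equiv.symm_apply_apply])
      have hz' : f x ≠ z := fun h => hx.2 (by rw [← h, Equiv.symm_apply_apply])
      rw [Equiv.swap_apply_of_ne_of_ne hy' hz', sub_self]
  have h2 : ∑ x, (c x (Equiv.swap y z (f x)) - c x (f x))
      = ∑ x, c x ((f.trans (Equiv.swap y z)) x) - ∑ x, c x (f x) := by
    rw [Finset.sum_sub_distrib]; rfl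
  linarith [h1, h2.symm]

/-- Surgery: any bijection can be modified by at most two transpositions so that it
matches the two distinguished vertices, at extra cost at most `2·cv`. -/
lemma surgery (cv cvl : ℝ) (hcv : 0 ≤ cv) (hcvl : 0 ≤ cvl) (labG labH : ℕ → Lv)
    (s' t : Finset ℕ) (a0 c0 : {x // x ∈ s'})
    (f1 : ({x // x ∈ s'} ⊕ {x // x ∈ t}) ≃ ({x // x ∈ t} ⊕ {x // x ∈ s'})) :
    ∃ F : ({x // x ∈ s'} ⊕ {x // x ∈ t}) ≃ ({x // x ∈ t} ⊕ {x // x ∈ s'}),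
      F (.inl a0) = .inr c0 ∧
      ∑ x, cst cv cvl labG labH x (F x)
        ≤ 2 * cv + ∑ x, cst cv cvl labG labH x (f1 x) := by
  classical
  set x0 : {x // x ∈ s'} ⊕ {x // x ∈ t} := .inl a0 with hx0
  set z0 : {x // x ∈ t} ⊕ {x // x ∈ s'} := .inr c0 with hz0
  by_cases h0 : f1 x0 = z0
  · exact ⟨f1, h0, by linarith⟩
  set y0 := f1 x0 with hy0
  set x1 := f1.symm z0 with hx1
  have hy0z0 : y0 ≠ z0 := h0
  have hcx0z0 : cst cv cvl labG labH x0 z0 = cv := rfl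
  have hsymmy0 : f1.symm y0 = x0 := by rw [hy0, Equiv.symm_apply_apply]
  have hf1x1 : f1 x1 = z0 := by rw [hx1, Equiv.apply_symm_apply]
  by_cases hb : cst cv cvl labG labH x1 y0
      ≤ cv + cst cv cvl labG labH x0 y0 + cst cv cvl labG labH x1 z0
  · refine ⟨f1.trans (Equiv.swap y0 z0), ?_, ?_⟩
    · rw [Equiv.trans_apply, ← hy0, Equiv.swap_apply_left]
    · rw [sum_swap (cst cv cvl labG labH) f1 y0 z0 hy0z0, hsymmy0, ← hx1, hcx0z0]
      linarith
  · -- bad case: x1 and y0 are both "real" vertices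
    have hx1real : ∃ u, x1 = Sum.inl u := by
      rcases hc : x1 with u | b
      · exact ⟨u, rfl⟩
      · exfalso; apply hb
        have h1 : cst cv cvl labG labH (Sum.inr b) y0 ≤ cv := by
          rcases y0 with c | d
          · exact le_of_eq rfl
          · exact hcv
        have h2 := cst_nonneg hcv hcvl labG labH x0 y0
        have h3 := cst_nonneg hcv hcvl labG labH x1 z0
        rw [hc] at h3 ⊢; linarith [h1]
    have hy0real : ∃ w, y0 = Sum.inl w := by
      rcases hc : y0 with w | d
      · exact ⟨w, rfl⟩
      · exfalso; apply hb
        obtain ⟨u, hu⟩ := hx1real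
        have h1 : cst cv cvl labG labH x1 (Sum.inr d) ≤ cv := by
          rw [hu]; exact le_of_eq rfl
        have h2 := cst_nonneg hcv hcvl labG labH x0 y0
        have h3 := cst_nonneg hcv hcvl labG labH x1 z0
        rw [hc] at h2 ⊢; linarith [h1]
    obtain ⟨u, hu⟩ := hx1real
    obtain ⟨w, hw⟩ := hy0real
    -- counting: there is a dummy-dummy pair
    have hexists : ∃ (b : {x // x ∈ t}) (a : {x // x ∈ s'}),
        f1 (.inr b) = .inr a := by
      by_contra hno
      push_neg at hno
      have hchoice : ∀ a : {x // x ∈ s'}, ∃ u' : {x // x ∈ s'},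
          f1.symm (.inr a) = .inl u' ∧ u' ≠ a0 := by
        intro a
        cases hfa : f1.symm (.inr a) with
        | inl u' =>
          refine ⟨u', rfl, fun h => ?_⟩
          subst h
          have : f1 x0 = .inr a := by
            rw [hx0, ← hfa, Equiv.apply_symm_apply]
          rw [← hy0] at this
          rw [hw] at this
          exact Sum.inl_ne_inr this
        | inr b =>
          exfalso
          exact hno b a (by rw [← hfa, Equiv.apply_symm_apply])
      choose u' hu' hne using hchoice
      have hinj : Function.Injective fun a => (⟨u' a, hne a⟩ : {x : {x // x ∈ s'} // x ≠ a0}) := by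
        intro a a' h
        have h' : u' a = u' a' := congrArg Subtype.val h
        have heq : f1.symm (Sum.inr a) = f1.symm (Sum.inr a') := by
          rw [hu' a, hu' a', h']
        exact Sum.inr_injective (f1.symm.injective heq)
      have hle := Fintype.card_le_of_injective _ hinj
      have hlt : Fintype.card {x : {x // x ∈ s'} // x ≠ a0}
          < Fintype.card {x // x ∈ s'} :=
        Fintype.card_subtype_lt (x := a0) (by simp)
      omega
    obtain ⟨b, a, hba⟩ := hexists
    set d : {x // x ∈ s'} ⊕ {x // x ∈ t} := .inr b with hd
    set z : {x // x ∈ t} ⊕ {x // x ∈ s'} := .inr a with hz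
    have hzz0 : z ≠ z0 := by
      intro h
      have hdx1 : d = x1 := f1.injective (by rw [hba, h, hf1x1])
      rw [hd, hu] at hdx1
      exact Sum.inr_ne_inl hdx1
    have hzy0 : z ≠ y0 := by rw [hw, hz]; exact fun h => Sum.inr_ne_inl h
    set σ := Equiv.swap y0 z0 with hσ
    set τ := Equiv.swap y0 z with hτ
    set f2 := f1.trans σ with hf2
    refine ⟨f2.trans τ, ?_, ?_⟩
    · rw [Equiv.trans_apply, hf2, Equiv.trans_apply, ← hy0, hσ, Equiv.swap_apply_left,
        hτ, Equiv.swap_apply_of_ne_of_ne (Ne.symm hy0z0) (Ne.symm hzz0)]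
    · have hs1 := sum_swap (cst cv cvl labG labH) f1 y0 z0 hy0z0
      rw [← hσ, ← hf2] at hs1
      have hs2 := sum_swap (cst cv cvl labG labH) f2 y0 z (Ne.symm hzy0)
      rw [← hτ] at hs2
      have hf2y0 : f2.symm y0 = x1 := by
        rw [hf2, Equiv.symm_trans_apply, hσ, Equiv.symm_swap, Equiv.swap_apply_left, hx1]
      have hf2z : f2.symm z = d := by
        rw [hf2, Equiv.symm_trans_apply, hσ, Equiv.symm_swap,
          Equiv.swap_apply_of_ne_of_ne hzy0 hzz0]
        exact f1.injective (by rw [Equiv.apply_symm_apply, hba])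
      rw [hf2y0, hf2z] at hs2
      rw [hsymmy0, ← hx1, hcx0z0] at hs1
      have e1 : cst cv cvl labG labH x1 z0 = cv := by rw [hu]; rfl
      have e2 : cst cv cvl labG labH x1 z = cv := by rw [hu, hz]; rfl
      have e3 : cst cv cvl labG labH d y0 = cv := by rw [hd, hw]; rfl
      have e4 : cst cv cvl labG labH d z = 0 := by rw [hd, hz]; rfl
      have e5 := cst_nonneg hcv hcvl labG labH x0 y0
      rw [e1] at hs1
      rw [e2, e3, e4] at hs2
      linarith
end LGedAux

section Glue
open LGraph LGedAux
variable {Lv Le : Type}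

lemma cllb_eq_cst (cv cvl : ℝ) (G H : LGraph Lv Le) (x : PadV G H) (y : PadV H G) :
    cllb cv cvl G H x y = LGedAux.cst cv cvl G.vl H.vl x y := by
  rcases x with a | b <;> rcases y with c | d <;> rfl

lemma llb_le {cv cvl r : ℝ} (hcv : 0 ≤ cv) (hcvl : 0 ≤ cvl) (G H : LGraph Lv Le)
    (f : PadV G H ≃ PadV H G)
    (hr : ∑ x, LGedAux.cst cv cvl G.vl H.vl x (f x) ≤ r) : LLB cv cvl G H ≤ r := by
  have hb : BddBelow {r | ∃ f : PadV G H ≃ PadV H G, r = ∑ x, cllb cv cvl G H x (f x)} := by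
    refine ⟨0, fun s hs => ?_⟩
    obtain ⟨g, rfl⟩ := hs
    exact Finset.sum_nonneg fun x _ => by
      rw [cllb_eq_cst]; exact LGedAux.cst_nonneg hcv hcvl _ _ _ _
  have hmem : (∑ x, cllb cv cvl G H x (f x)) ∈
      {r | ∃ f : PadV G H ≃ PadV H G, r = ∑ x, cllb cv cvl G H x (f x)} := ⟨f, rfl⟩
  have heq : ∑ x, cllb cv cvl G H x (f x)
      = ∑ x, LGedAux.cst cv cvl G.vl H.vl x (f x) :=
    Finset.sum_congr rfl fun x _ => cllb_eq_cst cv cvl G H x (f x)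
  exact le_trans (csInf_le hb hmem) (heq ▸ hr)

lemma llb_le_cst {cv cvl r : ℝ} (hcv : 0 ≤ cv) (hcvl : 0 ≤ cvl) (G H : LGraph Lv Le)
    (sA : Finset ℕ) (hsA : G.verts = sA)
    (f : ({x // x ∈ sA} ⊕ {x // x ∈ H.verts}) ≃ ({x // x ∈ H.verts} ⊕ {x // x ∈ sA}))
    (hr : ∑ x, LGedAux.cst cv cvl G.vl H.vl (sA := sA) x (f x) ≤ r) :
    LLB cv cvl G H ≤ r := by
  subst hsA
  exact llb_le hcv hcvl G H f hr

lemma step (cv cvl ce cel : ℝ) (hcv : 0 ≤ cv) (hcvl : 0 ≤ cvl) (hce : 0 ≤ ce)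
    (hcel : 0 ≤ cel) (o : Op Lv Le) (G G1 H : LGraph Lv Le)
    (h : LGraph.apply o G = some G1) :
    LLB cv cvl G H ≤ opCost cv cvl ce cel o + LLB cv cvl G1 H := by
  have key : ∀ f1 : PadV G1 H ≃ PadV H G1,
      LLB cv cvl G H ≤ opCost cv cvl ce cel o + ∑ x, cllb cv cvl G1 H x (f1 x) := by
    intro f1
    have hsumf1 : ∑ x, cllb cv cvl G1 H x (f1 x)
        = ∑ x, LGedAux.cst cv cvl G1.vl H.vl x (f1 x) :=
      Finset.sum_congr rfl fun x _ => cllb_eq_cst cv cvl G1 H x (f1 x)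
    cases o with
    | addV v l =>
      simp only [LGraph.apply] at h
      split at h
      · exact absurd h (by simp)
      · rename_i hv
        obtain rfl : (⟨insert v G.verts, G.edges, Function.update G.vl v l, G.el⟩ :
            LGraph Lv Le) = G1 := Option.some.inj h
        obtain ⟨F, hF, hFle⟩ := LGedAux.surgery cv cvl hcv hcvl
          (Function.update G.vl v l) H.vl (insert v G.verts) H.verts
          ⟨v, Finset.mem_insert_self v G.verts⟩ ⟨v, Finset.mem_insert_self v G.verts⟩ f1
        have hagree : ∀ x ∈ G.verts, Function.update G.vl v l x = G.vl x := by
          intro x hx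
          exact Function.update_of_ne (by rintro rfl; exact hv hx) _ _
        obtain ⟨f, hf⟩ := LGedAux.contract cv cvl G.vl (Function.update G.vl v l) H.vl
          G.verts H.verts v hv hagree F hF
        refine llb_le hcv hcvl G H f ?_
        have hop : opCost cv cvl ce cel (Op.addV v l : Op Lv Le) = cv := rfl
        rw [hop, hsumf1]
        linarith [hf, hFle]
    | delV v =>
      simp only [LGraph.apply] at h
      split at h
      · rename_i hc
        obtain rfl : (⟨G.verts.erase v, G.edges, G.vl, G.el⟩ :
            LGraph Lv Le) = G1 := Option.some.inj h
        obtain ⟨F, hF⟩ := LGedAux.extend cv cvl G.vl G.vl H.vl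
          (G.verts.erase v) H.verts v (Finset.notMem_erase v G.verts)
          (fun x _ => rfl) f1
        refine llb_le_cst hcv hcvl G H (insert v (G.verts.erase v))
          (Finset.insert_erase hc.1).symm F ?_
        have hop : opCost cv cvl ce cel (Op.delV v : Op Lv Le) = cv := rfl
        rw [hop, hsumf1, hF]
      · exact absurd h (by simp)
    | relV v l =>
      simp only [LGraph.apply] at h
      split at h
      · rename_i hc
        obtain rfl : (⟨G.verts, G.edges, Function.update G.vl v l, G.el⟩ :
            LGraph Lv Le) = G1 := Option.some.inj h
        refine llb_le hcv hcvl G H f1 ?_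
        have hop : opCost cv cvl ce cel (Op.relV v l : Op Lv Le) = cvl := rfl
        rw [hop, hsumf1]
        set x0 : {x // x ∈ G.verts} ⊕ {x // x ∈ H.verts} := .inl ⟨v, hc⟩ with hx0
        have hpt : ∀ x, LGedAux.cst cv cvl G.vl H.vl x (f1 x)
            ≤ LGedAux.cst cv cvl (Function.update G.vl v l) H.vl x (f1 x)
              + (if x = x0 then cvl else 0) := by
          intro x
          rcases x with a | b
          · by_cases hav : a.1 = v
            · have hxx0 : (Sum.inl a : {x // x ∈ G.verts} ⊕ {x // x ∈ H.verts}) = x0 := by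
                rw [hx0]; exact congrArg Sum.inl (Subtype.ext hav)
              rw [if_pos hxx0]
              rcases f1 (Sum.inl a) with c | d
              · have h1 : LGedAux.cst cv cvl G.vl H.vl (Sum.inl a) (Sum.inl c) ≤ cvl := by
                  simp only [LGedAux.cst]; split <;> [exact hcvl; exact le_refl cvl]
                have h2 : (0:ℝ) ≤ LGedAux.cst cv cvl (Function.update G.vl v l) H.vl
                    (Sum.inl a) (Sum.inl c) := LGedAux.cst_nonneg hcv hcvl _ _ _ _
                linarith
              · simp only [LGedAux.cst]; linarith
            · have hxne : (Sum.inl a : {x // x ∈ G.verts} ⊕ {x // x ∈ H.verts}) ≠ x0 := by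
                rw [hx0]; intro hcon
                exact hav (congrArg Subtype.val (Sum.inl_injective hcon))
              rw [if_neg hxne, add_zero]
              rcases f1 (Sum.inl a) with c | d
              · simp only [LGedAux.cst, Function.update_of_ne hav]
                exact le_refl _
              · exact le_refl cv
          · have hxne : (Sum.inr b : {x // x ∈ G.verts} ⊕ {x // x ∈ H.verts}) ≠ x0 := by
              rw [hx0]; exact fun hcon => Sum.inr_ne_inl hcon
            rw [if_neg hxne, add_zero]
            rcases f1 (Sum.inr b) with c | d <;> exact le_refl _
        calc ∑ x, LGedAux.cst cv cvl G.vl H.vl x (f1 x)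
            ≤ ∑ x, (LGedAux.cst cv cvl (Function.update G.vl v l) H.vl x (f1 x)
                + (if x = x0 then cvl else 0)) :=
              Finset.sum_le_sum fun x _ => hpt x
          _ = cvl + ∑ x, LGedAux.cst cv cvl (Function.update G.vl v l) H.vl x (f1 x) := by
              rw [Finset.sum_add_distrib, Finset.sum_ite_eq' Finset.univ x0 (fun _ => cvl)]
              simp [add_comm]
      · exact absurd h (by simp)
    | addE u v l =>
      simp only [LGraph.apply] at h
      split at h
      · rename_i hc
        obtain rfl : (⟨G.verts, insert s(u, v) G.edges, G.vl,
            Function.update G.el s(u, v) l⟩ : LGraph Lv Le) = G1 := Option.some.inj h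
        refine llb_le hcv hcvl G H f1 ?_
        have hop : opCost cv cvl ce cel (Op.addE u v l : Op Lv Le) = ce := rfl
        rw [hop, hsumf1]
        linarith [le_refl (∑ x, LGedAux.cst cv cvl G.vl H.vl x (f1 x))]
      · exact absurd h (by simp)
    | delE e =>
      simp only [LGraph.apply] at h
      split at h
      · obtain rfl : (⟨G.verts, G.edges.erase e, G.vl, G.el⟩ : LGraph Lv Le) = G1 :=
          Option.some.inj h
        refine llb_le hcv hcvl G H f1 ?_
        have hop : opCost cv cvl ce cel (Op.delE e : Op Lv Le) = ce := rfl
        rw [hop, hsumf1]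
        linarith [le_refl (∑ x, LGedAux.cst cv cvl G.vl H.vl x (f1 x))]
      · exact absurd h (by simp)
    | relE e l =>
      simp only [LGraph.apply] at h
      split at h
      · obtain rfl : (⟨G.verts, G.edges, G.vl, Function.update G.el e l⟩ :
            LGraph Lv Le) = G1 := Option.some.inj h
        refine llb_le hcv hcvl G H f1 ?_
        have hop : opCost cv cvl ce cel (Op.relE e l : Op Lv Le) = cel := rfl
        rw [hop, hsumf1]
        linarith [le_refl (∑ x, LGedAux.cst cv cvl G.vl H.vl x (f1 x))]
      · exact absurd h (by simp)
  have hne : {r | ∃ f : PadV G1 H ≃ PadV H G1,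
      r = ∑ x, cllb cv cvl G1 H x (f x)}.Nonempty :=
    ⟨_, Equiv.sumComm _ _, rfl⟩
  have hlow : LLB cv cvl G H - opCost cv cvl ce cel o ≤ LLB cv cvl G1 H := by
    refine le_csInf hne ?_
    rintro r ⟨f1, rfl⟩
    linarith [key f1]
  linarith

end Glue

section Glue2
open LGraph LGedAux
variable {Lv Le : Type}

lemma llb_of_iso {cv cvl : ℝ} (hcv : 0 ≤ cv) (hcvl : 0 ≤ cvl) (G H : LGraph Lv Le)
    (hiso : Iso G H) : LLB cv cvl G H ≤ 0 := by
  obtain ⟨g, hbij, hlab, -, -⟩ := hiso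
  have hmap : ∀ a : {x // x ∈ G.verts}, g a.1 ∈ H.verts := fun a =>
    Finset.mem_coe.mp (hbij.mapsTo (Finset.mem_coe.mpr a.2))
  have hinj : Function.Injective
      (fun a : {x // x ∈ G.verts} => (⟨g a.1, hmap a⟩ : {x // x ∈ H.verts})) := by
    intro a a' hh
    exact Subtype.ext (hbij.injOn (Finset.mem_coe.mpr a.2) (Finset.mem_coe.mpr a'.2)
      (congrArg Subtype.val hh))
  have hsurj : Function.Surjective
      (fun a : {x // x ∈ G.verts} => (⟨g a.1, hmap a⟩ : {x // x ∈ H.verts})) := by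
    intro b
    obtain ⟨a, ha, hab⟩ := hbij.surjOn (Finset.mem_coe.mpr b.2)
    exact ⟨⟨a, Finset.mem_coe.mp ha⟩, Subtype.ext hab⟩
  set eAB := Equiv.ofBijective _ ⟨hinj, hsurj⟩ with heAB
  refine llb_le hcv hcvl G H (Equiv.sumCongr eAB eAB.symm) ?_
  have hz : ∀ x, LGedAux.cst cv cvl G.vl H.vl x ((Equiv.sumCongr eAB eAB.symm) x) = 0 := by
    intro x; rcases x with a | b
    · show LGedAux.cst cv cvl G.vl H.vl (.inl a) (.inl (eAB a)) = 0
      have hval : (eAB a).1 = g a.1 := rfl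
      have hcond : G.vl a.1 = H.vl (eAB a).1 := by rw [hval, hlab a.1 a.2]
      simp only [LGedAux.cst, if_pos hcond]
    · rfl
  rw [Finset.sum_congr rfl (fun x _ => hz x)]
  simp

lemma main_ind (cv cvl ce cel : ℝ) (hcv : 0 ≤ cv) (hcvl : 0 ≤ cvl) (hce : 0 ≤ ce)
    (hcel : 0 ≤ cel) (H : LGraph Lv Le) :
    ∀ (ops : List (Op Lv Le)) (G H' : LGraph Lv Le),
      applyList ops G = some H' → Iso H' H →
      LLB cv cvl G H ≤ (ops.map (opCost cv cvl ce cel)).sum := by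
  intro ops
  induction ops with
  | nil =>
    intro G H' hap hiso
    obtain rfl : G = H' := Option.some.inj hap
    simpa using llb_of_iso hcv hcvl G H hiso
  | cons o os ih =>
    intro G H' hap hiso
    rw [applyList] at hap
    cases happ : LGraph.apply o G with
    | none => rw [happ] at hap; exact absurd hap (by simp)
    | some G1 =>
      rw [happ] at hap
      simp only [Option.bind_some] at hap
      have h1 := step cv cvl ce cel hcv hcvl hce hcel o G G1 H happ
      have h2 := ih G1 H' hap hiso
      simp only [List.map_cons, List.sum_cons]
      linarith

lemma applyList_append (l1 l2 : List (Op Lv Le)) (G : LGraph Lv Le) :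
    applyList (l1 ++ l2) G = (applyList l1 G).bind (applyList l2) := by
  induction l1 generalizing G with
  | nil => simp [applyList]
  | cons o t ih =>
    simp only [List.cons_append, applyList]
    cases LGraph.apply o G with
    | none => rfl
    | some G1 => simp [ih]

lemma delEdges : ∀ (l : List (Sym2 ℕ)) (G : LGraph Lv Le), l.Nodup →
    (∀ e ∈ l, e ∈ G.edges) →
    ∃ G', applyList (l.map Op.delE) G = some G' ∧ G'.verts = G.verts ∧
      G'.vl = G.vl ∧ G'.edges = G.edges \ l.toFinset := by
  intro l
  induction l with
  | nil => intro G _ _; exact ⟨G, rfl, rfl, rfl, by simp⟩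
  | cons e t ih =>
    intro G hnd hmem
    have he : e ∈ G.edges := hmem e (by simp)
    set G1 : LGraph Lv Le := ⟨G.verts, G.edges.erase e, G.vl, G.el⟩ with hG1
    have happ : LGraph.apply (Op.delE e) G = some G1 := by
      simp only [LGraph.apply, if_pos he]
      rfl
    obtain ⟨G', h1, h2, h3, h4⟩ := ih G1 (List.nodup_cons.mp hnd).2 (by
      intro e' he'
      refine Finset.mem_erase.mpr ⟨?_, hmem e' (List.mem_cons_of_mem _ he')⟩
      intro hco; exact (List.nodup_cons.mp hnd).1 (hco ▸ he'))
    refine ⟨G', ?_, h2, h3, ?_⟩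
    · simp only [List.map_cons, applyList, happ, Option.bind_some]; exact h1
    · rw [h4]; show G.edges.erase e \ t.toFinset = _
      ext a
      simp only [Finset.mem_sdiff, Finset.mem_erase, List.toFinset_cons,
        Finset.mem_insert, List.mem_toFinset, not_or]
      tauto

lemma delVerts : ∀ (l : List ℕ) (G : LGraph Lv Le), l.Nodup →
    (∀ v ∈ l, v ∈ G.verts) → G.edges = ∅ →
    ∃ G', applyList (l.map Op.delV) G = some G' ∧ G'.verts = G.verts \ l.toFinset ∧
      G'.edges = ∅ := by
  intro l
  induction l with
  | nil => intro G _ _ he; exact ⟨G, rfl, by simp, he⟩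
  | cons v t ih =>
    intro G hnd hmem he
    have hv : v ∈ G.verts := hmem v (by simp)
    set G1 : LGraph Lv Le := ⟨G.verts.erase v, G.edges, G.vl, G.el⟩ with hG1
    have happ : LGraph.apply (Op.delV v) G = some G1 := by
      simp only [LGraph.apply]
      rw [if_pos ⟨hv, by rw [he]; simp⟩]
    obtain ⟨G', h1, h2, h3⟩ := ih G1 (List.nodup_cons.mp hnd).2 (by
      intro v' hv'
      refine Finset.mem_erase.mpr ⟨?_, hmem v' (List.mem_cons_of_mem _ hv')⟩
      intro hco; exact (List.nodup_cons.mp hnd).1 (hco ▸ hv')) he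
    refine ⟨G', ?_, ?_, h3⟩
    · simp only [List.map_cons, applyList, happ, Option.bind_some]; exact h1
    · rw [h2]; show G.verts.erase v \ t.toFinset = _
      ext a
      simp only [Finset.mem_sdiff, Finset.mem_erase, List.toFinset_cons,
        Finset.mem_insert, List.mem_toFinset, not_or]
      tauto

lemma addVerts (lab : ℕ → Lv) : ∀ (l : List ℕ) (G : LGraph Lv Le), l.Nodup →
    (∀ v ∈ l, v ∉ G.verts) →
    ∃ G', applyList (l.map fun v => Op.addV v (lab v)) G = some G' ∧
      G'.verts = G.verts ∪ l.toFinset ∧ G'.edges = G.edges ∧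
      (∀ v ∈ l, G'.vl v = lab v) ∧ (∀ v, v ∉ l → G'.vl v = G.vl v) := by
  intro l
  induction l with
  | nil =>
    intro G _ _
    exact ⟨G, rfl, by simp, rfl, by simp, fun _ _ => rfl⟩
  | cons v t ih =>
    intro G hnd hmem
    have hv : v ∉ G.verts := hmem v (by simp)
    set G1 : LGraph Lv Le :=
      ⟨insert v G.verts, G.edges, Function.update G.vl v (lab v), G.el⟩ with hG1
    have happ : LGraph.apply (Op.addV v (lab v)) G = some G1 := by
      simp only [LGraph.apply, if_neg hv]
      rfl
    obtain ⟨G', h1, h2, h3, h4, h5⟩ := ih G1 (List.nodup_cons.mp hnd).2 (by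
      intro v' hv'
      show v' ∉ insert v G.verts
      simp only [Finset.mem_insert, not_or]
      exact ⟨fun hco => (List.nodup_cons.mp hnd).1 (hco ▸ hv'),
        hmem v' (List.mem_cons_of_mem _ hv')⟩)
    refine ⟨G', ?_, ?_, h3, ?_, ?_⟩
    · simp only [List.map_cons, applyList, happ, Option.bind_some]; exact h1
    · rw [h2]; show insert v G.verts ∪ t.toFinset = _
      ext a
      simp only [Finset.mem_union, Finset.mem_insert, List.toFinset_cons,
        List.mem_toFinset]
      tauto
    · intro v' hv'
      rcases List.mem_cons.mp hv' with rfl | hv't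
      · have hvt : v' ∉ t := (List.nodup_cons.mp hnd).1
        rw [h5 v' hvt]
        show Function.update G.vl v' (lab v') v' = lab v'
        rw [Function.update_self]
      · exact h4 v' hv't
    · intro v' hv'
      have h6 : v' ∉ t := fun hco => hv' (List.mem_cons_of_mem _ hco)
      have h7 : v' ≠ v := fun hco => hv' (hco ▸ (List.mem_cons_self : v ∈ v :: t))
      rw [h5 v' h6]
      show Function.update G.vl v (lab v) v' = G.vl v'
      rw [Function.update_of_ne h7]

lemma addEdges (elb : Sym2 ℕ → Le) : ∀ (l : List (Sym2 ℕ)) (G : LGraph Lv Le), l.Nodup →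
    (∀ e ∈ l, ¬e.IsDiag ∧ (∀ w ∈ e, w ∈ G.verts) ∧ e ∉ G.edges) →
    ∃ (ops : List (Op Lv Le)) (G' : LGraph Lv Le), applyList ops G = some G' ∧
      G'.verts = G.verts ∧ G'.vl = G.vl ∧ G'.edges = G.edges ∪ l.toFinset ∧
      (∀ e ∈ l, G'.el e = elb e) ∧ (∀ e, e ∉ l → G'.el e = G.el e) := by
  intro l
  induction l with
  | nil =>
    intro G _ _
    exact ⟨[], G, rfl, rfl, rfl, by simp, by simp, fun _ _ => rfl⟩
  | cons e t ih =>
    intro G hnd hmem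
    obtain ⟨hdiag, hends, hnotin⟩ := hmem e (by simp)
    obtain ⟨a, b, rfl⟩ : ∃ a b, e = s(a, b) :=
      Sym2.inductionOn e (fun a b => ⟨a, b, rfl⟩)
    have hab : a ≠ b := fun hco => hdiag (Sym2.mk_isDiag_iff.mpr hco)
    have ha : a ∈ G.verts := hends a (Sym2.mem_mk_left a b)
    have hb : b ∈ G.verts := hends b (Sym2.mem_mk_right a b)
    set G1 : LGraph Lv Le := ⟨G.verts, insert s(a, b) G.edges, G.vl,
      Function.update G.el s(a, b) (elb s(a, b))⟩ with hG1
    have happ : LGraph.apply (Op.addE a b (elb s(a, b))) G = some G1 := by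
      simp only [LGraph.apply]
      rw [if_pos ⟨ha, hb, hab, hnotin⟩]
    obtain ⟨ops', G', h1, h2, h3, h4, h5, h6⟩ := ih G1 (List.nodup_cons.mp hnd).2 (by
      intro e' he'
      obtain ⟨hd', hw', hn'⟩ := hmem e' (List.mem_cons_of_mem _ he')
      refine ⟨hd', hw', ?_⟩
      show e' ∉ insert s(a, b) G.edges
      simp only [Finset.mem_insert, not_or]
      exact ⟨fun hco => (List.nodup_cons.mp hnd).1 (hco ▸ he'), hn'⟩)
    refine ⟨Op.addE a b (elb s(a, b)) :: ops', G', ?_, h2, h3, ?_, ?_, ?_⟩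
    · simp only [applyList, happ, Option.bind_some]; exact h1
    · rw [h4]; show insert s(a, b) G.edges ∪ _ = _
      ext x
      simp only [Finset.mem_union, Finset.mem_insert, List.toFinset_cons,
        List.mem_toFinset]
      tauto
    · intro e' he'
      rcases List.mem_cons.mp he' with hcase | he't
      · have het : e' ∉ t := by rw [hcase]; exact (List.nodup_cons.mp hnd).1
        rw [h6 e' het, hcase]
        show Function.update G.el s(a, b) (elb s(a, b)) s(a, b) = elb s(a, b)
        rw [Function.update_self]
      · exact h5 e' he't
    · intro e' he'
      have h7 : e' ∉ t := fun hco => he' (List.mem_cons_of_mem _ hco)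
      have h8 : e' ≠ s(a, b) := fun hco => he' (hco ▸ (List.mem_cons_self : s(a, b) ∈ s(a, b) :: t))
      rw [h6 e' h7]
      show Function.update G.el s(a, b) (elb s(a, b)) e' = G.el e'
      rw [Function.update_of_ne h8]

lemma exists_path (G H : LGraph Lv Le) (hH : H.WF) :
    ∃ (ops : List (Op Lv Le)) (H' : LGraph Lv Le),
      applyList ops G = some H' ∧ Iso H' H := by
  obtain ⟨G1, h1, h1v, h1l, h1e⟩ := delEdges G.edges.toList G (Finset.nodup_toList _)
    (fun e he => Finset.mem_toList.mp he)
  have hG1e : G1.edges = ∅ := by rw [h1e]; ext a; simp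
  obtain ⟨G2, h2, h2v, h2e⟩ := delVerts G1.verts.toList G1 (Finset.nodup_toList _)
    (fun v hv => Finset.mem_toList.mp hv) hG1e
  have hG2v : G2.verts = ∅ := by rw [h2v]; ext a; simp
  obtain ⟨G3, h3, h3v, h3e, h3l1, h3l2⟩ := addVerts H.vl H.verts.toList G2
    (Finset.nodup_toList _) (fun v _ => by rw [hG2v]; simp)
  have hG3v : G3.verts = H.verts := by rw [h3v, hG2v]; ext a; simp
  have hG3e : G3.edges = ∅ := by rw [h3e, h2e]
  obtain ⟨ops4, G4, h4, h4v, h4l, h4e, h4el1, h4el2⟩ := addEdges H.el H.edges.toList G3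
    (Finset.nodup_toList _) (by
      intro e he'
      have he : e ∈ H.edges := Finset.mem_toList.mp he'
      exact ⟨hH.1 e he, fun w hw => by rw [hG3v]; exact hH.2 e he w hw,
        by rw [hG3e]; simp⟩)
  have hG4v : G4.verts = H.verts := by rw [h4v, hG3v]
  have hG4e : G4.edges = H.edges := by rw [h4e, hG3e]; ext a; simp
  refine ⟨G.edges.toList.map Op.delE ++ (G1.verts.toList.map Op.delV ++
    (H.verts.toList.map (fun v => Op.addV v (H.vl v)) ++ ops4)), G4, ?_, ?_⟩
  · rw [applyList_append, h1, Option.bind_some, applyList_append, h2,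
      Option.bind_some, applyList_append, h3, Option.bind_some]
    exact h4
  · refine ⟨id, ?_, ?_, ?_, ?_⟩
    · rw [hG4v]; exact Set.bijOn_id _
    · intro v hv
      have hv' : v ∈ H.verts := by rw [← hG4v]; exact hv
      rw [h4l]
      exact (h3l1 v (Finset.mem_toList.mpr hv')).symm
    · intro u _ v _
      rw [hG4e]
      exact Iff.rfl
    · intro u _ v _ he
      have he' : s(u, v) ∈ H.edges := by rw [← hG4e]; exact he
      exact (h4el1 s(u, v) (Finset.mem_toList.mpr he')).symm

end Glue2

open LGraph in
/-- For any two labeled graphs `G` and `H`, the label lower bound `LLB(G,H)` —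
the minimal cost of a bijection between the dummy-padded vertex sets under the ground cost
`c_llb` — is at most the graph edit distance `GED(G,H)`. -/
theorem llb_le_ged {Lv Le : Type} (cv cvl ce cel : ℝ)
    (hcv : 0 ≤ cv) (hcvl : 0 ≤ cvl) (hce : 0 ≤ ce) (hcel : 0 ≤ cel)
    (G H : LGraph Lv Le) (hG : G.WF) (hH : H.WF) :
    LLB cv cvl G H ≤ GED cv cvl ce cel G H := by
  obtain ⟨ops, H', hap, hiso⟩ := exists_path G H hH
  have hmem : ((ops.map (opCost cv cvl ce cel)).sum) ∈
      {r | ∃ (ops' : List (Op Lv Le)) (H'' : LGraph Lv Le),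
        applyList ops' G = some H'' ∧ Iso H'' H ∧
        r = (ops'.map (opCost cv cvl ce cel)).sum} := ⟨ops, H', hap, hiso, rfl⟩
  refine le_csInf ⟨_, hmem⟩ ?_
  rintro r ⟨ops', H'', hap', hiso', rfl⟩
  exact main_ind cv cvl ce cel hcv hcvl hce hcel H ops' G H'' hap' hiso'
end
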